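/- arXiv:1301.2567 — 10 statements merged into one kernel-verified Lean document; each statement's English description precedes it below -/
import Mathlib

section
/- Let A ∈ ℂ^{n×p}, B ∈ ℂ^{m×q}, C ∈ ℂ^{n×q}, Hermitian D ∈ ℂ^{n×n} and Hermitian M ∈ ℂ^{q×q} be given with A ≠ 0 and BMB* ≠ 0, and let φ(X) = (AXB + C)M(AXB + C)* + D for X ∈ ℂ^{p×m}. Then φ(X) ≻ 0 (positive definite) for all X ∈ ℂ^{p×m} if and only if D + CMC* ≻ 0, N3 ⪰ 0, and ℛ([A; 0]) ⊆ ℛ(N3), where [A; 0] is the (n+m)×p matrix obtained by stacking A on top of the m×p zero matrix. -/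
open Matrix
open scoped ComplexOrder



lemma aux_psd_zero {ι : Type*} [Fintype ι] [DecidableEq ι] {N : Matrix ι ι ℂ}
    (hN : N.PosSemidef) {x : ι → ℂ} (hx : star x ⬝ᵥ N *ᵥ x = 0) : N *ᵥ x = 0 := by
  exact (hN.dotProduct_mulVec_zero_iff x).mp hx

lemma aux_herm_real {ι : Type*} [Fintype ι] {N : Matrix ι ι ℂ}
    (hN : N.IsHermitian) (x : ι → ℂ) :
    star (star x ⬝ᵥ N *ᵥ x) = star x ⬝ᵥ N *ᵥ x := by
  conv_lhs => rw [← Matrix.star_dotProduct_star, star_star, star_mulVec, hN.eq,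
    ← Matrix.dotProduct_mulVec]


lemma aux_range_fromColumns {ι κ₁ κ₂ : Type*} [Fintype ι] [Fintype κ₁] [Fintype κ₂]
    (M₁ : Matrix ι κ₁ ℂ) (M₂ : Matrix ι κ₂ ℂ) :
    LinearMap.range (fromCols M₁ M₂).mulVecLin
      = LinearMap.range M₁.mulVecLin ⊔ LinearMap.range M₂.mulVecLin := by
  apply le_antisymm
  · rintro x ⟨v, rfl⟩
    rw [mulVecLin_apply, ← Sum.elim_comp_inl_inr v, fromCols_mulVec_sumElim]
    exact Submodule.add_mem_sup ⟨_, rfl⟩ ⟨_, rfl⟩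
  · rw [sup_le_iff]
    constructor
    · rintro x ⟨v, rfl⟩; exact ⟨Sum.elim v 0, by simp⟩
    · rintro x ⟨v, rfl⟩; exact ⟨Sum.elim 0 v, by simp⟩

lemma aux_mem_range_conjTranspose {ι ι' : Type*} [Fintype ι] [Fintype ι'] [DecidableEq ι]
    (K : Matrix ι' ι ℂ) (b : ι → ℂ)
    (h : ∀ w : ι → ℂ, K *ᵥ w = 0 → star b ⬝ᵥ w = 0) :
    b ∈ LinearMap.range Kᴴ.mulVecLin := by
  classical
  set L : Matrix (ι' ⊕ Unit) ι ℂ := fromRows K (Matrix.replicateRow Unit (star b)) with hL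
  have hker : LinearMap.ker L.mulVecLin = LinearMap.ker K.mulVecLin := by
    ext w
    simp only [LinearMap.mem_ker, mulVecLin_apply, hL, fromRows_mulVec]
    constructor
    · intro hw
      have := congrArg (fun f => f ∘ Sum.inl) hw
      simpa using this
    · intro hw
      have h2 : Matrix.replicateRow Unit (star b) *ᵥ w = 0 := by
        rw [Matrix.replicateRow_mulVec_eq_const]
        funext i
        simpa using h w hw
      rw [hw, h2]
      ext (i | i) <;> simp
  have hrank : L.rank = K.rank := by
    unfold Matrix.rank
    have h1 := LinearMap.finrank_range_add_finrank_ker L.mulVecLin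
    have h2 := LinearMap.finrank_range_add_finrank_ker K.mulVecLin
    rw [hker] at h1
    omega
  have hLH : Lᴴ = fromCols Kᴴ (Matrix.replicateCol Unit b) := by
    rw [hL, conjTranspose_fromRows_eq_fromCols_conjTranspose, Matrix.conjTranspose_replicateRow,
      star_star]
  have hle : LinearMap.range Kᴴ.mulVecLin ≤ LinearMap.range Lᴴ.mulVecLin := by
    rw [hLH, aux_range_fromColumns]
    exact le_sup_left
  have heq : LinearMap.range Kᴴ.mulVecLin = LinearMap.range Lᴴ.mulVecLin := by
    apply Submodule.eq_of_le_of_finrank_le hle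
    have : Lᴴ.rank = Kᴴ.rank := by
      rw [Matrix.rank_conjTranspose, Matrix.rank_conjTranspose, hrank]
    exact le_of_eq this
  rw [heq, hLH, aux_range_fromColumns]
  apply Submodule.mem_sup_right
  exact ⟨fun _ => 1, by ext i; simp [Matrix.mulVec, Matrix.replicateCol, dotProduct]⟩


lemma aux_exists_X {p m : ℕ} (a : Fin p → ℂ) (ha : a ≠ 0) (u : Fin m → ℂ) :
    ∃ X : Matrix (Fin p) (Fin m) ℂ, Xᴴ *ᵥ a = u := by
  set c : ℂ := star a ⬝ᵥ a with hc
  have hc0 : c ≠ 0 := fun h => ha (dotProduct_star_self_eq_zero.mp h)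
  have hcs : star c = c := by
    rw [hc, ← Matrix.star_dotProduct_star, star_star]
  refine ⟨c⁻¹ • vecMulVec a (star u), ?_⟩
  have h1 : (vecMulVec a (star u))ᴴ = vecMulVec u (star a) := by
    ext i j
    simp [vecMulVec_apply, mul_comm]
  rw [conjTranspose_smul, h1]
  ext j
  simp only [Matrix.mulVec, Matrix.smul_apply, dotProduct, vecMulVec_apply, smul_eq_mul]
  have : ∑ x : Fin p, star c⁻¹ * (u j * star a x) * a x
      = star c⁻¹ * u j * ∑ x, star a x * a x := by
    rw [Finset.mul_sum]; congr 1; ext x; ring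
  rw [this]
  have hsum : ∑ x, star a x * a x = c := by rw [hc]; rfl
  rw [hsum, star_inv₀, hcs]
  field_simp


lemma aux_phi_core {n q : ℕ} (W C : Matrix (Fin n) (Fin q) ℂ) (M : Matrix (Fin q) (Fin q) ℂ)
    (D : Matrix (Fin n) (Fin n) ℂ) (B : Matrix (Fin q) (Fin q) ℂ) : True := trivial

lemma aux_phi_eq {n m p q : ℕ}
    (A : Matrix (Fin n) (Fin p) ℂ) (B : Matrix (Fin m) (Fin q) ℂ)
    (C : Matrix (Fin n) (Fin q) ℂ) (D : Matrix (Fin n) (Fin n) ℂ)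
    (M : Matrix (Fin q) (Fin q) ℂ) (X : Matrix (Fin p) (Fin m) ℂ) :
    (A * X * B + C) * M * (A * X * B + C)ᴴ + D
      = fromCols (1 : Matrix (Fin n) (Fin n) ℂ) (A * X)
          * fromBlocks (D + C * M * Cᴴ) (C * M * Bᴴ) (B * M * Cᴴ) (B * M * Bᴴ)
          * (fromCols (1 : Matrix (Fin n) (Fin n) ℂ) (A * X))ᴴ := by
  rw [conjTranspose_fromCols_eq_fromRows_conjTranspose, conjTranspose_one,
    fromCols_mul_fromBlocks, fromCols_mul_fromRows]
  rw [conjTranspose_add, conjTranspose_mul]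
  generalize A * X = W
  simp only [Matrix.add_mul, Matrix.mul_add, Matrix.mul_assoc, Matrix.one_mul, Matrix.mul_one]
  abel

lemma aux_form {ι κ : Type*} [Fintype ι] [Fintype κ] (U : Matrix ι κ ℂ) (N : Matrix κ κ ℂ)
    (v : ι → ℂ) :
    star v ⬝ᵥ (U * N * Uᴴ) *ᵥ v = star (Uᴴ *ᵥ v) ⬝ᵥ N *ᵥ (Uᴴ *ᵥ v) := by
  rw [star_mulVec, conjTranspose_conjTranspose, ← mulVec_mulVec, ← mulVec_mulVec,
    Matrix.dotProduct_mulVec (star v) U]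

lemma aux_UHv {n m p : ℕ} (A : Matrix (Fin n) (Fin p) ℂ) (X : Matrix (Fin p) (Fin m) ℂ)
    (v : Fin n → ℂ) :
    (fromCols (1 : Matrix (Fin n) (Fin n) ℂ) (A * X))ᴴ *ᵥ v
      = Sum.elim v (Xᴴ *ᵥ (Aᴴ *ᵥ v)) := by
  rw [conjTranspose_fromCols_eq_fromRows_conjTranspose, conjTranspose_one, fromRows_mulVec,
    conjTranspose_mul, ← mulVec_mulVec, one_mulVec]


lemma aux_quad {a b c : ℝ} (ha : a < 0) :
    ∃ s1 s2 : ℝ, 0 < s1 ∧ 0 < s2 ∧ s1 ≠ s2 ∧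
      a + s1 * b + s1 ^ 2 * c < 0 ∧ a + s2 * b + s2 ^ 2 * c < 0 := by
  set k : ℝ := |b| + |c| + 1 with hk
  have hk0 : 0 < k := by positivity
  set t : ℝ := min 1 (-a / (2 * k)) with ht
  have hna : 0 < -a := neg_pos.mpr ha
  have ht0 : 0 < t := lt_min one_pos (div_pos hna (by positivity))
  have key : ∀ s : ℝ, 0 < s → s ≤ t → a + s * b + s ^ 2 * c < 0 := by
    intro s hs hst
    have hs1 : s ≤ 1 := hst.trans (min_le_left _ _)
    have hs2 : s ≤ -a / (2 * k) := hst.trans (min_le_right _ _)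
    have h4 : s * (2 * k) ≤ -a := by
      rw [← le_div_iff₀ (by positivity)]
      exact hs2
    have h1 : s * b ≤ s * |b| := mul_le_mul_of_nonneg_left (le_abs_self b) hs.le
    have h2 : s ^ 2 * c ≤ s ^ 2 * |c| := mul_le_mul_of_nonneg_left (le_abs_self c) (by positivity)
    have hss : s ^ 2 ≤ s := by nlinarith
    have h3 : s ^ 2 * |c| ≤ s * |c| := mul_le_mul_of_nonneg_right hss (abs_nonneg c)
    have h4' : s * |b| + s * |c| + s ≤ -a / 2 := by
      have he : 2 * (s * |b| + s * |c| + s) = s * (2 * k) := by rw [hk]; ring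
      linarith
    linarith
  exact ⟨t, t / 2, ht0, by positivity, by linarith, key t ht0 le_rfl,
    key (t / 2) (by positivity) (by linarith)⟩

lemma aux_expand {ι : Type*} [Fintype ι] (N : Matrix ι ι ℂ) (w w1 : ι → ℂ) (s : ℝ) :
    star (w + (s : ℂ) • w1) ⬝ᵥ N *ᵥ (w + (s : ℂ) • w1)
      = star w ⬝ᵥ N *ᵥ w + (s : ℂ) * (star w1 ⬝ᵥ N *ᵥ w + star w ⬝ᵥ N *ᵥ w1)
        + (s : ℂ) ^ 2 * (star w1 ⬝ᵥ N *ᵥ w1) := by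
  simp only [star_add, star_smul, mulVec_add, mulVec_smul, add_dotProduct, dotProduct_add,
    smul_dotProduct, dotProduct_smul, smul_eq_mul, Complex.star_def, Complex.conj_ofReal]
  ring


theorem stmt6 {n m p q : ℕ}
    (A : Matrix (Fin n) (Fin p) ℂ) (B : Matrix (Fin m) (Fin q) ℂ)
    (C : Matrix (Fin n) (Fin q) ℂ) (D : Matrix (Fin n) (Fin n) ℂ)
    (M : Matrix (Fin q) (Fin q) ℂ)
    (hD : D.IsHermitian) (hM : M.IsHermitian)
    (hA : A ≠ 0) (hBMB : B * M * Bᴴ ≠ 0) :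
    (∀ X : Matrix (Fin p) (Fin m) ℂ,
        ((A * X * B + C) * M * (A * X * B + C)ᴴ + D).PosDef) ↔
      (D + C * M * Cᴴ).PosDef ∧
      (fromBlocks (D + C * M * Cᴴ) (C * M * Bᴴ) (B * M * Cᴴ) (B * M * Bᴴ)).PosSemidef ∧
      LinearMap.range (fromRows A (0 : Matrix (Fin m) (Fin p) ℂ)).mulVecLin ≤
        LinearMap.range
          (fromBlocks (D + C * M * Cᴴ) (C * M * Bᴴ) (B * M * Cᴴ) (B * M * Bᴴ)).mulVecLin := by
  set N : Matrix (Fin n ⊕ Fin m) (Fin n ⊕ Fin m) ℂ :=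
    fromBlocks (D + C * M * Cᴴ) (C * M * Bᴴ) (B * M * Cᴴ) (B * M * Bᴴ) with hN
  have hNherm : N.IsHermitian := by
    have e1 : (D + C * M * Cᴴ)ᴴ = D + C * M * Cᴴ := by
      simp [conjTranspose_add, conjTranspose_mul, hD.eq, hM.eq, Matrix.mul_assoc]
    have e2 : (B * M * Cᴴ)ᴴ = C * M * Bᴴ := by
      simp [conjTranspose_mul, hM.eq, Matrix.mul_assoc]
    have e3 : (C * M * Bᴴ)ᴴ = B * M * Cᴴ := by
      simp [conjTranspose_mul, hM.eq, Matrix.mul_assoc]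
    have e4 : (B * M * Bᴴ)ᴴ = B * M * Bᴴ := by
      simp [conjTranspose_mul, hM.eq, Matrix.mul_assoc]
    show Nᴴ = N
    rw [hN, fromBlocks_conjTranspose, e1, e2, e3, e4]
  -- quadratic form identity
  have hform : ∀ (X : Matrix (Fin p) (Fin m) ℂ) (v : Fin n → ℂ),
      star v ⬝ᵥ ((A * X * B + C) * M * (A * X * B + C)ᴴ + D) *ᵥ v
        = star (Sum.elim v (Xᴴ *ᵥ (Aᴴ *ᵥ v))) ⬝ᵥ N *ᵥ (Sum.elim v (Xᴴ *ᵥ (Aᴴ *ᵥ v))) := by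
    intro X v
    rw [aux_phi_eq A B C D M X, ← hN, aux_form, aux_UHv]
  constructor
  · intro h
    -- (a) positive definiteness of D + C M Cᴴ
    have hP : (D + C * M * Cᴴ).PosDef := by
      have h0 := h 0
      simp only [Matrix.mul_zero, Matrix.zero_mul, zero_add] at h0
      rwa [add_comm] at h0
    -- pick v0 with Aᴴ *ᵥ v0 ≠ 0
    obtain ⟨i0, j0, hij⟩ : ∃ i j, A i j ≠ 0 := by
      by_contra h'
      push_neg at h'
      exact hA (Matrix.ext fun i j => h' i j)
    set v0 : Fin n → ℂ := Pi.single i0 1 with hv0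
    have ha0 : Aᴴ *ᵥ v0 ≠ 0 := by
      intro hz
      have := congrFun hz j0
      simp [hv0, Matrix.mulVec_single, Matrix.conjTranspose_apply] at this
      exact hij this
    -- key: every vector in ker-direction forces A-component
    have hAv : ∀ w : Fin n ⊕ Fin m → ℂ, N *ᵥ w = 0 → Aᴴ *ᵥ (w ∘ Sum.inl) = 0 := by
      intro w hw
      set v : Fin n → ℂ := w ∘ Sum.inl with hv
      set u : Fin m → ℂ := w ∘ Sum.inr with hu
      have hwel : w = Sum.elim v u := funext fun i => by cases i <;> rfl
      by_contra hAv0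
      obtain ⟨X, hX⟩ := aux_exists_X (Aᴴ *ᵥ v) hAv0 u
      have hvne : v ≠ 0 := by
        intro hz
        rw [hz, mulVec_zero] at hAv0
        exact hAv0 rfl
      have hq := (h X).dotProduct_mulVec_pos hvne
      rw [hform X v, hX, ← hwel, hw, dotProduct_zero] at hq
      exact lt_irrefl _ hq
    refine ⟨hP, posSemidef_iff_dotProduct_mulVec.mpr ⟨hNherm, ?_⟩, ?_⟩
    · -- positive semidefiniteness of N
      intro w
      by_contra hneg
      set α : ℂ := star w ⬝ᵥ N *ᵥ w with hα
      have him : α.im = 0 := Complex.conj_eq_iff_im.mp (aux_herm_real hNherm w)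
      have hαre : α.re < 0 := by
        by_contra hre
        push_neg at hre
        exact hneg (Complex.le_def.mpr ⟨by simpa using hre, by simp [him]⟩)
      set v : Fin n → ℂ := w ∘ Sum.inl with hv
      set u : Fin m → ℂ := w ∘ Sum.inr with hu
      have hwel : w = Sum.elim v u := funext fun i => by cases i <;> rfl
      set w1 : Fin n ⊕ Fin m → ℂ := Sum.elim v0 0 with hw1
      set β : ℂ := star w1 ⬝ᵥ N *ᵥ w + star w ⬝ᵥ N *ᵥ w1 with hβ
      set γ : ℂ := star w1 ⬝ᵥ N *ᵥ w1 with hγ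
      obtain ⟨s1, s2, hs1, hs2, hs12, hneg1, hneg2⟩ := aux_quad (b := β.re) (c := γ.re) hαre
      -- choose s with Aᴴ (v + s v0) ≠ 0
      have hchoice : ∃ s : ℝ, (0 < s) ∧ (α.re + s * β.re + s ^ 2 * γ.re < 0) ∧
          Aᴴ *ᵥ (v + (s : ℂ) • v0) ≠ 0 := by
        by_cases hc : Aᴴ *ᵥ (v + (s1 : ℂ) • v0) ≠ 0
        · exact ⟨s1, hs1, hneg1, hc⟩
        · push_neg at hc
          refine ⟨s2, hs2, hneg2, fun hc2 => ?_⟩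
          have hsub := sub_eq_zero.mpr (hc.trans hc2.symm)
          rw [mulVec_add, mulVec_add, mulVec_smul, mulVec_smul] at hsub
          have : ((s1 : ℂ) - (s2 : ℂ)) • (Aᴴ *ᵥ v0) = 0 := by
            rw [sub_smul]
            linear_combination (norm := module) hsub
          have hs12' : (s1 : ℂ) - (s2 : ℂ) ≠ 0 := by
            simpa [sub_eq_zero] using fun hh => hs12 (Complex.ofReal_injective hh)
          exact ha0 (by simpa [smul_eq_zero, hs12'] using this)
      obtain ⟨s, hs, hFs, hAvs⟩ := hchoice
      set v' : Fin n → ℂ := v + (s : ℂ) • v0 with hv'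
      have hv'ne : v' ≠ 0 := fun hz => hAvs (by rw [hz, mulVec_zero])
      obtain ⟨X, hX⟩ := aux_exists_X (Aᴴ *ᵥ v') hAvs u
      have helim : Sum.elim v' u = w + (s : ℂ) • w1 := by
        funext i
        cases i <;> simp [hv', hwel, hw1]
      have hq := (h X).dotProduct_mulVec_pos hv'ne
      rw [hform X v', hX, helim, aux_expand] at hq
      have := (Complex.lt_def.mp hq).1
      simp only [← Complex.ofReal_pow, Complex.add_re, Complex.mul_re, Complex.zero_re,
        Complex.ofReal_re, Complex.ofReal_im, zero_mul, sub_zero] at this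
      rw [hα, hβ, hγ] at hFs
      simp only [Complex.add_re] at hFs
      linarith only [this, hFs]
    · -- range inclusion
      rintro b ⟨z, rfl⟩
      have hmem := aux_mem_range_conjTranspose N ((fromRows A 0).mulVecLin z) ?_
      · rwa [hNherm.eq] at hmem
      · intro w hw
        have hAw := hAv w hw
        have hwel : w = Sum.elim (w ∘ Sum.inl) (w ∘ Sum.inr) := funext fun i => by cases i <;> rfl
        rw [mulVecLin_apply, star_mulVec, ← Matrix.dotProduct_mulVec,
          conjTranspose_fromRows_eq_fromCols_conjTranspose]
        rw [hwel, fromCols_mulVec_sumElim]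
        rw [show (0 : Matrix (Fin m) (Fin p) ℂ)ᴴ = 0 by simp, hAw]
        simp
  · rintro ⟨hP, hNpsd, hrange⟩
    intro X
    have hpsd : ((A * X * B + C) * M * (A * X * B + C)ᴴ + D).PosSemidef := by
      rw [aux_phi_eq A B C D M X, ← hN]
      exact hNpsd.mul_mul_conjTranspose_same _
    refine posDef_iff_dotProduct_mulVec.mpr ⟨hpsd.1, fun x hx => ?_⟩
    rcases lt_or_eq_of_le (hpsd.dotProduct_mulVec_nonneg x) with hlt | heq
    · exact hlt
    · exfalso
      -- quadratic form is zero: derive contradiction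
      set wv : Fin n ⊕ Fin m → ℂ := Sum.elim x (Xᴴ *ᵥ (Aᴴ *ᵥ x)) with hwv
      have hzero : star wv ⬝ᵥ N *ᵥ wv = 0 := by
        rw [hwv, ← hform X x, ← heq]
      have hker : N *ᵥ wv = 0 := aux_psd_zero hNpsd hzero
      -- orthogonality to range of fromRows A 0
      have hperp : ∀ z : Fin p → ℂ, star wv ⬝ᵥ ((fromRows A 0) *ᵥ z) = 0 := by
        intro z
        obtain ⟨y, hy⟩ := hrange ⟨z, mulVecLin_apply _ _⟩
        rw [mulVecLin_apply] at hy
        rw [← hy, Matrix.dotProduct_mulVec]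
        have : star wv ᵥ* N = 0 := by
          have := congrArg star hker
          rwa [star_mulVec, hNpsd.1.eq, star_zero] at this
        rw [this, zero_dotProduct]
      have hvecmul : star wv ᵥ* fromRows A (0 : Matrix (Fin m) (Fin p) ℂ) = 0 := by
        funext j
        have := hperp (Pi.single j 1)
        rwa [Matrix.dotProduct_mulVec, dotProduct_single, mul_one] at this
      have hstarwv : star wv = Sum.elim (star x) (star (Xᴴ *ᵥ (Aᴴ *ᵥ x))) :=
        funext fun i => by cases i <;> rfl
      rw [hstarwv, sumElim_vecMul_fromRows, Matrix.vecMul_zero, add_zero] at hvecmul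
      have hAx : Aᴴ *ᵥ x = 0 := by
        rw [Matrix.mulVec_conjTranspose, hvecmul, star_zero]
      -- now N *ᵥ (x, 0) = 0 forces (D + CMCᴴ) x = 0
      have hwv0 : wv = Sum.elim x 0 := by
        rw [hwv, hAx, mulVec_zero]
      rw [hwv0, hN, fromBlocks_mulVec] at hker
      have hfirst : (D + C * M * Cᴴ) *ᵥ x = 0 := by
        funext i
        have h5 := congrFun hker (Sum.inl i)
        simpa using h5
      have := hP.dotProduct_mulVec_pos hx
      rw [hfirst, dotProduct_zero] at this
      exact lt_irrefl _ this
end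

section
/- Let A ∈ ℂ^{n×p}, B ∈ ℂ^{m×q}, C ∈ ℂ^{n×q}, Hermitian D ∈ ℂ^{n×n} and Hermitian M ∈ ℂ^{q×q} be given with A ≠ 0 and BMB* ≠ 0, and let φ(X) = (AXB + C)M(AXB + C)* + D for X ∈ ℂ^{p×m}. Then φ(X) ⪰ 0 for all X ∈ ℂ^{p×m} if and only if N3 ⪰ 0; dually, φ(X) ⪯ 0 for all X ∈ ℂ^{p×m} if and only if N3 ⪯ 0. -/
open Matrix
open scoped ComplexOrder

section Stmt8Aux

private lemma sand {k l r : ℕ} (G : Matrix (Fin k) (Fin r) ℂ) (H : Matrix (Fin l) (Fin r) ℂ)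
    (M : Matrix (Fin r) (Fin r) ℂ) (u : Fin k → ℂ) (v : Fin l → ℂ) :
    star (Gᴴ *ᵥ u) ⬝ᵥ (M *ᵥ (Hᴴ *ᵥ v)) = star u ⬝ᵥ ((G * M * Hᴴ) *ᵥ v) := by
  simp [star_mulVec, dotProduct_mulVec, vecMul_vecMul, Matrix.mul_assoc]

private noncomputable def qf {n m q : ℕ} (B : Matrix (Fin m) (Fin q) ℂ) (C : Matrix (Fin n) (Fin q) ℂ)
    (D : Matrix (Fin n) (Fin n) ℂ) (M : Matrix (Fin q) (Fin q) ℂ)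
    (u : Fin n → ℂ) (v : Fin m → ℂ) : ℂ :=
  star u ⬝ᵥ (D *ᵥ u) + star (Cᴴ *ᵥ u + Bᴴ *ᵥ v) ⬝ᵥ (M *ᵥ (Cᴴ *ᵥ u + Bᴴ *ᵥ v))

private lemma phi_form {n m p q : ℕ} (A : Matrix (Fin n) (Fin p) ℂ) (B : Matrix (Fin m) (Fin q) ℂ)
    (C : Matrix (Fin n) (Fin q) ℂ) (D : Matrix (Fin n) (Fin n) ℂ) (M : Matrix (Fin q) (Fin q) ℂ)
    (X : Matrix (Fin p) (Fin m) ℂ) (u : Fin n → ℂ) :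
    star u ⬝ᵥ (((A * X * B + C) * M * (A * X * B + C)ᴴ + D) *ᵥ u)
      = qf B C D M u (Xᴴ *ᵥ (Aᴴ *ᵥ u)) := by
  have h : (A * X * B + C)ᴴ *ᵥ u = Cᴴ *ᵥ u + Bᴴ *ᵥ (Xᴴ *ᵥ (Aᴴ *ᵥ u)) := by
    simp [conjTranspose_add, conjTranspose_mul, add_mulVec, mulVec_mulVec,
      Matrix.mul_assoc, add_comm]
  have hform : star u ⬝ᵥ (((A * X * B + C) * M * (A * X * B + C)ᴴ) *ᵥ u)
      = star ((A * X * B + C)ᴴ *ᵥ u) ⬝ᵥ (M *ᵥ ((A * X * B + C)ᴴ *ᵥ u)) :=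
    (sand (A * X * B + C) (A * X * B + C) M u u).symm
  rw [add_mulVec, dotProduct_add, hform, h, qf]
  ring

private lemma block_form {n m q : ℕ} (B : Matrix (Fin m) (Fin q) ℂ) (C : Matrix (Fin n) (Fin q) ℂ)
    (D : Matrix (Fin n) (Fin n) ℂ) (M : Matrix (Fin q) (Fin q) ℂ)
    (u : Fin n → ℂ) (v : Fin m → ℂ) :
    star (Sum.elim u v) ⬝ᵥ
        ((fromBlocks (D + C * M * Cᴴ) (C * M * Bᴴ) (B * M * Cᴴ) (B * M * Bᴴ)) *ᵥ (Sum.elim u v))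
      = qf B C D M u v := by
  have hstar : star (Sum.elim u v) = Sum.elim (star u) (star v) := by
    funext i; cases i <;> rfl
  rw [fromBlocks_mulVec, hstar, Sum.elim_comp_inl, Sum.elim_comp_inr,
    sumElim_dotProduct_sumElim, qf]
  simp only [dotProduct_add, add_mulVec, star_add, mulVec_add, add_dotProduct, sand]
  ring

private lemma qf_par {n m q : ℕ} (B : Matrix (Fin m) (Fin q) ℂ) (C : Matrix (Fin n) (Fin q) ℂ)
    (D : Matrix (Fin n) (Fin n) ℂ) (M : Matrix (Fin q) (Fin q) ℂ)
    (u w : Fin n → ℂ) (v : Fin m → ℂ) (t : ℝ) :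
    qf B C D M (u + (t : ℂ) • w) v + qf B C D M (u - (t : ℂ) • w) v
      = 2 * qf B C D M u v + 2 * (t : ℂ) ^ 2 * qf B C D M w 0 := by
  simp only [qf, mulVec_add, mulVec_sub, mulVec_smul, mulVec_zero, add_zero,
    star_add, star_sub, star_smul, dotProduct_add, add_dotProduct, dotProduct_sub,
    sub_dotProduct, dotProduct_smul, smul_dotProduct, smul_eq_mul,
    Complex.star_def, Complex.conj_ofReal, smul_add, smul_sub]
  ring

private lemma exists_X {p m : ℕ} (w : Fin p → ℂ) (hw : w ≠ 0) (v : Fin m → ℂ) :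
    ∃ X : Matrix (Fin p) (Fin m) ℂ, Xᴴ *ᵥ w = v := by
  set c : ℂ := star w ⬝ᵥ w with hc
  have hc0 : c ≠ 0 := fun h => hw (dotProduct_star_self_eq_zero.mp h)
  refine ⟨Matrix.of fun j i => w j * star (v i) * (star c)⁻¹, ?_⟩
  funext i
  show ∑ j, star ((fun j i => w j * star (v i) * (star c)⁻¹) j i) * w j = v i
  have h1 : ∀ j, star (w j * star (v i) * (star c)⁻¹) * w j
      = (v i * c⁻¹) * (star (w j) * w j) := by
    intro j
    simp only [star_mul', star_star, star_inv₀]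
    ring
  rw [Finset.sum_congr rfl fun j _ => h1 j, ← Finset.mul_sum]
  have h2 : ∑ j, star (w j) * w j = c := rfl
  rw [h2, mul_assoc, inv_mul_cancel₀ hc0, mul_one]

private lemma real_scalar {α γ : ℝ} (hγ : 0 ≤ γ) (h : ∀ t : ℝ, 0 < t → 0 ≤ α + t * γ) :
    0 ≤ α := by
  by_contra hα
  push_neg at hα
  have ht : (0 : ℝ) < -α / (2 * (γ + 1)) := div_pos (by linarith) (by linarith)
  have h1 := h _ ht
  have h2 : -α / (2 * (γ + 1)) * (2 * (γ + 1)) = -α := by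
    field_simp
  nlinarith [h1, h2, ht, hγ, hα]

private theorem pos_part {n m p q : ℕ}
    (A : Matrix (Fin n) (Fin p) ℂ) (B : Matrix (Fin m) (Fin q) ℂ)
    (C : Matrix (Fin n) (Fin q) ℂ) (D : Matrix (Fin n) (Fin n) ℂ)
    (M : Matrix (Fin q) (Fin q) ℂ)
    (hD : D.IsHermitian) (hM : M.IsHermitian) (hA : A ≠ 0) :
    (∀ X : Matrix (Fin p) (Fin m) ℂ,
        ((A * X * B + C) * M * (A * X * B + C)ᴴ + D).PosSemidef) ↔
      (fromBlocks (D + C * M * Cᴴ) (C * M * Bᴴ) (B * M * Cᴴ) (B * M * Bᴴ)).PosSemidef := by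
  have e1 : (D + C * M * Cᴴ)ᴴ = D + C * M * Cᴴ := by
    simp [conjTranspose_add, conjTranspose_mul, hD.eq, hM.eq, Matrix.mul_assoc]
  have e2 : (B * M * Cᴴ)ᴴ = C * M * Bᴴ := by
    simp [conjTranspose_mul, hM.eq, Matrix.mul_assoc]
  have e3 : (C * M * Bᴴ)ᴴ = B * M * Cᴴ := by
    simp [conjTranspose_mul, hM.eq, Matrix.mul_assoc]
  have e4 : (B * M * Bᴴ)ᴴ = B * M * Bᴴ := by
    simp [conjTranspose_mul, hM.eq, Matrix.mul_assoc]
  have hNherm : (fromBlocks (D + C * M * Cᴴ) (C * M * Bᴴ) (B * M * Cᴴ) (B * M * Bᴴ)).IsHermitian := by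
    show _ᴴ = _
    rw [fromBlocks_conjTranspose, e1, e2, e3, e4]
  constructor
  · intro hφ
    have key : ∀ (u : Fin n → ℂ) (v : Fin m → ℂ), Aᴴ *ᵥ u ≠ 0 → 0 ≤ qf B C D M u v := by
      intro u v hu
      obtain ⟨X, hX⟩ := exists_X (Aᴴ *ᵥ u) hu v
      have h := (hφ X).dotProduct_mulVec_nonneg u
      rwa [phi_form, hX] at h
    obtain ⟨i, j, hij⟩ : ∃ i j, A i j ≠ 0 := by
      by_contra h
      push_neg at h
      exact hA (Matrix.ext fun i j => h i j)
    have hwA : Aᴴ *ᵥ (Pi.single i 1 : Fin n → ℂ) ≠ 0 := by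
      intro h0
      have h1 := congrFun h0 j
      simp [mulVec, dotProduct_single, conjTranspose_apply] at h1
      exact hij h1
    set w : Fin n → ℂ := Pi.single i 1 with hwdef
    have main : ∀ u v, 0 ≤ qf B C D M u v := by
      intro u v
      by_cases hu : Aᴴ *ᵥ u = 0
      · have hγ : 0 ≤ qf B C D M w 0 := key w 0 hwA
        have hq : ∀ t : ℝ, 0 < t →
            0 ≤ 2 * qf B C D M u v + 2 * (t : ℂ) ^ 2 * qf B C D M w 0 := by
          intro t ht
          have htC : (t : ℂ) ≠ 0 := Complex.ofReal_ne_zero.mpr ht.ne'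
          have h1 : Aᴴ *ᵥ (u + (t : ℂ) • w) ≠ 0 := by
            rw [mulVec_add, mulVec_smul, hu, zero_add]
            exact smul_ne_zero htC hwA
          have h2 : Aᴴ *ᵥ (u - (t : ℂ) • w) ≠ 0 := by
            rw [mulVec_sub, mulVec_smul, hu, zero_sub, neg_ne_zero]
            exact smul_ne_zero htC hwA
          have k1 := key _ v h1
          have k2 := key _ v h2
          have hpar := qf_par B C D M u w v t
          calc (0 : ℂ) ≤ qf B C D M (u + (t : ℂ) • w) v + qf B C D M (u - (t : ℂ) • w) v :=
                add_nonneg k1 k2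
            _ = _ := hpar
        set a := qf B C D M u v with ha
        set g := qf B C D M w 0 with hg
        obtain ⟨hgre, hgim⟩ := Complex.nonneg_iff.mp hγ
        rw [Complex.nonneg_iff]
        constructor
        · have hre : ∀ t : ℝ, 0 < t → 0 ≤ 2 * a.re + t * (2 * g.re) := by
            intro t ht
            have hs : (0 : ℝ) < Real.sqrt t := Real.sqrt_pos.mpr ht
            have h3 := (Complex.nonneg_iff.mp (hq (Real.sqrt t) hs)).1
            have h4 : ((Real.sqrt t : ℂ)) ^ 2 = ((t : ℝ) : ℂ) := by
              rw [← Complex.ofReal_pow, Real.sq_sqrt ht.le]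
            rw [h4] at h3
            have h5 : (2 * a + 2 * ((t : ℝ) : ℂ) * g).re = 2 * a.re + t * (2 * g.re) := by
              simp [Complex.add_re, Complex.mul_re, Complex.ofReal_re, Complex.ofReal_im]
              ring
            rw [h5] at h3
            exact h3
          have := real_scalar (by linarith : (0:ℝ) ≤ 2 * g.re) hre
          linarith
        · have h3 := (Complex.nonneg_iff.mp (hq 1 one_pos)).2
          have h5 : (2 * a + 2 * ((1 : ℝ) : ℂ) ^ 2 * g).im = 2 * a.im + 2 * g.im := by
            simp [Complex.add_im, Complex.mul_im]
          rw [h5] at h3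
          have : a.im = 0 := by
            have := h3
            nlinarith [hgim]
          linarith [this]
      · exact key u v hu
    refine posSemidef_iff_dotProduct_mulVec.mpr ⟨hNherm, fun x => ?_⟩
    have hx : Sum.elim (x ∘ Sum.inl) (x ∘ Sum.inr) = x := Sum.elim_comp_inl_inr x
    have h := main (x ∘ Sum.inl) (x ∘ Sum.inr)
    rw [← block_form] at h
    rwa [hx] at h
  · intro hN X
    refine posSemidef_iff_dotProduct_mulVec.mpr ⟨(isHermitian_mul_mul_conjTranspose _ hM).add hD, fun u => ?_⟩
    rw [phi_form]
    have h := hN.dotProduct_mulVec_nonneg (Sum.elim u (Xᴴ *ᵥ (Aᴴ *ᵥ u)))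
    rwa [block_form] at h

end Stmt8Aux

theorem stmt8 {n m p q : ℕ}
    (A : Matrix (Fin n) (Fin p) ℂ) (B : Matrix (Fin m) (Fin q) ℂ)
    (C : Matrix (Fin n) (Fin q) ℂ) (D : Matrix (Fin n) (Fin n) ℂ)
    (M : Matrix (Fin q) (Fin q) ℂ)
    (hD : D.IsHermitian) (hM : M.IsHermitian)
    (hA : A ≠ 0) (hBMB : B * M * Bᴴ ≠ 0) :
    ((∀ X : Matrix (Fin p) (Fin m) ℂ,
        ((A * X * B + C) * M * (A * X * B + C)ᴴ + D).PosSemidef) ↔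
      (fromBlocks (D + C * M * Cᴴ) (C * M * Bᴴ) (B * M * Cᴴ) (B * M * Bᴴ)).PosSemidef) ∧
    ((∀ X : Matrix (Fin p) (Fin m) ℂ,
        (-((A * X * B + C) * M * (A * X * B + C)ᴴ + D)).PosSemidef) ↔
      (-(fromBlocks (D + C * M * Cᴴ) (C * M * Bᴴ) (B * M * Cᴴ) (B * M * Bᴴ))).PosSemidef) := by
  constructor
  · exact pos_part A B C D M hD hM hA
  · have h := pos_part A B C (-D) (-M) hD.neg hM.neg hA
    have e1 : ∀ X : Matrix (Fin p) (Fin m) ℂ,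
        (A * X * B + C) * (-M) * (A * X * B + C)ᴴ + (-D)
          = -((A * X * B + C) * M * (A * X * B + C)ᴴ + D) := by
      intro X
      simp [Matrix.mul_neg, Matrix.neg_mul, neg_add, add_comm]
    have e2 : fromBlocks (-D + C * (-M) * Cᴴ) (C * (-M) * Bᴴ) (B * (-M) * Cᴴ) (B * (-M) * Bᴴ)
        = -(fromBlocks (D + C * M * Cᴴ) (C * M * Bᴴ) (B * M * Cᴴ) (B * M * Bᴴ)) := by
      rw [Matrix.fromBlocks_neg]
      simp [Matrix.mul_neg, Matrix.neg_mul, neg_add, add_comm]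
    simp only [e1, e2] at h
    exact h
end

section
/- Let A ∈ ℂ^{n×p}, B ∈ ℂ^{m×q}, C ∈ ℂ^{n×q}, Hermitian D ∈ ℂ^{n×n} and Hermitian M ∈ ℂ^{q×q} be given with A ≠ 0, and let φ(X) = (AXB + C)M(AXB + C)* + D for X ∈ ℂ^{p×m}. Then there exists an X̂ ∈ ℂ^{p×m} such that φ(X) ⪰ φ(X̂) for all X ∈ ℂ^{p×m} (a global minimizer in the Löwner partial ordering) if and only if BMB* ⪰ 0, ℛ(CMB*) ⊆ ℛ(A), and ℛ(BMC*) ⊆ ℛ(BMB*). -/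
open Matrix
open scoped ComplexOrder



-- generalized inverse
theorem stmt10_exists_ginv {a b : ℕ} (R : Matrix (Fin a) (Fin b) ℂ) :
    ∃ S : Matrix (Fin b) (Fin a) ℂ, R * S * R = R := by
  set f := R.mulVecLin with hf
  obtain ⟨g, hg⟩ := f.rangeRestrict.exists_rightInverse_of_surjective
    (LinearMap.range_eq_top.2 f.surjective_rangeRestrict)
  obtain ⟨c, hc⟩ := (LinearMap.range f).exists_isCompl
  set π := (LinearMap.range f).linearProjOfIsCompl c hc with hπ
  set k : (Fin a → ℂ) →ₗ[ℂ] (Fin b → ℂ) := g.comp π with hk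
  refine ⟨LinearMap.toMatrix' k, ?_⟩
  have key : f.comp (k.comp f) = f := by
    refine LinearMap.ext fun x => ?_
    have h1 : π (f x) = ⟨f x, LinearMap.mem_range_self f x⟩ :=
      Submodule.linearProjOfIsCompl_apply_left hc ⟨f x, LinearMap.mem_range_self f x⟩
    have h2 := congrFun (congrArg DFunLike.coe hg) (⟨f x, LinearMap.mem_range_self f x⟩ : LinearMap.range f)
    simp only [LinearMap.coe_comp, Function.comp_apply, hk, h1]
    have := congrArg Subtype.val h2
    simpa using this
  have h3 : R * LinearMap.toMatrix' k * R = LinearMap.toMatrix' (f.comp (k.comp f)) := by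
    rw [LinearMap.toMatrix'_comp, LinearMap.toMatrix'_comp]
    have hR : LinearMap.toMatrix' f = R := by
      rw [hf, ← Matrix.toLin'_apply' , LinearMap.toMatrix'_toLin']
    rw [hR, Matrix.mul_assoc]
  rw [h3, key, hf, ← Matrix.toLin'_apply', LinearMap.toMatrix'_toLin']


theorem stmt10_exists_factor {a b c : ℕ} (A : Matrix (Fin a) (Fin b) ℂ) (G : Matrix (Fin a) (Fin c) ℂ)
    (h : LinearMap.range G.mulVecLin ≤ LinearMap.range A.mulVecLin) :
    ∃ V : Matrix (Fin b) (Fin c) ℂ, A * V = G := by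
  have hmem : ∀ j : Fin c, ∃ v, A.mulVecLin v = G.mulVecLin (Pi.single j 1) :=
    fun j => h (LinearMap.mem_range_self G.mulVecLin (Pi.single j 1))
  choose v hv using hmem
  refine ⟨Matrix.of fun i j => v j i, ?_⟩
  ext i j
  have := congrFun (hv j) i
  simp only [Matrix.mulVecLin_apply, Matrix.mulVec_single, mul_one] at this
  rw [Matrix.mul_apply]
  simpa [Matrix.mulVec, dotProduct] using this

theorem stmt10_range_mul_le {a b c : ℕ} (A : Matrix (Fin a) (Fin b) ℂ) (V : Matrix (Fin b) (Fin c) ℂ) :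
    LinearMap.range (A * V).mulVecLin ≤ LinearMap.range A.mulVecLin := by
  rw [Matrix.mulVecLin_mul]
  exact LinearMap.range_comp_le_range _ _


theorem stmt10_quad_zero {a : ℕ} (L : Matrix (Fin a) (Fin a) ℂ)
    (h : ∀ v : Fin a → ℂ, star v ⬝ᵥ L *ᵥ v = 0) : L = 0 := by
  have key : ∀ (x y : ℂ) (j k : Fin a),
      star (Pi.single j x + Pi.single k y) ⬝ᵥ L *ᵥ (Pi.single j x + Pi.single k y)
        = star x * (L j j * x) + star x * (L j k * y) + star y * (L k j * x) + star y * (L k k * y) := by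
    intro x y j k
    simp only [star_add, ← Pi.single_star, Matrix.mulVec_add, Matrix.mulVec_single,
      dotProduct_add, add_dotProduct]
    have sd : ∀ (z : ℂ) (i : Fin a) (w : Fin a → ℂ), Pi.single i z ⬝ᵥ w = z * w i :=
      fun z i w => single_dotProduct (v := w) z i
    simp only [sd, Pi.smul_apply, MulOpposite.smul_eq_mul_unop, MulOpposite.unop_op, Matrix.col_apply]
    ring
  have hd : ∀ i : Fin a, L i i = 0 := by
    intro i
    have := h (Pi.single i 1)
    simp only [← Pi.single_star, star_one, Matrix.mulVec_single, single_dotProduct,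
      one_mul, mul_one, Pi.smul_apply, MulOpposite.smul_eq_mul_unop, MulOpposite.unop_op, Matrix.col_apply] at this
    exact this
  ext j k
  by_cases hjk : j = k
  · subst hjk; simpa using hd j
  · have h1 := h (Pi.single j 1 + Pi.single k 1)
    rw [key 1 1 j k] at h1
    have h2 := h (Pi.single j 1 + Pi.single k Complex.I)
    rw [key 1 Complex.I j k] at h2
    simp only [hd, star_one, one_mul, mul_one, mul_zero, zero_mul, add_zero, zero_add] at h1 h2
    rw [show star Complex.I = -Complex.I from Complex.conj_I] at h2
    -- h2 : L j k * I + (-I) * (L k j * 1) = 0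
    have heq : L j k = L k j := by
      have : (L j k - L k j) * Complex.I = 0 := by linear_combination h2
      have := mul_eq_zero.mp this
      rcases this with h' | h'
      · exact sub_eq_zero.mp h'
      · exact absurd h' Complex.I_ne_zero
    have : L j k = 0 := by
      have := h1
      rw [heq] at this ⊢
      linear_combination this / 2
    simpa using this


theorem stmt10_scalar (qv l : ℂ)
    (h : ∀ t : ℂ, 0 ≤ (star t * t) * qv + t * l + star (t * l)) : l = 0 := by
  by_contra hl
  have hn : 0 < Complex.normSq l := Complex.normSq_pos.mpr hl
  set s : ℝ := 1 / (|qv.re| + 1) with hs_def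
  have hs : 0 < s := by positivity
  have hmain := h (-(s : ℂ) * star l)
  have key : (star (-(s : ℂ) * star l) * (-(s : ℂ) * star l)) * qv
        + (-(s : ℂ) * star l) * l + star ((-(s : ℂ) * star l) * l)
      = ((s^2 * Complex.normSq l : ℝ) : ℂ) * qv - ((2 * s * Complex.normSq l : ℝ) : ℂ) := by
    simp only [Complex.star_def]
    apply Complex.ext <;>
      simp [Complex.normSq_apply, Complex.mul_re, Complex.mul_im, Complex.add_re, Complex.add_im,
        Complex.sub_re, Complex.sub_im, Complex.conj_re, Complex.conj_im,
        Complex.ofReal_re, Complex.ofReal_im, Complex.ofReal_pow, Complex.ofReal_inv,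
        Complex.ofReal_add, Complex.ofReal_one, Complex.ofReal_mul, pow_two] <;> ring
  rw [key, Complex.le_def] at hmain
  obtain ⟨hre, -⟩ := hmain
  simp only [Complex.zero_re, Complex.sub_re, Complex.mul_re, Complex.ofReal_re,
    Complex.ofReal_im, zero_mul, sub_zero] at hre
  -- hre : 0 ≤ s^2 * normSq l * qv.re - 2 * s * normSq l
  have habs : s * |qv.re| < 1 := by
    rw [hs_def]
    rw [div_mul_eq_mul_div, one_mul, div_lt_one (by positivity)]
    linarith
  have hp : 0 < s * Complex.normSq l := mul_pos hs hn
  have h1 : s ^ 2 * Complex.normSq l * qv.re ≤ s ^ 2 * Complex.normSq l * |qv.re| :=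
    mul_le_mul_of_nonneg_left (le_abs_self qv.re) (by positivity)
  have h2 : (s * Complex.normSq l) * (s * |qv.re|) < (s * Complex.normSq l) * 1 :=
    mul_lt_mul_of_pos_left habs hp
  nlinarith [hp, h1, h2]


-- quadratic form of conjTranspose is the conjugate
theorem stmt10_dot_conjT {a : ℕ} (L : Matrix (Fin a) (Fin a) ℂ) (v : Fin a → ℂ) :
    star v ⬝ᵥ Lᴴ *ᵥ v = star (star v ⬝ᵥ L *ᵥ v) := by
  rw [star_dotProduct]
  congr 1
  rw [Matrix.star_mulVec, Matrix.conjTranspose_conjTranspose, ← Matrix.dotProduct_mulVec]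

-- congruence of quadratic forms
theorem stmt10_dot_cong {a b : ℕ} (R : Matrix (Fin a) (Fin b) ℂ) (N : Matrix (Fin b) (Fin b) ℂ)
    (u : Fin a → ℂ) :
    star u ⬝ᵥ (R * N * Rᴴ) *ᵥ u = star (Rᴴ *ᵥ u) ⬝ᵥ N *ᵥ (Rᴴ *ᵥ u) := by
  simp only [Matrix.star_mulVec, Matrix.dotProduct_mulVec, Matrix.vecMul_vecMul,
    Matrix.mulVec_mulVec, Matrix.conjTranspose_conjTranspose, Matrix.mul_assoc]

-- expansion identity
theorem stmt10_expand {a b : ℕ} (E K : Matrix (Fin a) (Fin b) ℂ) (M : Matrix (Fin b) (Fin b) ℂ)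
    (hM : Mᴴ = M) :
    (E + K) * M * (E + K)ᴴ - E * M * Eᴴ
      = K * M * Kᴴ + K * M * Eᴴ + (K * M * Eᴴ)ᴴ := by
  have h1 : (K * M * Eᴴ)ᴴ = E * M * Kᴴ := by
    simp only [Matrix.conjTranspose_mul, Matrix.conjTranspose_conjTranspose, hM, Matrix.mul_assoc]
  rw [h1]
  simp only [Matrix.conjTranspose_add, Matrix.mul_add, Matrix.add_mul]
  noncomm_ring
theorem stmt10_entry {a b c d : ℕ} (A : Matrix (Fin a) (Fin b) ℂ) (W : Matrix (Fin c) (Fin d) ℂ)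
    (k : Fin a) (s : Fin b) (j : Fin c) (l : Fin d) :
    (A * (Matrix.single s j (1:ℂ) * W)) k l = A k s * W j l := by
  simp [Matrix.mul_apply, Matrix.single, Matrix.of_apply, ite_and, mul_ite, ite_mul,
    zero_mul, mul_zero, Finset.sum_ite_eq, Finset.sum_ite_eq']

theorem stmt10 {n m p q : ℕ}
    (A : Matrix (Fin n) (Fin p) ℂ) (B : Matrix (Fin m) (Fin q) ℂ)
    (C : Matrix (Fin n) (Fin q) ℂ) (D : Matrix (Fin n) (Fin n) ℂ)
    (M : Matrix (Fin q) (Fin q) ℂ)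
    (hD : D.IsHermitian) (hM : M.IsHermitian) (hA : A ≠ 0) :
    (∃ Xhat : Matrix (Fin p) (Fin m) ℂ,
        ∀ X : Matrix (Fin p) (Fin m) ℂ,
          (((A * X * B + C) * M * (A * X * B + C)ᴴ + D) -
            ((A * Xhat * B + C) * M * (A * Xhat * B + C)ᴴ + D)).PosSemidef) ↔
      (B * M * Bᴴ).PosSemidef ∧
      LinearMap.range (C * M * Bᴴ).mulVecLin ≤ LinearMap.range A.mulVecLin ∧
      LinearMap.range (B * M * Cᴴ).mulVecLin ≤ LinearMap.range (B * M * Bᴴ).mulVecLin := by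
  have hM' : Mᴴ = M := hM
  have hNh : (B * M * Bᴴ).IsHermitian := isHermitian_mul_mul_conjTranspose B hM
  have hAk : ∃ k s, A k s ≠ 0 := by
    by_contra hc
    push_neg at hc
    exact hA (by ext k s; simpa using hc k s)
  obtain ⟨k₀, s₀, hks⟩ := hAk
  constructor
  · rintro ⟨X₀, h⟩
    set E := A * X₀ * B + C with hE
    have hdiff : ∀ X : Matrix (Fin p) (Fin m) ℂ,
        ((A * X * B + C) * M * (A * X * B + C)ᴴ + D) -
          ((A * X₀ * B + C) * M * (A * X₀ * B + C)ᴴ + D)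
          = (A * X * B + C) * M * (A * X * B + C)ᴴ - E * M * Eᴴ := by
      intro X; rw [← hE]; abel
    -- Step 1: cross terms vanish
    have hL : ∀ Y : Matrix (Fin p) (Fin m) ℂ, (A * Y * B) * M * Eᴴ = 0 := by
      intro Y
      apply stmt10_quad_zero
      intro v
      apply stmt10_scalar (star v ⬝ᵥ ((A * Y * B) * M * (A * Y * B)ᴴ) *ᵥ v)
      intro t
      have h1 := (h (X₀ + t • Y)).dotProduct_mulVec_nonneg v
      rw [hdiff (X₀ + t • Y)] at h1
      have e1 : A * (X₀ + t • Y) * B + C = E + t • (A * Y * B) := by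
        rw [hE]
        rw [Matrix.mul_add, Matrix.add_mul, Matrix.mul_smul, Matrix.smul_mul]
        abel
      rw [e1, stmt10_expand E (t • (A * Y * B)) M hM'] at h1
      have e2 : (t • (A * Y * B)) * M * (t • (A * Y * B))ᴴ
          = (star t * t) • ((A * Y * B) * M * (A * Y * B)ᴴ) := by
        rw [Matrix.conjTranspose_smul, Matrix.smul_mul, Matrix.smul_mul, Matrix.mul_smul,
          smul_smul, mul_comm]
      have e3 : (t • (A * Y * B)) * M * Eᴴ = t • ((A * Y * B) * M * Eᴴ) := by
        rw [Matrix.smul_mul, Matrix.smul_mul]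
      rw [e2, e3, Matrix.conjTranspose_smul] at h1
      have e4 : star v ⬝ᵥ (((star t * t) • ((A * Y * B) * M * (A * Y * B)ᴴ)
            + t • ((A * Y * B) * M * Eᴴ) + star t • ((A * Y * B) * M * Eᴴ)ᴴ) *ᵥ v)
          = (star t * t) * (star v ⬝ᵥ ((A * Y * B) * M * (A * Y * B)ᴴ) *ᵥ v)
            + t * (star v ⬝ᵥ ((A * Y * B) * M * Eᴴ) *ᵥ v)
            + star (t * (star v ⬝ᵥ ((A * Y * B) * M * Eᴴ) *ᵥ v)) := by
        rw [star_mul']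
        simp only [Matrix.add_mulVec, Matrix.smul_mulVec, dotProduct_add,
          dotProduct_smul, smul_eq_mul]
        rw [stmt10_dot_conjT ((A * Y * B) * M * Eᴴ) v]
      rw [e4] at h1
      exact h1
    -- Step 2: B * M * Eᴴ = 0
    have hL' : ∀ Y : Matrix (Fin p) (Fin m) ℂ, A * (Y * (B * (M * Eᴴ))) = 0 := by
      intro Y
      have := hL Y
      simpa only [Matrix.mul_assoc] using this
    have hBME : B * (M * Eᴴ) = 0 := by
      ext j l
      have h1 := congrFun (congrFun (hL' (Matrix.single s₀ j (1:ℂ))) k₀) l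
      rw [← Matrix.mul_assoc] at h1
      rw [Matrix.mul_assoc A _ _, stmt10_entry A (B * (M * Eᴴ)) k₀ s₀ j l] at h1
      have := (mul_eq_zero.mp h1).resolve_left hks
      simpa using this
    -- Step 3: PSD of N
    -- useful expansion of B*M*Eᴴ = 0
    have hBME' : B * M * Eᴴ = 0 := by rw [Matrix.mul_assoc]; exact hBME
    have hEMB : E * (M * Bᴴ) = 0 := by
      have h0 := congrArg Matrix.conjTranspose hBME'
      rw [Matrix.conjTranspose_mul, Matrix.conjTranspose_mul, Matrix.conjTranspose_conjTranspose,
        hM', Matrix.conjTranspose_zero] at h0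
      exact h0
    refine ⟨PosSemidef.of_dotProduct_mulVec_nonneg hNh ?_, ?_, ?_⟩
    · intro w
      set u : Fin n → ℂ := Pi.single k₀ 1 with hu
      set α : ℂ := star (A k₀ s₀) with hα
      have hα0 : α ≠ 0 := by simpa [hα] using hks
      set Y : Matrix (Fin p) (Fin m) ℂ :=
        Matrix.of fun r t => if r = s₀ then star (w t) / star α else 0 with hY
      have e6 : (A * Y)ᴴ *ᵥ u = w := by
        funext t
        rw [Matrix.conjTranspose_mul, ← Matrix.mulVec_mulVec]
        have ha : Aᴴ *ᵥ u = fun r => star (A k₀ r) := by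
          funext r
          rw [hu, Matrix.mulVec_single]
          simp [Matrix.conjTranspose_apply]
        rw [ha]
        show ∑ r, Yᴴ t r * star (A k₀ r) = w t
        rw [Finset.sum_eq_single s₀]
        · simp only [Matrix.conjTranspose_apply, hY, Matrix.of_apply, if_pos rfl, if_true,
            star_div₀, star_star, ← hα]
          field_simp
        · intro r _ hr
          simp [Matrix.conjTranspose_apply, hY, hr]
        · intro hs; exact absurd (Finset.mem_univ s₀) hs
      have h1 := (h (X₀ + Y)).dotProduct_mulVec_nonneg u
      rw [hdiff (X₀ + Y)] at h1
      have e1 : A * (X₀ + Y) * B + C = E + (A * Y * B) := by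
        rw [hE, Matrix.mul_add, Matrix.add_mul]
        abel
      rw [e1, stmt10_expand E (A * Y * B) M hM', hL Y] at h1
      simp only [Matrix.conjTranspose_zero, add_zero] at h1
      have e5 : (A * Y * B) * M * (A * Y * B)ᴴ = (A * Y) * (B * M * Bᴴ) * (A * Y)ᴴ := by
        rw [Matrix.conjTranspose_mul]
        simp only [Matrix.mul_assoc]
      rw [e5, stmt10_dot_cong (A * Y) (B * M * Bᴴ) u, e6] at h1
      exact h1
    · -- range (C*M*Bᴴ) ≤ range A
      have hfac : C * M * Bᴴ = A * (-(X₀ * (B * (M * Bᴴ)))) := by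
        have h0 : A * X₀ * B * (M * Bᴴ) + C * (M * Bᴴ) = 0 := by
          rw [← Matrix.add_mul, ← hE]
          exact hEMB
        have h1 : C * M * Bᴴ = -(A * X₀ * B * (M * Bᴴ)) := by
          rw [Matrix.mul_assoc]
          exact eq_neg_of_add_eq_zero_left (by rw [add_comm]; exact h0)
        rw [h1, Matrix.mul_neg]
        congr 1
        simp only [Matrix.mul_assoc]
      rw [hfac]
      exact stmt10_range_mul_le _ _
    · -- range (B*M*Cᴴ) ≤ range (B*M*Bᴴ)
      have hfac : B * M * Cᴴ = (B * M * Bᴴ) * (-(X₀ᴴ * Aᴴ)) := by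
        have h0 : B * M * Bᴴ * (X₀ᴴ * Aᴴ) + B * M * Cᴴ = 0 := by
          have := hBME'
          rw [hE, Matrix.conjTranspose_add, Matrix.conjTranspose_mul, Matrix.conjTranspose_mul,
            Matrix.mul_add] at this
          convert this using 2
          simp only [Matrix.mul_assoc]
        have h1 : B * M * Cᴴ = -(B * M * Bᴴ * (X₀ᴴ * Aᴴ)) :=
          eq_neg_of_add_eq_zero_left (by rw [add_comm]; exact h0)
        rw [h1, Matrix.mul_neg]
      rw [hfac]
      exact stmt10_range_mul_le _ _
  · rintro ⟨hN, h1, h2⟩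
    obtain ⟨V, hV⟩ := stmt10_exists_factor A (C * M * Bᴴ) h1
    obtain ⟨W, hW⟩ := stmt10_exists_factor (B * M * Bᴴ) (B * M * Cᴴ) h2
    obtain ⟨P, hP⟩ := stmt10_exists_ginv (B * M * Bᴴ)
    set N := B * M * Bᴴ with hNdef
    set X₀ : Matrix (Fin p) (Fin m) ℂ := -(V * P) with hX₀
    have hCMB : C * M * Bᴴ = Wᴴ * N := by
      have : (B * M * Cᴴ)ᴴ = C * M * Bᴴ := by
        rw [Matrix.conjTranspose_mul, Matrix.conjTranspose_mul, Matrix.conjTranspose_conjTranspose,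
          hM', Matrix.mul_assoc]
      rw [← this, ← hW, Matrix.conjTranspose_mul, hNh.eq]
    have hAXN : A * X₀ * N = -(C * M * Bᴴ) := by
      rw [hX₀]
      have : A * -(V * P) * N = -(A * V * P * N) := by
        simp only [Matrix.mul_neg, Matrix.neg_mul]
        rw [Matrix.mul_assoc A V P]
      rw [this, hV, hCMB]
      simp only [Matrix.mul_assoc]
      rw [← Matrix.mul_assoc N P N, hP]
    set E := A * X₀ * B + C with hE
    have hEMB : E * M * Bᴴ = 0 := by
      rw [hE, Matrix.add_mul, Matrix.add_mul]
      have e0 : A * X₀ * B * M * Bᴴ = A * X₀ * N := by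
        rw [hNdef]
        simp only [Matrix.mul_assoc]
      rw [e0, hAXN]
      simp
    have hBME : B * M * Eᴴ = 0 := by
      have : (E * M * Bᴴ)ᴴ = B * M * Eᴴ := by
        rw [Matrix.conjTranspose_mul, Matrix.conjTranspose_mul, Matrix.conjTranspose_conjTranspose,
          hM', Matrix.mul_assoc]
      rw [← this, hEMB, Matrix.conjTranspose_zero]
    refine ⟨X₀, fun X => ?_⟩
    have hdiff : ((A * X * B + C) * M * (A * X * B + C)ᴴ + D) -
          ((A * X₀ * B + C) * M * (A * X₀ * B + C)ᴴ + D)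
          = (A * X * B + C) * M * (A * X * B + C)ᴴ - E * M * Eᴴ := by
      rw [← hE]; abel
    rw [hdiff]
    have e1 : A * X * B + C = E + (A * (X - X₀) * B) := by
      rw [hE, Matrix.mul_sub, Matrix.sub_mul]
      abel
    rw [e1, stmt10_expand E (A * (X - X₀) * B) M hM']
    have hcross : (A * (X - X₀) * B) * M * Eᴴ = 0 := by
      have h0 : (E * M * Bᴴ)ᴴ = 0 := by rw [hEMB, Matrix.conjTranspose_zero]
      have : (A * (X - X₀) * B) * M * Eᴴ = (A * (X - X₀)) * (B * M * Eᴴ) := by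
        simp only [Matrix.mul_assoc]
      rw [this, hBME, Matrix.mul_zero]
    rw [hcross]
    simp only [Matrix.conjTranspose_zero, add_zero]
    have e5 : (A * (X - X₀) * B) * M * (A * (X - X₀) * B)ᴴ
        = (A * (X - X₀)) * N * (A * (X - X₀))ᴴ := by
      rw [Matrix.conjTranspose_mul, hNdef]
      simp only [Matrix.mul_assoc]
    rw [e5]
    exact hN.mul_mul_conjTranspose_same (A * (X - X₀))
end

section
/- Let A ∈ ℂ^{n×p}, B ∈ ℂ^{m×q}, C ∈ ℂ^{n×q}, Hermitian D ∈ ℂ^{n×n} and Hermitian M ∈ ℂ^{q×q} be given with A ≠ 0, and let φ(X) = (AXB + C)M(AXB + C)* + D for X ∈ ℂ^{p×m}. Assume BMB* ⪰ 0, ℛ(CMB*) ⊆ ℛ(A), and ℛ(BMC*) ⊆ ℛ(BMB*). Then a matrix X̂ ∈ ℂ^{p×m} satisfies φ(X) ⪰ φ(X̂) for all X ∈ ℂ^{p×m} if and only if X̂ solves the linear matrix equation A X̂ BMB* + CMB* = 0. -/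
open Matrix
open scoped ComplexOrder

theorem stmt11 {n m p q : ℕ}
    (A : Matrix (Fin n) (Fin p) ℂ) (B : Matrix (Fin m) (Fin q) ℂ)
    (C : Matrix (Fin n) (Fin q) ℂ) (D : Matrix (Fin n) (Fin n) ℂ)
    (M : Matrix (Fin q) (Fin q) ℂ)
    (hD : D.IsHermitian) (hM : M.IsHermitian) (hA : A ≠ 0)
    (hBMB : (B * M * Bᴴ).PosSemidef)
    (hCA : LinearMap.range (C * M * Bᴴ).mulVecLin ≤ LinearMap.range A.mulVecLin)
    (hBC : LinearMap.range (B * M * Cᴴ).mulVecLin ≤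
      LinearMap.range (B * M * Bᴴ).mulVecLin) :
    ∀ Xhat : Matrix (Fin p) (Fin m) ℂ,
      (∀ X : Matrix (Fin p) (Fin m) ℂ,
          (((A * X * B + C) * M * (A * X * B + C)ᴴ + D) -
            ((A * Xhat * B + C) * M * (A * Xhat * B + C)ᴴ + D)).PosSemidef) ↔
        A * Xhat * (B * M * Bᴴ) + C * M * Bᴴ = 0 := by
  intro Xhat
  set N : Matrix (Fin m) (Fin m) ℂ := B * M * Bᴴ with hN
  set G : Matrix (Fin n) (Fin m) ℂ := A * Xhat * N + C * M * Bᴴ with hG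
  have hdiag : ∀ {k : ℕ} (P : Matrix (Fin k) (Fin k) ℂ), P.PosSemidef → ∀ j, 0 ≤ P j j := by
    intro k P hP j
    exact hP.diag_nonneg
  have keyid : ∀ X : Matrix (Fin p) (Fin m) ℂ,
      (((A * X * B + C) * M * (A * X * B + C)ᴴ + D) -
        ((A * Xhat * B + C) * M * (A * Xhat * B + C)ᴴ + D)) =
      (A * (X - Xhat)) * N * (A * (X - Xhat))ᴴ +
        ((A * (X - Xhat)) * Gᴴ + G * (A * (X - Xhat))ᴴ) := by
    intro X
    rw [hG, hN]
    simp only [Matrix.mul_sub, Matrix.sub_mul, Matrix.mul_add, Matrix.add_mul,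
      conjTranspose_add, conjTranspose_sub, conjTranspose_mul, conjTranspose_conjTranspose,
      hM.eq, Matrix.mul_assoc]
    abel
  constructor
  · -- forward direction
    intro h
    have hcol : ∀ j : Fin m, ∃ v : Fin p → ℂ, A *ᵥ v = G *ᵥ Pi.single j 1 := by
      intro j
      obtain ⟨w, hw⟩ := hCA ⟨Pi.single j 1, rfl⟩
      simp only [mulVecLin_apply] at hw
      refine ⟨Xhat *ᵥ (N *ᵥ Pi.single j 1) + w, ?_⟩
      rw [mulVec_add, hw, hG, add_mulVec, mulVec_mulVec, mulVec_mulVec, Matrix.mul_assoc]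
    choose Hf hHf using hcol
    set H : Matrix (Fin p) (Fin m) ℂ := Matrix.of fun i j => Hf j i with hH
    have hAH : A * H = G := by
      ext i j
      have := congr_fun (hHf j) i
      simpa [Matrix.mul_apply, Matrix.mulVec, dotProduct, hH, Pi.single_apply, mul_ite] using this
    have hineq : ∀ t : ℝ, 0 < t → ∀ j : Fin n,
        2 * t * ((G * Gᴴ) j j).re ≤ t ^ 2 * ((G * N * Gᴴ) j j).re := by
      intro t ht j
      have hps := h (Xhat - (t : ℂ) • H)
      rw [keyid] at hps
      have hsub : Xhat - (t : ℂ) • H - Xhat = -((t : ℂ) • H) := by abel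
      rw [hsub] at hps
      have hmul : A * -((t : ℂ) • H) = -((t : ℂ) • G) := by
        rw [Matrix.mul_neg, Matrix.mul_smul, hAH]
      rw [hmul] at hps
      have hΔ : -((t : ℂ) • G) * N * (-((t : ℂ) • G))ᴴ +
          (-((t : ℂ) • G) * Gᴴ + G * (-((t : ℂ) • G))ᴴ) =
          ((t ^ 2 : ℝ) : ℂ) • (G * N * Gᴴ) - ((2 * t : ℝ) : ℂ) • (G * Gᴴ) := by
        simp only [conjTranspose_neg, conjTranspose_smul, Matrix.neg_mul, Matrix.mul_neg,
          Matrix.smul_mul, Matrix.mul_smul, neg_neg, smul_smul, RCLike.star_def,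
          Complex.conj_ofReal]
        push_cast
        rw [sub_eq_add_neg]
        ring_nf
        rw [smul_neg, neg_neg, smul_smul, ← pow_two, ← neg_add, ← add_smul, mul_two]
      rw [hΔ] at hps
      have := hdiag _ hps j
      rw [Complex.nonneg_iff] at this
      have h1 := this.1
      simp only [Matrix.sub_apply, Matrix.smul_apply, smul_eq_mul, Complex.sub_re,
        Complex.re_ofReal_mul] at h1
      linarith
    have hGG : ∀ j : Fin n, ((G * Gᴴ) j j) = 0 := by
      intro j
      have hc := hdiag _ (posSemidef_self_mul_conjTranspose G) j
      have hd := hdiag _ (hBMB.mul_mul_conjTranspose_same G) j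
      rw [Complex.nonneg_iff] at hc hd
      set c : ℝ := ((G * Gᴴ) j j).re with hcdef
      set d : ℝ := ((G * N * Gᴴ) j j).re with hddef
      have hczero : c = 0 := by
        by_contra hne
        have hcpos : 0 < c := lt_of_le_of_ne hc.1 (Ne.symm hne)
        have hdpos : 0 ≤ d := hd.1
        have ht : (0:ℝ) < c / (d + 1) := by positivity
        have hkey := hineq (c / (d + 1)) ht j
        rw [← hcdef, ← hddef, div_pow] at hkey
        have hd1 : (0:ℝ) < d + 1 := by linarith
        have hkey2 := mul_le_mul_of_nonneg_right hkey (le_of_lt (pow_pos hd1 2))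
        have e1 : 2 * (c / (d + 1)) * c * (d + 1) ^ 2 = 2 * c * c * (d + 1) := by
          field_simp
        have e2 : c ^ 2 / (d + 1) ^ 2 * d * (d + 1) ^ 2 = c ^ 2 * d := by field_simp
        rw [e1, e2] at hkey2
        nlinarith [mul_pos hcpos hcpos]
      apply Complex.ext
      · simpa [← hcdef] using hczero
      · simpa using hc.2.symm
    have hGGzero : G * Gᴴ = 0 := by
      ext i j
      have h1 : ∀ k, G i k = 0 := by
        have h2 := hGG i
        rw [Matrix.mul_apply] at h2
        simp only [conjTranspose_apply] at h2
        have h3 := dotProduct_self_star_eq_zero.1 h2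
        intro k
        exact congr_fun h3 k
      simp [Matrix.mul_apply, h1]
    exact self_mul_conjTranspose_eq_zero.mp hGGzero
  · -- backward direction
    intro hGzero X
    rw [keyid X, hGzero]
    simpa using hBMB.mul_mul_conjTranspose_same (A * (X - Xhat))
end

section
/- Let A ∈ ℂ^{n×p}, B ∈ ℂ^{m×q}, C ∈ ℂ^{n×q}, Hermitian D ∈ ℂ^{n×n} and Hermitian M ∈ ℂ^{q×q} be given with A ≠ 0 and BMB* ≠ 0, and let φ(X) = (AXB + C)M(AXB + C)* + D for X ∈ ℂ^{p×m}. Then: (i) φ((1/2)X₁ + (1/2)X₂) ⪯ (1/2)φ(X₁) + (1/2)φ(X₂) holds for all X₁, X₂ ∈ ℂ^{p×m} (φ is midpoint-convex in the Löwner ordering) if and only if BMB* ⪰ 0; (ii) φ((1/2)X₁ + (1/2)X₂) ⪰ (1/2)φ(X₁) + (1/2)φ(X₂) holds for all X₁, X₂ ∈ ℂ^{p×m} (φ is midpoint-concave in the Löwner ordering) if and only if BMB* ⪯ 0. -/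
open Matrix
open scoped ComplexOrder

private lemma quadAux14 {n m p : ℕ} (A : Matrix (Fin n) (Fin p) ℂ) (hA : A ≠ 0)
    (N : Matrix (Fin m) (Fin m) ℂ) (hN : N.IsHermitian)
    (h : ∀ Z : Matrix (Fin p) (Fin m) ℂ, ((A * Z) * N * (A * Z)ᴴ).PosSemidef) :
    N.PosSemidef := by
  obtain ⟨i₀, j₀, ha⟩ : ∃ i j, A i j ≠ 0 := by
    by_contra hc; push_neg at hc; exact hA (by ext i j; simp [hc i j])
  refine Matrix.PosSemidef.of_dotProduct_mulVec_nonneg hN fun u => ?_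
  set Z : Matrix (Fin p) (Fin m) ℂ :=
    Matrix.of fun j k => if j = j₀ then star (u k) else 0 with hZ
  set W := A * Z with hW
  set x : Fin n → ℂ := Pi.single i₀ 1 with hx
  have h2 := (h Z).dotProduct_mulVec_nonneg x
  have hy : Wᴴ *ᵥ x = star (A i₀ j₀) • u := by
    funext k
    simp only [Matrix.mulVec, dotProduct, conjTranspose_apply, hx, Pi.single_apply,
      mul_ite, mul_one, mul_zero, Finset.sum_ite_eq', Finset.mem_univ, if_true]
    simp only [hW, Matrix.mul_apply, hZ, Matrix.of_apply, mul_ite, mul_zero,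
      Finset.sum_ite_eq', Finset.mem_univ, if_true, star_mul', star_star]
    simp [mul_comm]
  have key : star x ⬝ᵥ ((W * N * Wᴴ) *ᵥ x)
      = (A i₀ j₀ * star (A i₀ j₀)) * (star u ⬝ᵥ (N *ᵥ u)) := by
    have hsw : star x ᵥ* W = star (Wᴴ *ᵥ x) := by
      rw [Matrix.star_mulVec, conjTranspose_conjTranspose]
    rw [← Matrix.mulVec_mulVec, ← Matrix.mulVec_mulVec, Matrix.dotProduct_mulVec, hsw, hy]
    rw [Matrix.mulVec_smul, star_smul, smul_dotProduct, dotProduct_smul, star_star,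
      smul_eq_mul, smul_eq_mul, mul_assoc]
  rw [key] at h2
  have hns : A i₀ j₀ * star (A i₀ j₀) = (Complex.normSq (A i₀ j₀) : ℂ) := by
    rw [RCLike.star_def, Complex.mul_conj]
  rw [hns] at h2
  set r : ℝ := Complex.normSq (A i₀ j₀) with hr
  have hrpos : 0 < r := Complex.normSq_pos.mpr ha
  set qe : ℂ := star u ⬝ᵥ (N *ᵥ u) with hq
  rw [Complex.le_def] at h2 ⊢
  constructor
  · have : 0 ≤ r * qe.re := by simpa using h2.1
    exact nonneg_of_mul_nonneg_right this hrpos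
  · have : r * qe.im = 0 := by simpa using h2.2.symm
    symm
    exact (mul_eq_zero.mp this).resolve_left (ne_of_gt hrpos)

private lemma keyId14 {n m p q : ℕ}
    (A : Matrix (Fin n) (Fin p) ℂ) (B : Matrix (Fin m) (Fin q) ℂ)
    (C : Matrix (Fin n) (Fin q) ℂ) (D : Matrix (Fin n) (Fin n) ℂ)
    (M : Matrix (Fin q) (Fin q) ℂ) (X₁ X₂ : Matrix (Fin p) (Fin m) ℂ) :
    (((1/2 : ℂ) • ((A * X₁ * B + C) * M * (A * X₁ * B + C)ᴴ + D) +
        (1/2 : ℂ) • ((A * X₂ * B + C) * M * (A * X₂ * B + C)ᴴ + D)) -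
      ((A * ((1/2 : ℂ) • X₁ + (1/2 : ℂ) • X₂) * B + C) * M *
          (A * ((1/2 : ℂ) • X₁ + (1/2 : ℂ) • X₂) * B + C)ᴴ + D))
    = (A * ((1/2:ℂ) • (X₁ - X₂))) * (B * M * Bᴴ) * (A * ((1/2:ℂ) • (X₁ - X₂)))ᴴ := by
  simp only [Matrix.mul_add, Matrix.add_mul, Matrix.mul_smul, Matrix.smul_mul,
    conjTranspose_add, conjTranspose_smul, Matrix.mul_sub, Matrix.sub_mul,
    conjTranspose_mul, conjTranspose_sub, smul_add, smul_sub, smul_smul, Matrix.mul_assoc,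
    star_div₀, star_one, star_ofNat]
  module

theorem stmt14 {n m p q : ℕ}
    (A : Matrix (Fin n) (Fin p) ℂ) (B : Matrix (Fin m) (Fin q) ℂ)
    (C : Matrix (Fin n) (Fin q) ℂ) (D : Matrix (Fin n) (Fin n) ℂ)
    (M : Matrix (Fin q) (Fin q) ℂ)
    (hD : D.IsHermitian) (hM : M.IsHermitian)
    (hA : A ≠ 0) (hBMB : B * M * Bᴴ ≠ 0) :
    ((∀ X₁ X₂ : Matrix (Fin p) (Fin m) ℂ,
        (((1/2 : ℂ) • ((A * X₁ * B + C) * M * (A * X₁ * B + C)ᴴ + D) +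
            (1/2 : ℂ) • ((A * X₂ * B + C) * M * (A * X₂ * B + C)ᴴ + D)) -
          ((A * ((1/2 : ℂ) • X₁ + (1/2 : ℂ) • X₂) * B + C) * M *
              (A * ((1/2 : ℂ) • X₁ + (1/2 : ℂ) • X₂) * B + C)ᴴ + D)).PosSemidef) ↔
      (B * M * Bᴴ).PosSemidef) ∧
    ((∀ X₁ X₂ : Matrix (Fin p) (Fin m) ℂ,
        (((A * ((1/2 : ℂ) • X₁ + (1/2 : ℂ) • X₂) * B + C) * M *
              (A * ((1/2 : ℂ) • X₁ + (1/2 : ℂ) • X₂) * B + C)ᴴ + D) -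
          ((1/2 : ℂ) • ((A * X₁ * B + C) * M * (A * X₁ * B + C)ᴴ + D) +
            (1/2 : ℂ) • ((A * X₂ * B + C) * M * (A * X₂ * B + C)ᴴ + D))).PosSemidef) ↔
      (-(B * M * Bᴴ)).PosSemidef) := by
  set N := B * M * Bᴴ with hN
  have hNherm : N.IsHermitian := by
    rw [Matrix.IsHermitian, hN, conjTranspose_mul, conjTranspose_mul,
      conjTranspose_conjTranspose, hM.eq, Matrix.mul_assoc]
  have key2 : ∀ X₁ X₂ : Matrix (Fin p) (Fin m) ℂ,
      (((A * ((1/2 : ℂ) • X₁ + (1/2 : ℂ) • X₂) * B + C) * M *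
            (A * ((1/2 : ℂ) • X₁ + (1/2 : ℂ) • X₂) * B + C)ᴴ + D) -
        ((1/2 : ℂ) • ((A * X₁ * B + C) * M * (A * X₁ * B + C)ᴴ + D) +
          (1/2 : ℂ) • ((A * X₂ * B + C) * M * (A * X₂ * B + C)ᴴ + D)))
      = (A * ((1/2:ℂ) • (X₁ - X₂))) * (-N) * (A * ((1/2:ℂ) • (X₁ - X₂)))ᴴ := by
    intro X₁ X₂
    rw [← neg_sub, keyId14 A B C D M X₁ X₂, Matrix.mul_neg, Matrix.neg_mul]
  have half2 : ∀ Z : Matrix (Fin p) (Fin m) ℂ, (1/2:ℂ) • ((2:ℂ) • Z - 0) = Z := by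
    intro Z; rw [sub_zero, smul_smul]; norm_num
  constructor
  · constructor
    · intro h
      refine quadAux14 A hA N hNherm fun Z => ?_
      have := h ((2:ℂ) • Z) 0
      rwa [keyId14, half2 Z] at this
    · intro hPSD X₁ X₂
      rw [keyId14]
      exact hPSD.mul_mul_conjTranspose_same _
  · constructor
    · intro h
      refine quadAux14 A hA (-N) hNherm.neg fun Z => ?_
      have := h ((2:ℂ) • Z) 0
      rwa [key2, half2 Z] at this
    · intro hPSD X₁ X₂
      rw [key2]
      exact hPSD.mul_mul_conjTranspose_same _
end

section
/- Let k ≥ 1 and for i = 1,…,k let A_i ∈ ℂ^{n×p_i} with A_i ≠ 0 and B_i ∈ ℂ^{m_i×q}; let C ∈ ℂ^{n×q}, Hermitian D ∈ ℂ^{n×n} and Hermitian M ∈ ℂ^{q×q} be given. Define φ(X₁,…,X_k) = (Σ_{i=1}^k A_iX_iB_i + C)M(Σ_{i=1}^k A_iX_iB_i + C)* + D for X_i ∈ ℂ^{p_i×m_i}, let B = [B₁; … ; B_k] be the stacked (m₁+…+m_k)×q column block matrix, and let N = [D+CMC*, CMB*; BMC*, BMB*]. Then φ(X₁,…,X_k)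 ⪰ 0 for all X₁,…,X_k if and only if N ⪰ 0; dually, φ(X₁,…,X_k) ⪯ 0 for all X₁,…,X_k if and only if N ⪯ 0. -/
open Matrix
open scoped ComplexOrder

namespace Stmt15Aux

lemma conj_quad {q : ℕ} {r1 r2 : Type*} [Fintype r1] [Fintype r2]
    (M : Matrix (Fin q) (Fin q) ℂ) (P : Matrix r1 (Fin q) ℂ) (Q : Matrix r2 (Fin q) ℂ)
    (f : r1 → ℂ) (g : r2 → ℂ) :
    star (Pᴴ *ᵥ f) ⬝ᵥ M *ᵥ (Qᴴ *ᵥ g) = star f ⬝ᵥ (P * M * Qᴴ) *ᵥ g := by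
  simp [star_mulVec, dotProduct_mulVec, vecMul_vecMul, Matrix.mul_assoc]

lemma herm_quad_real {r : Type*} [Fintype r] {H : Matrix r r ℂ} (hH : H.IsHermitian)
    (v : r → ℂ) : ((star v) ⬝ᵥ H *ᵥ v).im = 0 := by
  have h : (starRingEnd ℂ) ((star v) ⬝ᵥ H *ᵥ v) = (star v) ⬝ᵥ H *ᵥ v := by
    calc (starRingEnd ℂ) ((star v) ⬝ᵥ H *ᵥ v)
        = star ((star v) ⬝ᵥ H *ᵥ v) := rfl
      _ = star (H *ᵥ v) ⬝ᵥ v := by rw [star_dotProduct, star_star]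
      _ = (star v ᵥ* H) ⬝ᵥ v := by rw [star_mulVec, hH.eq]
      _ = (star v) ⬝ᵥ H *ᵥ v := (dotProduct_mulVec _ _ _).symm
  exact Complex.conj_eq_iff_im.mp h

lemma bilin {r : Type*} [Fintype r] (H : Matrix r r ℂ) (f₁ f₂ g₁ g₂ : r → ℂ) (t : ℝ) :
    star (f₁ + (t:ℂ) • f₂) ⬝ᵥ H *ᵥ (g₁ + (t:ℂ) • g₂) =
      star f₁ ⬝ᵥ H *ᵥ g₁ + (t:ℂ) * (star f₁ ⬝ᵥ H *ᵥ g₂ + star f₂ ⬝ᵥ H *ᵥ g₁)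
        + (t:ℂ)^2 * (star f₂ ⬝ᵥ H *ᵥ g₂) := by
  simp only [star_add, star_smul, mulVec_add, mulVec_smul, dotProduct_add, add_dotProduct,
    smul_dotProduct, dotProduct_smul, smul_eq_mul, Complex.star_def, Complex.conj_ofReal]
  ring

lemma sum_mulVec {ι : Type*} (s : Finset ι) {r c : Type*} [Fintype c] (N : ι → Matrix r c ℂ)
    (x : c → ℂ) : (∑ i ∈ s, N i) *ᵥ x = ∑ i ∈ s, N i *ᵥ x := by
  funext j
  simp only [mulVec, dotProduct, Matrix.sum_apply, Finset.sum_apply, Finset.sum_mul]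
  exact Finset.sum_comm

lemma exists_mulVec_ne_zero {n p : ℕ} {A : Matrix (Fin n) (Fin p) ℂ} (hA : A ≠ 0) :
    ∃ z : Fin n → ℂ, Aᴴ *ᵥ z ≠ 0 := by
  by_contra h
  push_neg at h
  apply hA
  ext r c
  have h2 : (Aᴴ *ᵥ Pi.single r 1) c = star (A r c) := by
    simp [mulVec, dotProduct, Pi.single_apply, conjTranspose_apply, mul_ite, Finset.sum_ite_eq']
  have := congrFun (h (Pi.single r 1)) c
  rw [h2] at this
  simpa using congrArg star this

lemma exists_common {k n : ℕ} {pdim : Fin k → ℕ}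
    (A : ∀ i : Fin k, Matrix (Fin n) (Fin (pdim i)) ℂ) (hA : ∀ i, A i ≠ 0) :
    ∃ z : Fin n → ℂ, ∀ i, (A i)ᴴ *ᵥ z ≠ 0 := by
  suffices h : ∀ s : Finset (Fin k), ∃ z : Fin n → ℂ, ∀ i ∈ s, (A i)ᴴ *ᵥ z ≠ 0 by
    obtain ⟨z, hz⟩ := h Finset.univ
    exact ⟨z, fun i => hz i (Finset.mem_univ i)⟩
  intro s
  induction s using Finset.induction_on with
  | empty => exact ⟨0, by simp⟩
  | @insert a s ha ih =>
    obtain ⟨z, hz⟩ := ih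
    obtain ⟨z', hz'⟩ := exists_mulVec_ne_zero (hA a)
    set bad : Fin k → Set ℂ :=
      fun j => {t : ℂ | (A j)ᴴ *ᵥ (z + t • z') = 0 ∧ (A j)ᴴ *ᵥ z' ≠ 0} with hbad
    have hfin : (⋃ j, bad j).Finite := by
      refine Set.finite_iUnion fun j => Set.Subsingleton.finite ?_
      intro t1 h1 t2 h2
      simp only [hbad, Set.mem_setOf_eq, mulVec_add, mulVec_smul] at h1 h2
      have h3 : t1 • ((A j)ᴴ *ᵥ z') = t2 • ((A j)ᴴ *ᵥ z') :=
        add_left_cancel (h1.1.trans h2.1.symm)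
      have h4 := sub_eq_zero.mpr h3
      rw [← sub_smul] at h4
      rcases smul_eq_zero.mp h4 with h5 | h5
      · exact sub_eq_zero.mp h5
      · exact absurd h5 h1.2
    obtain ⟨t, ht⟩ := ((Set.infinite_univ (α := ℂ)).diff hfin).nonempty
    have htT : t ∉ ⋃ j, bad j := ht.2
    refine ⟨z + t • z', fun i hi => ?_⟩
    have hnotbad : ∀ j, ¬ ((A j)ᴴ *ᵥ (z + t • z') = 0 ∧ (A j)ᴴ *ᵥ z' ≠ 0) := by
      intro j hj
      exact htT (Set.mem_iUnion.mpr ⟨j, hj⟩)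
    rcases Finset.mem_insert.mp hi with rfl | hi'
    · intro h0
      exact hnotbad i ⟨h0, hz'⟩
    · intro h0
      by_cases hc : (A i)ᴴ *ᵥ z' = 0
      · apply hz i hi'
        rw [mulVec_add, mulVec_smul, hc, smul_zero, add_zero] at h0
        exact h0
      · exact hnotbad i ⟨h0, hc⟩

lemma mulVec_realize {p' m' : ℕ} {a : Fin p' → ℂ} (ha : a ≠ 0) (y : Fin m' → ℂ) :
    ∃ Y : Matrix (Fin m') (Fin p') ℂ, Y *ᵥ a = y := by
  have hc : star a ⬝ᵥ a ≠ 0 := fun h => ha (dotProduct_star_self_eq_zero.mp h)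
  refine ⟨(star a ⬝ᵥ a)⁻¹ • vecMulVec y (star a), ?_⟩
  have h1 : vecMulVec y (star a) *ᵥ a = (star a ⬝ᵥ a) • y := by
    funext i
    simp only [mulVec, dotProduct, vecMulVec_apply, Pi.smul_apply, smul_eq_mul, Pi.star_apply]
    rw [Finset.sum_mul]
    exact Finset.sum_congr rfl fun j _ => by ring
  rw [smul_mulVec, h1, smul_smul, inv_mul_cancel₀ hc, one_smul]

lemma main {k n q : ℕ} {pdim mdim : Fin k → ℕ}
    (A : ∀ i : Fin k, Matrix (Fin n) (Fin (pdim i)) ℂ)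
    (B : ∀ i : Fin k, Matrix (Fin (mdim i)) (Fin q) ℂ)
    (C : Matrix (Fin n) (Fin q) ℂ) (D : Matrix (Fin n) (Fin n) ℂ)
    (M : Matrix (Fin q) (Fin q) ℂ)
    (hD : D.IsHermitian) (hM : M.IsHermitian)
    (hA : ∀ i, A i ≠ 0)
    (Bbig : Matrix ((i : Fin k) × Fin (mdim i)) (Fin q) ℂ)
    (hBbig : ∀ (j : (i : Fin k) × Fin (mdim i)) (l : Fin q), Bbig j l = B j.1 j.2 l) :
    (∀ X : ∀ i : Fin k, Matrix (Fin (pdim i)) (Fin (mdim i)) ℂ,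
        (((∑ i, A i * X i * B i) + C) * M * ((∑ i, A i * X i * B i) + C)ᴴ + D).PosSemidef) ↔
      (fromBlocks (D + C * M * Cᴴ) (C * M * Bbigᴴ)
        (Bbig * M * Cᴴ) (Bbig * M * Bbigᴴ)).PosSemidef := by
  -- shared identities
  have hBB : ∀ y : ((i : Fin k) × Fin (mdim i)) → ℂ,
      Bbigᴴ *ᵥ y = ∑ i, (B i)ᴴ *ᵥ (fun j => y ⟨i, j⟩) := by
    intro y
    funext l
    simp only [mulVec, dotProduct, conjTranspose_apply, Finset.sum_apply]
    rw [← Finset.univ_sigma_univ, Finset.sum_sigma]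
    exact Finset.sum_congr rfl fun i _ => Finset.sum_congr rfl fun j _ => by rw [hBbig]
  have hquadN : ∀ v : (Fin n ⊕ ((i : Fin k) × Fin (mdim i))) → ℂ,
      star v ⬝ᵥ (fromBlocks (D + C*M*Cᴴ) (C*M*Bbigᴴ) (Bbig*M*Cᴴ) (Bbig*M*Bbigᴴ)) *ᵥ v
        = star (v ∘ Sum.inl) ⬝ᵥ D *ᵥ (v ∘ Sum.inl)
          + star (Cᴴ *ᵥ (v ∘ Sum.inl) + Bbigᴴ *ᵥ (v ∘ Sum.inr)) ⬝ᵥ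
              M *ᵥ (Cᴴ *ᵥ (v ∘ Sum.inl) + Bbigᴴ *ᵥ (v ∘ Sum.inr)) := by
    intro v
    set x := v ∘ Sum.inl with hx
    set y := v ∘ Sum.inr with hy
    have hsv : star v = Sum.elim (star x) (star y) := by
      funext j; cases j <;> rfl
    rw [fromBlocks_mulVec, hsv, sumElim_dotProduct_sumElim]
    simp only [add_mulVec, mulVec_add, star_add, dotProduct_add, add_dotProduct]
    rw [← conj_quad M C C x x, ← conj_quad M C Bbig x y, ← conj_quad M Bbig C y x,
        ← conj_quad M Bbig Bbig y y]
    ring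
  have hquadφ : ∀ (X : ∀ i, Matrix (Fin (pdim i)) (Fin (mdim i)) ℂ) (x : Fin n → ℂ),
      star x ⬝ᵥ (((∑ i, A i * X i * B i) + C) * M * ((∑ i, A i * X i * B i) + C)ᴴ + D) *ᵥ x
        = star x ⬝ᵥ D *ᵥ x
          + star ((((∑ i, A i * X i * B i) + C))ᴴ *ᵥ x) ⬝ᵥ
              M *ᵥ ((((∑ i, A i * X i * B i) + C))ᴴ *ᵥ x) := by
    intro X x
    rw [add_mulVec, dotProduct_add, conj_quad M _ _ x x, add_comm]
  have hGH : ∀ (X : ∀ i, Matrix (Fin (pdim i)) (Fin (mdim i)) ℂ) (x : Fin n → ℂ),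
      ((∑ i, A i * X i * B i) + C)ᴴ *ᵥ x
        = Cᴴ *ᵥ x + ∑ i, (B i)ᴴ *ᵥ ((X i)ᴴ *ᵥ ((A i)ᴴ *ᵥ x)) := by
    intro X x
    rw [conjTranspose_add, add_mulVec, add_comm]
    congr 1
    rw [conjTranspose_sum, sum_mulVec]
    refine Finset.sum_congr rfl fun i _ => ?_
    rw [conjTranspose_mul, conjTranspose_mul, mulVec_mulVec, mulVec_mulVec, Matrix.mul_assoc]
  constructor
  · -- hard direction
    intro hφ
    obtain ⟨z, hz⟩ := exists_common A hA
    rw [posSemidef_iff_dotProduct_mulVec]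
    constructor
    · unfold Matrix.IsHermitian
      rw [fromBlocks_conjTranspose]
      simp only [conjTranspose_add, conjTranspose_mul, conjTranspose_conjTranspose, hD.eq, hM.eq,
        Matrix.mul_assoc]
    · intro v
      set x := v ∘ Sum.inl with hxdef
      set y := v ∘ Sum.inr with hydef
      set w := Cᴴ *ᵥ x + Bbigᴴ *ᵥ y with hwdef
      rw [hquadN v]
      set cz := Cᴴ *ᵥ z with hczdef
      set a : ℂ := star x ⬝ᵥ D *ᵥ x + star w ⬝ᵥ M *ᵥ w with hadef
      set b : ℂ := (star x ⬝ᵥ D *ᵥ z + star z ⬝ᵥ D *ᵥ x)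
        + (star w ⬝ᵥ M *ᵥ cz + star cz ⬝ᵥ M *ᵥ w) with hbdef
      set c : ℂ := star z ⬝ᵥ D *ᵥ z + star cz ⬝ᵥ M *ᵥ cz with hcdef
      have haim : a.im = 0 := by
        rw [hadef, Complex.add_im, herm_quad_real hD x, herm_quad_real hM w, add_zero]
      have key : ∀ t : ℝ, (∀ i, (A i)ᴴ *ᵥ (x + (t:ℂ) • z) ≠ 0) →
          0 ≤ a + (t:ℂ) * b + (t:ℂ)^2 * c := by
        intro t ht
        set xt := x + (t:ℂ) • z with hxt
        have hX : ∀ i : Fin k, ∃ Y : Matrix (Fin (mdim i)) (Fin (pdim i)) ℂ,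
            Y *ᵥ ((A i)ᴴ *ᵥ xt) = fun j => y ⟨i, j⟩ :=
          fun i => mulVec_realize (ht i) _
        choose Y hY using hX
        have h0 := (posSemidef_iff_dotProduct_mulVec.mp (hφ (fun i => (Y i)ᴴ))).2 xt
        rw [hquadφ (fun i => (Y i)ᴴ) xt] at h0
        have hu : ((∑ i, A i * (fun i => (Y i)ᴴ) i * B i) + C)ᴴ *ᵥ xt = w + (t:ℂ) • cz := by
          rw [hGH]
          have hsum : (∑ i, (B i)ᴴ *ᵥ (((fun i => (Y i)ᴴ) i)ᴴ *ᵥ ((A i)ᴴ *ᵥ xt)))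
              = Bbigᴴ *ᵥ y := by
            rw [hBB y]
            refine Finset.sum_congr rfl fun i _ => ?_
            rw [conjTranspose_conjTranspose, hY i]
          rw [hsum, hxt, mulVec_add, mulVec_smul, hwdef, hczdef]
          abel
        rw [hu, hxt, bilin D x z x z t, bilin M w cz w cz t] at h0
        calc (0:ℂ) ≤ _ := h0
          _ = a + (t:ℂ) * b + (t:ℂ)^2 * c := by rw [hadef, hbdef, hcdef]; ring
      -- conclude 0 ≤ a
      refine Complex.le_def.mpr ⟨?_, by simp [haim]⟩
      rw [Complex.zero_re]
      by_contra hre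
      push_neg at hre
      have hTfin : (⋃ i, {t : ℝ | (A i)ᴴ *ᵥ (x + (t:ℂ) • z) = 0}).Finite := by
        refine Set.finite_iUnion fun i => Set.Subsingleton.finite ?_
        intro t1 h1 t2 h2
        simp only [Set.mem_setOf_eq, mulVec_add, mulVec_smul] at h1 h2
        have h3 : ((t1:ℝ):ℂ) • ((A i)ᴴ *ᵥ z) = ((t2:ℝ):ℂ) • ((A i)ᴴ *ᵥ z) :=
          add_left_cancel (h1.trans h2.symm)
        have h4 := sub_eq_zero.mpr h3
        rw [← sub_smul] at h4
        rcases smul_eq_zero.mp h4 with h5 | h5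
        · have : ((t1:ℂ)) = ((t2:ℂ)) := sub_eq_zero.mp h5
          exact_mod_cast this
        · exact absurd h5 (hz i)
      set S : ℝ := |b.re| + |c.re| + 1 with hS
      have hSpos : 0 < S := by positivity
      set δ : ℝ := min 1 ((-a.re) / S) with hδdef
      have hδpos : 0 < δ := lt_min one_pos (div_pos (by linarith) hSpos)
      obtain ⟨t, htmem⟩ := ((Set.Ioo_infinite hδpos).diff hTfin).nonempty
      obtain ⟨⟨ht0, htδ⟩, htT⟩ := htmem
      have hgood : ∀ i, (A i)ᴴ *ᵥ (x + (t:ℂ) • z) ≠ 0 := by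
        intro i hbad
        exact htT (Set.mem_iUnion.mpr ⟨i, hbad⟩)
      have h5 := key t hgood
      have h6 : (0:ℝ) ≤ (a + (t:ℂ)*b + (t:ℂ)^2*c).re := by
        have := (Complex.le_def.mp h5).1
        simpa using this
      have h7 : (a + (t:ℂ)*b + (t:ℂ)^2*c).re = a.re + t*b.re + t^2*c.re := by
        simp only [pow_two, Complex.add_re, Complex.mul_re, Complex.mul_im, Complex.ofReal_re,
          Complex.ofReal_im, zero_mul, mul_zero, sub_zero, zero_add, add_zero]
        try ring
      rw [h7] at h6
      have htS : t * S < -a.re := by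
        have h9 : t < (-a.re)/S := lt_of_lt_of_le htδ (min_le_right _ _)
        exact (lt_div_iff₀ hSpos).mp h9
      have ht1 : t ≤ 1 := le_of_lt (lt_of_lt_of_le htδ (min_le_left _ _))
      have hb2 : t * b.re ≤ t * |b.re| :=
        mul_le_mul_of_nonneg_left (le_abs_self _) ht0.le
      have hc2 : t^2 * c.re ≤ t * |c.re| := by
        have hh1 : t^2*c.re ≤ t^2*|c.re| := mul_le_mul_of_nonneg_left (le_abs_self _) (sq_nonneg t)
        have hh2 : t^2*|c.re| ≤ t*|c.re| := by
          have : t^2 ≤ t := by nlinarith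
          exact mul_le_mul_of_nonneg_right this (abs_nonneg _)
        linarith
      have hexp : t * S = t*|b.re| + t*|c.re| + t := by rw [hS]; ring
      linarith
  · -- easy direction
    intro hN X
    rw [posSemidef_iff_dotProduct_mulVec]
    constructor
    · exact (isHermitian_mul_mul_conjTranspose _ hM).add hD
    · intro x
      set y : ((i : Fin k) × Fin (mdim i)) → ℂ :=
        fun j => ((X j.1)ᴴ *ᵥ ((A j.1)ᴴ *ᵥ x)) j.2 with hydef
      have h1 := (posSemidef_iff_dotProduct_mulVec.mp hN).2 (Sum.elim x y)
      rw [hquadN (Sum.elim x y)] at h1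
      have hxl : (Sum.elim x y) ∘ Sum.inl = x := rfl
      have hyr : (Sum.elim x y) ∘ Sum.inr = y := rfl
      rw [hxl, hyr] at h1
      rw [hquadφ X x, hGH X x]
      have hsum : (∑ i, (B i)ᴴ *ᵥ ((X i)ᴴ *ᵥ ((A i)ᴴ *ᵥ x))) = Bbigᴴ *ᵥ y := by
        rw [hBB y]
      rw [hsum]
      exact h1

end Stmt15Aux

theorem stmt15 {k n q : ℕ} (hk : 1 ≤ k) {pdim mdim : Fin k → ℕ}
    (A : ∀ i : Fin k, Matrix (Fin n) (Fin (pdim i)) ℂ)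
    (B : ∀ i : Fin k, Matrix (Fin (mdim i)) (Fin q) ℂ)
    (C : Matrix (Fin n) (Fin q) ℂ) (D : Matrix (Fin n) (Fin n) ℂ)
    (M : Matrix (Fin q) (Fin q) ℂ)
    (hD : D.IsHermitian) (hM : M.IsHermitian)
    (hA : ∀ i, A i ≠ 0)
    (Bbig : Matrix ((i : Fin k) × Fin (mdim i)) (Fin q) ℂ)
    (hBbig : ∀ (j : (i : Fin k) × Fin (mdim i)) (l : Fin q), Bbig j l = B j.1 j.2 l) :
    ((∀ X : ∀ i : Fin k, Matrix (Fin (pdim i)) (Fin (mdim i)) ℂ,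
        (((∑ i, A i * X i * B i) + C) * M * ((∑ i, A i * X i * B i) + C)ᴴ + D).PosSemidef) ↔
      (fromBlocks (D + C * M * Cᴴ) (C * M * Bbigᴴ)
        (Bbig * M * Cᴴ) (Bbig * M * Bbigᴴ)).PosSemidef) ∧
    ((∀ X : ∀ i : Fin k, Matrix (Fin (pdim i)) (Fin (mdim i)) ℂ,
        (-(((∑ i, A i * X i * B i) + C) * M * ((∑ i, A i * X i * B i) + C)ᴴ + D)).PosSemidef) ↔
      (-(fromBlocks (D + C * M * Cᴴ) (C * M * Bbigᴴ)
          (Bbig * M * Cᴴ) (Bbig * M * Bbigᴴ))).PosSemidef) := by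
  constructor
  · exact Stmt15Aux.main A B C D M hD hM hA Bbig hBbig
  · have h := Stmt15Aux.main A B C (-D) (-M) hD.neg hM.neg hA Bbig hBbig
    have e1 : ∀ X : ∀ i : Fin k, Matrix (Fin (pdim i)) (Fin (mdim i)) ℂ,
        ((∑ i, A i * X i * B i) + C) * (-M) * ((∑ i, A i * X i * B i) + C)ᴴ + (-D)
          = -(((∑ i, A i * X i * B i) + C) * M * ((∑ i, A i * X i * B i) + C)ᴴ + D) := by
      intro X
      rw [Matrix.mul_neg, Matrix.neg_mul, neg_add]
    have e2 : fromBlocks (-D + C * (-M) * Cᴴ) (C * (-M) * Bbigᴴ)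
          (Bbig * (-M) * Cᴴ) (Bbig * (-M) * Bbigᴴ)
        = -(fromBlocks (D + C * M * Cᴴ) (C * M * Bbigᴴ)
            (Bbig * M * Cᴴ) (Bbig * M * Bbigᴴ)) := by
      rw [fromBlocks_neg]
      congr 1 <;> simp [Matrix.mul_neg, Matrix.neg_mul, neg_add, add_comm]
    simp only [e1, e2] at h
    exact h
end

section
/- Let k ≥ 1 and for i = 1,…,k let A_i ∈ ℂ^{n×p_i} with A_i ≠ 0 and B_i ∈ ℂ^{m_i×q}; let C ∈ ℂ^{n×q}, Hermitian D ∈ ℂ^{n×n} and Hermitian M ∈ ℂ^{q×q} be given. Define φ(X₁,…,X_k) = (Σ_{i=1}^k A_iX_iB_i + C)M(Σ_{i=1}^k A_iX_iB_i + C)* + D and B = [B₁; … ; B_k]. Then there exist X̂₁,…,X̂_k such that φ(X₁,…,X_k) ⪰ φ(X̂₁,…,X̂_k) for all X₁,…,X_k if and only if BMB* ⪰ 0, ℛ(BMC*) ⊆ ℛ(BMB*), and the linear matrix equation Σ_{i=1}^k A_iY_iB_iMB* = −CMB* has a solution (Y₁,…,Y_k). Moreover, under the conditions BMB* ⪰ 0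 and ℛ(BMC*) ⊆ ℛ(BMB*), a tuple (X̂₁,…,X̂_k) satisfies φ(X₁,…,X_k) ⪰ φ(X̂₁,…,X̂_k) for all X₁,…,X_k if and only if Σ_{i=1}^k A_iX̂_iB_iMB* = −CMB*. -/
open Matrix
open scoped ComplexOrder

lemma avoid_aux {V : Type*} [AddCommGroup V] [Module ℂ V] :
    ∀ (k : ℕ) (p : Fin k → Submodule ℂ V), (∀ i, p i ≠ ⊤) → ∃ u : V, ∀ i, u ∉ p i := by
  intro k
  induction k with
  | zero => exact fun p _ => ⟨0, fun i => i.elim0⟩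
  | succ k ih =>
    intro p hp
    obtain ⟨u, hu⟩ := ih (fun i => p i.castSucc) (fun i => hp _)
    obtain ⟨w, -, hw⟩ := SetLike.exists_of_lt ((hp (Fin.last k)).lt_top : p (Fin.last k) < ⊤)
    have hsub : ∀ i : Fin (k+1), {c : ℂ | u + c • w ∈ p i}.Subsingleton := by
      intro i c₁ h₁ c₂ h₂
      simp only [Set.mem_setOf_eq] at h₁ h₂
      by_contra hne
      have hwm : w ∈ p i := by
        have h3 : (c₁ - c₂) • w ∈ p i := by
          have := sub_mem h₁ h₂
          simpa [sub_smul] using this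
        have := (p i).smul_mem (c₁ - c₂)⁻¹ h3
        rwa [smul_smul, inv_mul_cancel₀ (sub_ne_zero.2 hne), one_smul] at this
      rcases eq_or_ne i (Fin.last k) with rfl | hil
      · exact hw hwm
      · obtain ⟨j, rfl⟩ := Fin.exists_castSucc_eq.2 hil
        have hum : u ∈ p j.castSucc := by
          have := sub_mem h₁ ((p _).smul_mem c₁ hwm)
          simpa using this
        exact hu j hum
    have hfin : (⋃ i : Fin (k+1), {c : ℂ | u + c • w ∈ p i}).Finite :=
      Set.finite_iUnion (fun i => (hsub i).finite)
    obtain ⟨c, hc⟩ := (hfin.infinite_compl).nonempty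
    refine ⟨u + c • w, fun i hmem => ?_⟩
    exact hc (Set.mem_iUnion.2 ⟨i, hmem⟩)

lemma quadform_zero {n : ℕ} (N : Matrix (Fin n) (Fin n) ℂ)
    (h : ∀ v : Fin n → ℂ, star v ⬝ᵥ N.mulVec v = 0) : N = 0 := by
  set e : Fin n → (Fin n → ℂ) := fun i => Pi.single i 1 with he
  have key : ∀ (c : ℂ) (i j : Fin n),
      star (e i + c • e j) ⬝ᵥ N.mulVec (e i + c • e j) =
      N i i + (starRingEnd ℂ c) * N j i + c * N i j + (starRingEnd ℂ c) * c * N j j := by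
    intro c i j
    have h1 : N.mulVec (e i + c • e j) = N.mulVec (e i) + c • N.mulVec (e j) := by
      rw [Matrix.mulVec_add, Matrix.mulVec_smul]
    have hstar : ∀ a : Fin n, star (e a) = e a := by
      intro a; rw [he]; simp only [← Pi.single_star, star_one]
    have h2 : star (e i + c • e j) = e i + (starRingEnd ℂ c) • e j := by
      rw [star_add, star_smul, hstar, hstar, starRingEnd_apply]
    rw [h1, h2]
    rw [add_dotProduct, dotProduct_add, dotProduct_add, smul_dotProduct, smul_dotProduct,
      dotProduct_smul, dotProduct_smul]
    have hmv : ∀ a b : Fin n, e a ⬝ᵥ N.mulVec (e b) = N a b := by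
      intro a b
      simp [he, Matrix.mulVec_single, single_dotProduct]
    rw [hmv, hmv, hmv, hmv]
    simp [smul_eq_mul]
    ring
  have hdiag : ∀ i, N i i = 0 := by
    intro i
    have := h (e i)
    rw [show star (e i) = e i by rw [he]; simp only [← Pi.single_star, star_one]] at this
    simpa [he, Matrix.mulVec_single, single_dotProduct] using this
  ext i j
  rcases eq_or_ne i j with rfl | hij
  · simpa using hdiag i
  · have h1 := h (e i + (1:ℂ) • e j)
    have h2 := h (e i + Complex.I • e j)
    rw [key] at h1 h2
    simp [hdiag, Complex.ext_iff] at h1 h2 ⊢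
    constructor <;> nlinarith [h1.1, h1.2, h2.1, h2.2]

lemma sandwich_zero {nn p m qq : ℕ} (A : Matrix (Fin nn) (Fin p) ℂ)
    (N : Matrix (Fin m) (Fin qq) ℂ) (hA : A ≠ 0)
    (h : ∀ Z : Matrix (Fin p) (Fin m) ℂ, A * Z * N = 0) : N = 0 := by
  have : ∃ r s, A r s ≠ 0 := by
    by_contra hc
    push_neg at hc
    exact hA (by ext r s; exact hc r s)
  obtain ⟨r, s, hrs⟩ := this
  ext t u
  have h0 := congrFun (congrFun (h (Matrix.single s t (1:ℂ))) r) u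
  have hval : (A * Matrix.single s t (1:ℂ) * N) r u = A r s * N t u := by
    rw [Matrix.mul_assoc, Matrix.mul_apply]
    have hx : ∀ x, (Matrix.single s t (1:ℂ) * N) x u = if x = s then N t u else 0 := by
      intro x
      rw [Matrix.mul_apply]
      simp only [Matrix.single, Matrix.of_apply, ite_and, boole_mul]
      rcases eq_or_ne x s with rfl | hxs
      · simp
      · simp [Ne.symm hxs, hxs]
    simp only [hx, mul_ite, mul_zero]
    simp
  rw [hval] at h0
  simpa using (mul_eq_zero.mp (by simpa using h0)).resolve_left hrs

lemma scalar_zero {a b : ℂ}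
    (h : ∀ t : ℂ, 0 ≤ t * a + (starRingEnd ℂ) t * (starRingEnd ℂ) a + t * (starRingEnd ℂ) t * b) :
    a = 0 := by
  by_contra ha
  have hα : 0 < Complex.normSq a := Complex.normSq_pos.2 ha
  set s : ℝ := 1 / (|b.re| + 1) with hs
  have hspos : 0 < s := by positivity
  have hineq := h (-(s:ℂ) * (starRingEnd ℂ) a)
  have hcalc : (-(s:ℂ) * (starRingEnd ℂ) a) * a
      + (starRingEnd ℂ) (-(s:ℂ) * (starRingEnd ℂ) a) * (starRingEnd ℂ) a
      + (-(s:ℂ) * (starRingEnd ℂ) a) * (starRingEnd ℂ) (-(s:ℂ) * (starRingEnd ℂ) a) * b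
      = ((-2*s*Complex.normSq a : ℝ) : ℂ) + ((s^2*Complex.normSq a : ℝ) : ℂ) * b := by
    simp only [_root_.map_mul, map_neg, Complex.conj_conj, Complex.conj_ofReal]
    push_cast
    linear_combination (-2*(s:ℂ) + (s:ℂ)^2*b) * Complex.mul_conj a
  rw [hcalc] at hineq
  have hre := (Complex.le_def.mp hineq).1
  simp only [Complex.add_re, Complex.zero_re, Complex.ofReal_re, Complex.re_ofReal_mul] at hre
  have hbre : s * b.re < 1 := by
    have h1 : s * b.re ≤ s * |b.re| := by
      exact mul_le_mul_of_nonneg_left (le_abs_self b.re) hspos.le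
    have h2 : s * |b.re| < 1 := by
      rw [hs, div_mul_eq_mul_div, one_mul, div_lt_one (by positivity)]
      linarith [abs_nonneg b.re]
    linarith
  nlinarith [mul_pos hspos hα, hre, hbre, mul_pos (mul_pos hspos hspos) hα]

lemma quad_sandwich {a b : Type*} [Fintype a] [Fintype b] [DecidableEq a]
    (K : Matrix a b ℂ) (M : Matrix b b ℂ) (x : a → ℂ) :
    star x ⬝ᵥ (K * M * Kᴴ) *ᵥ x = (star x ᵥ* K) ⬝ᵥ M *ᵥ star (star x ᵥ* K) := by
  rw [dotProduct_mulVec, ← vecMul_vecMul, ← vecMul_vecMul]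
  rw [← dotProduct_mulVec, ← dotProduct_mulVec]
  rw [mulVec_conjTranspose]

lemma quad_conj {a : Type*} [Fintype a] (N : Matrix a a ℂ) (v : a → ℂ) :
    star v ⬝ᵥ Nᴴ *ᵥ v = (starRingEnd ℂ) (star v ⬝ᵥ N *ᵥ v) := by
  rw [mulVec_conjTranspose, starRingEnd_apply]
  rw [star_dotProduct]
  simp only [star_star]
  congr 1
  rw [dotProduct_mulVec]

section Aux
variable {k n q : ℕ} {pdim mdim : Fin k → ℕ}

lemma my_vecMul_sum {m' n' : Type*} [Fintype m'] {ι : Type*} (s : Finset ι)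
    (v : m' → ℂ) (M : ι → Matrix m' n' ℂ) :
    v ᵥ* (∑ i ∈ s, M i) = ∑ i ∈ s, v ᵥ* M i := by
  induction s using Finset.cons_induction with
  | empty => simp
  | cons a s ha ih => simp [Finset.sum_cons, Matrix.vecMul_add, ih]

/-- selection matrix -/
def Pmat (mdim : Fin k → ℕ) (i : Fin k) :
    Matrix (Fin (mdim i)) ((j : Fin k) × Fin (mdim j)) ℂ :=
  Matrix.of fun j s => if s = ⟨i, j⟩ then 1 else 0

lemma Pmat_mul (B : ∀ i : Fin k, Matrix (Fin (mdim i)) (Fin q) ℂ)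
    (Bbig : Matrix ((i : Fin k) × Fin (mdim i)) (Fin q) ℂ)
    (hBbig : ∀ (j : (i : Fin k) × Fin (mdim i)) (l : Fin q), Bbig j l = B j.1 j.2 l)
    (i : Fin k) : Pmat mdim i * Bbig = B i := by
  ext j l
  rw [Matrix.mul_apply]
  rw [Finset.sum_eq_single (⟨i, j⟩ : (j : Fin k) × Fin (mdim j))]
  · simp [Pmat, hBbig]
  · intro b _ hb
    simp [Pmat, hb]
  · intro hmem
    exact absurd (Finset.mem_univ _) hmem

lemma sum_factor (A : ∀ i : Fin k, Matrix (Fin n) (Fin (pdim i)) ℂ)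
    (B : ∀ i : Fin k, Matrix (Fin (mdim i)) (Fin q) ℂ)
    (Bbig : Matrix ((i : Fin k) × Fin (mdim i)) (Fin q) ℂ)
    (hBbig : ∀ (j : (i : Fin k) × Fin (mdim i)) (l : Fin q), Bbig j l = B j.1 j.2 l)
    (X : ∀ i : Fin k, Matrix (Fin (pdim i)) (Fin (mdim i)) ℂ) :
    (∑ i, A i * X i * B i) = (∑ i, A i * X i * Pmat mdim i) * Bbig := by
  rw [Matrix.sum_mul]
  refine Finset.sum_congr rfl fun i _ => ?_
  rw [Matrix.mul_assoc (A i * X i) (Pmat mdim i) Bbig, Pmat_mul B Bbig hBbig i]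

lemma expand_quad (M : Matrix (Fin q) (Fin q) ℂ) (E Δ : Matrix (Fin n) (Fin q) ℂ) :
    (E + Δ) * M * (E + Δ)ᴴ
      = E * M * Eᴴ + E * M * Δᴴ + Δ * M * Eᴴ + Δ * M * Δᴴ := by
  simp only [conjTranspose_add, Matrix.add_mul, Matrix.mul_add]
  abel

lemma cross_flip {M : Matrix (Fin q) (Fin q) ℂ} (hM : M.IsHermitian)
    {E Δ : Matrix (Fin n) (Fin q) ℂ} (h : E * M * Δᴴ = 0) : Δ * M * Eᴴ = 0 := by
  have h2 : (Δ * M * Eᴴ)ᴴ = 0 := by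
    rw [conjTranspose_mul, conjTranspose_mul, conjTranspose_conjTranspose, hM.eq,
      ← Matrix.mul_assoc, h]
  exact conjTranspose_eq_zero.mp h2

end Aux

section Main
variable {k n q : ℕ} {pdim mdim : Fin k → ℕ}

lemma main_suff (A : ∀ i : Fin k, Matrix (Fin n) (Fin (pdim i)) ℂ)
    (B : ∀ i : Fin k, Matrix (Fin (mdim i)) (Fin q) ℂ)
    (C : Matrix (Fin n) (Fin q) ℂ) (D : Matrix (Fin n) (Fin n) ℂ)
    (M : Matrix (Fin q) (Fin q) ℂ) (hM : M.IsHermitian)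
    (Bbig : Matrix ((i : Fin k) × Fin (mdim i)) (Fin q) ℂ)
    (hBbig : ∀ (j : (i : Fin k) × Fin (mdim i)) (l : Fin q), Bbig j l = B j.1 j.2 l)
    (hPSD : (Bbig * M * Bbigᴴ).PosSemidef)
    (Xhat : ∀ i : Fin k, Matrix (Fin (pdim i)) (Fin (mdim i)) ℂ)
    (heq : ((∑ i, A i * Xhat i * B i) + C) * M * Bbigᴴ = 0)
    (X : ∀ i : Fin k, Matrix (Fin (pdim i)) (Fin (mdim i)) ℂ) :
    ((((∑ i, A i * X i * B i) + C) * M * ((∑ i, A i * X i * B i) + C)ᴴ + D) -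
      (((∑ i, A i * Xhat i * B i) + C) * M *
        ((∑ i, A i * Xhat i * B i) + C)ᴴ + D)).PosSemidef := by
  set E : Matrix (Fin n) (Fin q) ℂ := (∑ i, A i * Xhat i * B i) + C with hE
  set H : Matrix (Fin n) ((i : Fin k) × Fin (mdim i)) ℂ :=
    (∑ i, A i * X i * Pmat mdim i) - (∑ i, A i * Xhat i * Pmat mdim i) with hH
  set Δ : Matrix (Fin n) (Fin q) ℂ := (∑ i, A i * X i * B i) - (∑ i, A i * Xhat i * B i) with hΔ
  have hΔH : Δ = H * Bbig := by
    rw [hΔ, hH, Matrix.sub_mul, ← sum_factor A B Bbig hBbig, ← sum_factor A B Bbig hBbig]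
  have hcross1 : E * M * Δᴴ = 0 := by
    rw [hΔH, conjTranspose_mul, ← Matrix.mul_assoc, heq, Matrix.zero_mul]
  have hcross2 : Δ * M * Eᴴ = 0 := cross_flip hM hcross1
  have hsum : (∑ i, A i * X i * B i) + C = E + Δ := by rw [hE, hΔ]; abel
  have hdiff : (((∑ i, A i * X i * B i) + C) * M * ((∑ i, A i * X i * B i) + C)ᴴ + D) -
      (E * M * Eᴴ + D) = H * (Bbig * M * Bbigᴴ) * Hᴴ := by
    rw [hsum, expand_quad, hcross1, hcross2]
    rw [hΔH, conjTranspose_mul]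
    have : H * Bbig * M * (Bbigᴴ * Hᴴ) = H * (Bbig * M * Bbigᴴ) * Hᴴ := by
      simp only [Matrix.mul_assoc]
    rw [this]
    abel
  rw [hdiff]
  exact hPSD.mul_mul_conjTranspose_same H

lemma step_quad (M : Matrix (Fin q) (Fin q) ℂ) (hM : M.IsHermitian)
    (D : Matrix (Fin n) (Fin n) ℂ)
    (E Δ : Matrix (Fin n) (Fin q) ℂ)
    (h : ∀ t : ℂ, ((E + t • Δ) * M * (E + t • Δ)ᴴ + D - (E * M * Eᴴ + D)).PosSemidef) :
    Δ * M * Eᴴ = 0 := by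
  set N : Matrix (Fin n) (Fin n) ℂ := Δ * M * Eᴴ with hN
  have hNH : Nᴴ = E * M * Δᴴ := by
    rw [hN, conjTranspose_mul, conjTranspose_mul, conjTranspose_conjTranspose, hM.eq,
      ← Matrix.mul_assoc]
  apply quadform_zero
  intro v
  apply scalar_zero (b := star v ⬝ᵥ (Δ * M * Δᴴ) *ᵥ v)
  intro t
  have hX := h t
  have h2 : (E + t • Δ) * M * (E + t • Δ)ᴴ + D - (E * M * Eᴴ + D)
      = t • N + (starRingEnd ℂ) t • Nᴴ + (t * (starRingEnd ℂ) t) • (Δ * M * Δᴴ) := by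
    rw [expand_quad]
    simp only [conjTranspose_smul, Matrix.mul_smul, Matrix.smul_mul, smul_smul,
      starRingEnd_apply]
    rw [hN, hNH, mul_comm (star t) t]
    abel
  rw [h2] at hX
  have hq := hX.dotProduct_mulVec_nonneg v
  calc (0:ℂ) ≤ star v ⬝ᵥ (t • N + (starRingEnd ℂ) t • Nᴴ
        + (t * (starRingEnd ℂ) t) • (Δ * M * Δᴴ)) *ᵥ v := hq
  _ = t * (star v ⬝ᵥ N *ᵥ v) + (starRingEnd ℂ) t * (star v ⬝ᵥ Nᴴ *ᵥ v)
        + (t * (starRingEnd ℂ) t) * (star v ⬝ᵥ (Δ * M * Δᴴ) *ᵥ v) := by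
      simp only [Matrix.add_mulVec, Matrix.smul_mulVec, dotProduct_add,
        dotProduct_smul, smul_eq_mul]
  _ = t * (star v ⬝ᵥ N *ᵥ v) + (starRingEnd ℂ) t * (starRingEnd ℂ) (star v ⬝ᵥ N *ᵥ v)
        + t * (starRingEnd ℂ) t * (star v ⬝ᵥ (Δ * M * Δᴴ) *ᵥ v) := by
      rw [quad_conj]

lemma main_nec_eq (A : ∀ i : Fin k, Matrix (Fin n) (Fin (pdim i)) ℂ)
    (B : ∀ i : Fin k, Matrix (Fin (mdim i)) (Fin q) ℂ)
    (C : Matrix (Fin n) (Fin q) ℂ) (D : Matrix (Fin n) (Fin n) ℂ)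
    (M : Matrix (Fin q) (Fin q) ℂ) (hM : M.IsHermitian)
    (hA : ∀ i, A i ≠ 0)
    (Bbig : Matrix ((i : Fin k) × Fin (mdim i)) (Fin q) ℂ)
    (hBbig : ∀ (j : (i : Fin k) × Fin (mdim i)) (l : Fin q), Bbig j l = B j.1 j.2 l)
    (Xhat : ∀ i : Fin k, Matrix (Fin (pdim i)) (Fin (mdim i)) ℂ)
    (h : ∀ X : ∀ i : Fin k, Matrix (Fin (pdim i)) (Fin (mdim i)) ℂ,
      ((((∑ i, A i * X i * B i) + C) * M * ((∑ i, A i * X i * B i) + C)ᴴ + D) -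
        (((∑ i, A i * Xhat i * B i) + C) * M *
          ((∑ i, A i * Xhat i * B i) + C)ᴴ + D)).PosSemidef) :
    ((∑ i, A i * Xhat i * B i) + C) * M * Bbigᴴ = 0 := by
  have claim1 : ∀ Z : ∀ i : Fin k, Matrix (Fin (pdim i)) (Fin (mdim i)) ℂ,
      (∑ i, A i * Z i * B i) * M * ((∑ i, A i * Xhat i * B i) + C)ᴴ = 0 := by
    intro Z
    apply step_quad M hM D
    intro t
    have hX := h (fun i => Xhat i + t • Z i)
    have hS : (∑ i, A i * (Xhat i + t • Z i) * B i)
        = (∑ i, A i * Xhat i * B i) + t • ∑ i, A i * Z i * B i := by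
      rw [Finset.smul_sum, ← Finset.sum_add_distrib]
      refine Finset.sum_congr rfl fun i _ => ?_
      rw [Matrix.mul_add, Matrix.add_mul, Matrix.mul_smul, Matrix.smul_mul]
    rw [hS] at hX
    have h1 : (∑ i, A i * Xhat i * B i) + t • (∑ i, A i * Z i * B i) + C
        = ((∑ i, A i * Xhat i * B i) + C) + t • (∑ i, A i * Z i * B i) := by abel
    rw [h1] at hX
    exact hX
  have claim2 : ∀ i, B i * M * ((∑ i, A i * Xhat i * B i) + C)ᴴ = 0 := by
    intro i
    apply sandwich_zero (A i) _ (hA i)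
    intro W
    have hc := claim1 (Function.update (fun j => (0 : Matrix (Fin (pdim j)) (Fin (mdim j)) ℂ)) i W)
    rw [Finset.sum_eq_single i] at hc
    · rw [Function.update_self] at hc
      simp only [Matrix.mul_assoc] at hc ⊢
      exact hc
    · intro j _ hj
      rw [Function.update_of_ne hj]
      simp
    · intro hmem
      exact absurd (Finset.mem_univ _) hmem
  have claim3 : Bbig * M * ((∑ i, A i * Xhat i * B i) + C)ᴴ = 0 := by
    ext s l
    rcases s with ⟨i, j⟩
    have h0 := congrFun (congrFun (claim2 i) j) l
    rw [Matrix.mul_assoc, Matrix.mul_apply] at h0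
    rw [Matrix.mul_assoc, Matrix.mul_apply]
    simp only [Matrix.zero_apply] at h0 ⊢
    rw [← h0]
    exact Finset.sum_congr rfl fun c _ => by rw [hBbig]
  have hfinal : ((∑ i, A i * Xhat i * B i) + C) * M * Bbigᴴ
      = (Bbig * M * ((∑ i, A i * Xhat i * B i) + C)ᴴ)ᴴ := by
    rw [conjTranspose_mul, conjTranspose_mul, conjTranspose_conjTranspose, hM.eq,
      ← Matrix.mul_assoc]
  rw [hfinal, claim3]
  simp
lemma step_psd (M : Matrix (Fin q) (Fin q) ℂ) (hM : M.IsHermitian)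
    (D : Matrix (Fin n) (Fin n) ℂ) (E Δ : Matrix (Fin n) (Fin q) ℂ)
    (h : ((E + Δ) * M * (E + Δ)ᴴ + D - (E * M * Eᴴ + D)).PosSemidef)
    (hcross : E * M * Δᴴ = 0) : (Δ * M * Δᴴ).PosSemidef := by
  have hc2 : Δ * M * Eᴴ = 0 := cross_flip hM hcross
  have hkey : (E + Δ) * M * (E + Δ)ᴴ + D - (E * M * Eᴴ + D) = Δ * M * Δᴴ := by
    rw [expand_quad, hcross, hc2]
    abel
  rwa [hkey] at h

lemma main_nec_psd (A : ∀ i : Fin k, Matrix (Fin n) (Fin (pdim i)) ℂ)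
    (B : ∀ i : Fin k, Matrix (Fin (mdim i)) (Fin q) ℂ)
    (C : Matrix (Fin n) (Fin q) ℂ) (D : Matrix (Fin n) (Fin n) ℂ)
    (M : Matrix (Fin q) (Fin q) ℂ) (hM : M.IsHermitian)
    (hA : ∀ i, A i ≠ 0)
    (Bbig : Matrix ((i : Fin k) × Fin (mdim i)) (Fin q) ℂ)
    (hBbig : ∀ (j : (i : Fin k) × Fin (mdim i)) (l : Fin q), Bbig j l = B j.1 j.2 l)
    (Xhat : ∀ i : Fin k, Matrix (Fin (pdim i)) (Fin (mdim i)) ℂ)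
    (h : ∀ X : ∀ i : Fin k, Matrix (Fin (pdim i)) (Fin (mdim i)) ℂ,
      ((((∑ i, A i * X i * B i) + C) * M * ((∑ i, A i * X i * B i) + C)ᴴ + D) -
        (((∑ i, A i * Xhat i * B i) + C) * M *
          ((∑ i, A i * Xhat i * B i) + C)ᴴ + D)).PosSemidef)
    (heq : ((∑ i, A i * Xhat i * B i) + C) * M * Bbigᴴ = 0) :
    (Bbig * M * Bbigᴴ).PosSemidef := by
  have hcrossZ : ∀ Z : ∀ i : Fin k, Matrix (Fin (pdim i)) (Fin (mdim i)) ℂ,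
      ((∑ i, A i * Xhat i * B i) + C) * M * (∑ i, A i * Z i * B i)ᴴ = 0 := by
    intro Z
    rw [sum_factor A B Bbig hBbig Z, conjTranspose_mul, ← Matrix.mul_assoc, heq,
      Matrix.zero_mul]
  have hps : ∀ Z : ∀ i : Fin k, Matrix (Fin (pdim i)) (Fin (mdim i)) ℂ,
      ((∑ i, A i * Z i * B i) * M * (∑ i, A i * Z i * B i)ᴴ).PosSemidef := by
    intro Z
    have hX := h (fun i => Xhat i + Z i)
    have hS : ∑ i, A i * (Xhat i + Z i) * B i
        = (∑ i, A i * Xhat i * B i) + ∑ i, A i * Z i * B i := by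
      rw [← Finset.sum_add_distrib]
      exact Finset.sum_congr rfl fun i _ => by rw [Matrix.mul_add, Matrix.add_mul]
    rw [hS] at hX
    have h1 : (∑ i, A i * Xhat i * B i) + (∑ i, A i * Z i * B i) + C
        = ((∑ i, A i * Xhat i * B i) + C) + (∑ i, A i * Z i * B i) := by abel
    rw [h1] at hX
    exact step_psd M hM D _ _ hX (hcrossZ Z)
  refine Matrix.PosSemidef.of_dotProduct_mulVec_nonneg (isHermitian_mul_mul_conjTranspose Bbig hM) fun v => ?_
  have hker : ∀ i, LinearMap.ker ((A i)ᴴ).mulVecLin ≠ ⊤ := by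
    intro i hcon
    apply hA i
    have hz : ∀ u : Fin n → ℂ, (A i)ᴴ *ᵥ u = 0 := by
      intro u
      have hmem : u ∈ LinearMap.ker ((A i)ᴴ).mulVecLin := by rw [hcon]; trivial
      simpa using LinearMap.mem_ker.mp hmem
    ext r s
    have h3 := congrFun (hz (Pi.single r 1)) s
    simp only [Matrix.mulVec_single, mul_one, Pi.zero_apply, Matrix.conjTranspose_apply,
      star_eq_zero, MulOpposite.op_one, one_smul, Matrix.col_apply] at h3
    simp [h3]
  obtain ⟨u, hu⟩ := avoid_aux k (fun i => LinearMap.ker ((A i)ᴴ).mulVecLin) hker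
  have ha0 : ∀ i, (A i)ᴴ *ᵥ u ≠ 0 := by
    intro i hz
    exact hu i (LinearMap.mem_ker.mpr (by simpa using hz))
  have hα0 : ∀ i, star ((A i)ᴴ *ᵥ u) ⬝ᵥ ((A i)ᴴ *ᵥ u) ≠ 0 :=
    fun i h0 => ha0 i (dotProduct_star_self_eq_zero.mp h0)
  set Z : ∀ i : Fin k, Matrix (Fin (pdim i)) (Fin (mdim i)) ℂ :=
    fun i => Matrix.of fun s j =>
      (star ((A i)ᴴ *ᵥ u) ⬝ᵥ ((A i)ᴴ *ᵥ u))⁻¹ * (((A i)ᴴ *ᵥ u) s * star (v ⟨i, j⟩)) with hZ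
  have hrow : star u ᵥ* (∑ i, A i * Z i * B i) = star v ᵥ* Bbig := by
    rw [my_vecMul_sum]
    have hterm : ∀ i, star u ᵥ* (A i * Z i * B i)
        = fun l => ∑ j, star (v ⟨i, j⟩) * B i j l := by
      intro i
      rw [← Matrix.vecMul_vecMul, ← Matrix.vecMul_vecMul]
      have h5 : star u ᵥ* A i = star ((A i)ᴴ *ᵥ u) := by
        rw [Matrix.star_mulVec, conjTranspose_conjTranspose]
      rw [h5]
      have h6 : star ((A i)ᴴ *ᵥ u) ᵥ* Z i = fun j => star (v ⟨i, j⟩) := by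
        ext j
        show (star ((A i)ᴴ *ᵥ u)) ⬝ᵥ (fun s => Z i s j) = star (v ⟨i, j⟩)
        have : (fun s => Z i s j)
            = (star ((A i)ᴴ *ᵥ u) ⬝ᵥ ((A i)ᴴ *ᵥ u))⁻¹ • (star (v ⟨i, j⟩) • ((A i)ᴴ *ᵥ u)) := by
          funext s
          show (star ((A i)ᴴ *ᵥ u) ⬝ᵥ ((A i)ᴴ *ᵥ u))⁻¹
              * (((A i)ᴴ *ᵥ u) s * star (v ⟨i, j⟩)) = _
          simp only [Pi.smul_apply, smul_eq_mul]
          ring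
        rw [this, dotProduct_smul, dotProduct_smul, smul_eq_mul, smul_eq_mul]
        field_simp [hα0 i]
        try ring
      rw [h6]
      funext l
      simp [Matrix.vecMul, dotProduct]
    funext l
    rw [Finset.sum_apply]
    simp only [hterm]
    show _ = (star v) ⬝ᵥ (fun s => Bbig s l)
    rw [dotProduct]
    rw [Finset.sum_sigma']
    refine Finset.sum_congr (by rw [Finset.univ_sigma_univ]) fun x _ => ?_
    rw [hBbig]
    rfl
  have hq := (hps Z).dotProduct_mulVec_nonneg u
  rw [quad_sandwich] at hq
  rw [hrow] at hq
  rw [← quad_sandwich] at hq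
  exact hq

lemma eq_form (A : ∀ i : Fin k, Matrix (Fin n) (Fin (pdim i)) ℂ)
    (B : ∀ i : Fin k, Matrix (Fin (mdim i)) (Fin q) ℂ)
    (C : Matrix (Fin n) (Fin q) ℂ) (M : Matrix (Fin q) (Fin q) ℂ)
    (Bbig : Matrix ((i : Fin k) × Fin (mdim i)) (Fin q) ℂ)
    (Xh : ∀ i : Fin k, Matrix (Fin (pdim i)) (Fin (mdim i)) ℂ) :
    (∑ i, A i * Xh i * (B i * M * Bbigᴴ) = -(C * M * Bbigᴴ)) ↔
      ((∑ i, A i * Xh i * B i) + C) * M * Bbigᴴ = 0 := by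
  have h1 : ∑ i, A i * Xh i * (B i * M * Bbigᴴ) = (∑ i, A i * Xh i * B i) * M * Bbigᴴ := by
    rw [Matrix.sum_mul, Matrix.sum_mul]
    exact Finset.sum_congr rfl fun i _ => by simp only [Matrix.mul_assoc]
  rw [h1]
  rw [Matrix.add_mul, Matrix.add_mul]
  constructor
  · intro h2
    rw [h2]
    exact neg_add_cancel _
  · intro h2
    exact eq_neg_of_add_eq_zero_left h2

lemma range_part (A : ∀ i : Fin k, Matrix (Fin n) (Fin (pdim i)) ℂ)
    (B : ∀ i : Fin k, Matrix (Fin (mdim i)) (Fin q) ℂ)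
    (C : Matrix (Fin n) (Fin q) ℂ) (M : Matrix (Fin q) (Fin q) ℂ) (hM : M.IsHermitian)
    (Bbig : Matrix ((i : Fin k) × Fin (mdim i)) (Fin q) ℂ)
    (hBbig : ∀ (j : (i : Fin k) × Fin (mdim i)) (l : Fin q), Bbig j l = B j.1 j.2 l)
    (Xh : ∀ i : Fin k, Matrix (Fin (pdim i)) (Fin (mdim i)) ℂ)
    (heq : ((∑ i, A i * Xh i * B i) + C) * M * Bbigᴴ = 0) :
    LinearMap.range (Bbig * M * Cᴴ).mulVecLin ≤
      LinearMap.range (Bbig * M * Bbigᴴ).mulVecLin := by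
  have hkey : Bbig * M * Cᴴ
      = (Bbig * M * Bbigᴴ) * (-(∑ i, A i * Xh i * Pmat mdim i)ᴴ) := by
    have h0 : Bbig * M * ((∑ i, A i * Xh i * B i) + C)ᴴ = 0 := by
      have h1 := congrArg conjTranspose heq
      rwa [conjTranspose_mul, conjTranspose_mul, conjTranspose_conjTranspose, hM.eq,
        ← Matrix.mul_assoc, conjTranspose_zero] at h1
    rw [conjTranspose_add, Matrix.mul_add] at h0
    have hC : Bbig * M * Cᴴ = -(Bbig * M * (∑ i, A i * Xh i * B i)ᴴ) :=
      eq_neg_of_add_eq_zero_right h0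
    rw [hC, sum_factor A B Bbig hBbig Xh, conjTranspose_mul, Matrix.mul_neg,
      ← Matrix.mul_assoc]
  rintro x ⟨y, rfl⟩
  refine ⟨(-(∑ i, A i * Xh i * Pmat mdim i)ᴴ) *ᵥ y, ?_⟩
  rw [Matrix.mulVecLin_apply, Matrix.mulVecLin_apply, Matrix.mulVec_mulVec, ← hkey]

end Main

theorem stmt16 {k n q : ℕ} (hk : 1 ≤ k) {pdim mdim : Fin k → ℕ}
    (A : ∀ i : Fin k, Matrix (Fin n) (Fin (pdim i)) ℂ)
    (B : ∀ i : Fin k, Matrix (Fin (mdim i)) (Fin q) ℂ)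
    (C : Matrix (Fin n) (Fin q) ℂ) (D : Matrix (Fin n) (Fin n) ℂ)
    (M : Matrix (Fin q) (Fin q) ℂ)
    (hD : D.IsHermitian) (hM : M.IsHermitian)
    (hA : ∀ i, A i ≠ 0)
    (Bbig : Matrix ((i : Fin k) × Fin (mdim i)) (Fin q) ℂ)
    (hBbig : ∀ (j : (i : Fin k) × Fin (mdim i)) (l : Fin q), Bbig j l = B j.1 j.2 l) :
    ((∃ Xhat : ∀ i : Fin k, Matrix (Fin (pdim i)) (Fin (mdim i)) ℂ,
        ∀ X : ∀ i : Fin k, Matrix (Fin (pdim i)) (Fin (mdim i)) ℂ,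
          ((((∑ i, A i * X i * B i) + C) * M * ((∑ i, A i * X i * B i) + C)ᴴ + D) -
            (((∑ i, A i * Xhat i * B i) + C) * M *
              ((∑ i, A i * Xhat i * B i) + C)ᴴ + D)).PosSemidef) ↔
      (Bbig * M * Bbigᴴ).PosSemidef ∧
      LinearMap.range (Bbig * M * Cᴴ).mulVecLin ≤
        LinearMap.range (Bbig * M * Bbigᴴ).mulVecLin ∧
      (∃ Y : ∀ i : Fin k, Matrix (Fin (pdim i)) (Fin (mdim i)) ℂ,
        ∑ i, A i * Y i * (B i * M * Bbigᴴ) = -(C * M * Bbigᴴ))) ∧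
    ((Bbig * M * Bbigᴴ).PosSemidef →
      LinearMap.range (Bbig * M * Cᴴ).mulVecLin ≤
        LinearMap.range (Bbig * M * Bbigᴴ).mulVecLin →
      ∀ Xhat : ∀ i : Fin k, Matrix (Fin (pdim i)) (Fin (mdim i)) ℂ,
        (∀ X : ∀ i : Fin k, Matrix (Fin (pdim i)) (Fin (mdim i)) ℂ,
            ((((∑ i, A i * X i * B i) + C) * M * ((∑ i, A i * X i * B i) + C)ᴴ + D) -
              (((∑ i, A i * Xhat i * B i) + C) * M *
                ((∑ i, A i * Xhat i * B i) + C)ᴴ + D)).PosSemidef) ↔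
          ∑ i, A i * Xhat i * (B i * M * Bbigᴴ) = -(C * M * Bbigᴴ)) := by
  constructor
  · constructor
    · rintro ⟨Xh, hXh⟩
      have heq := main_nec_eq A B C D M hM hA Bbig hBbig Xh hXh
      exact ⟨main_nec_psd A B C D M hM hA Bbig hBbig Xh hXh heq,
        range_part A B C M hM Bbig hBbig Xh heq,
        ⟨Xh, (eq_form A B C M Bbig Xh).mpr heq⟩⟩
    · rintro ⟨hPSD, -, Y, hY⟩
      exact ⟨Y, fun X => main_suff A B C D M hM Bbig hBbig hPSD Y
        ((eq_form A B C M Bbig Y).mp hY) X⟩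
  · intro hPSD _ Xh
    constructor
    · intro hmin
      exact (eq_form A B C M Bbig Xh).mpr (main_nec_eq A B C D M hM hA Bbig hBbig Xh hmin)
    · intro heqn X
      exact main_suff A B C D M hM Bbig hBbig hPSD Xh ((eq_form A B C M Bbig Xh).mp heqn) X
end

section
/- Let k ≥ 1 and for i = 1,…,k let A_i ∈ ℂ^{n×p_i} with A_i ≠ 0, B_i ∈ ℂ^{m_i×q_i}, C_i ∈ ℂ^{n×q_i} and Hermitian M_i ∈ ℂ^{q_i×q_i}; let D ∈ ℂ^{n×n} be Hermitian. Define ψ(X₁,…,X_k) = Σ_{i=1}^k (A_iX_iB_i + C_i)M_i(A_iX_iB_i + C_i)* + D for X_i ∈ ℂ^{p_i×m_i}. Then there exist X̂₁,…,X̂_k such that ψ(X₁,…,X_k) ⪰ ψ(X̂₁,…,X̂_k) for all X₁,…,X_k if and only if for every i = 1,…,k: B_iM_iB_i* ⪰ 0, ℛ(B_iM_iC_i*) ⊆ ℛ(B_iM_iB_i*), and ℛ(C_iM_iB_i*) ⊆ ℛ(A_i). Moreover, under these conditions, (X̂₁,…,X̂_k) is such a global minimizer if and only if A_iX̂_iB_iM_iB_i*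 = −C_iM_iB_i* for every i = 1,…,k. -/
open Matrix
open scoped ComplexOrder

namespace Stmt17

lemma range_le_iff_exists_mul {a b c : ℕ} (E : Matrix (Fin a) (Fin b) ℂ)
    (A : Matrix (Fin a) (Fin c) ℂ) :
    LinearMap.range E.mulVecLin ≤ LinearMap.range A.mulVecLin ↔ ∃ Y : Matrix (Fin c) (Fin b) ℂ, E = A * Y := by
  constructor
  · intro h
    choose y hy using fun j => h (LinearMap.mem_range_self E.mulVecLin (Pi.single j 1))
    refine ⟨Matrix.of fun r j => y j r, ?_⟩
    ext i j
    have := congrFun (hy j) i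
    simp only [Matrix.mulVecLin_apply, Matrix.mulVec_single, mul_one] at this
    rw [Matrix.mul_apply]
    simp only [Matrix.of_apply]
    have h' : (A *ᵥ y j) i = E i j := by rw [this]; simp
    rw [← h']
    rfl
  · rintro ⟨Y, rfl⟩
    rw [Matrix.mulVecLin_mul]
    exact LinearMap.range_comp_le_range _ _

/-- pseudoinverse-like: any Hermitian matrix has an inner inverse -/
lemma exists_inner_inv {m : ℕ} (N : Matrix (Fin m) (Fin m) ℂ) (hN : N.IsHermitian) :
    ∃ P : Matrix (Fin m) (Fin m) ℂ, N * P * N = N := by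
  classical
  set U : Matrix (Fin m) (Fin m) ℂ := (hN.eigenvectorUnitary : Matrix (Fin m) (Fin m) ℂ) with hUdef
  have hU' : star U * U = 1 := (Matrix.mem_unitaryGroup_iff').mp hN.eigenvectorUnitary.2
  set d : Fin m → ℂ := RCLike.ofReal ∘ hN.eigenvalues with hd
  have hspec : N = U * Matrix.diagonal d * star U := hN.spectral_theorem
  refine ⟨U * Matrix.diagonal (fun i => (d i)⁻¹) * star U, ?_⟩
  have h1 : ∀ (f : Fin m → ℂ), star U * (U * Matrix.diagonal f * star U)
      = Matrix.diagonal f * star U := by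
    intro f
    rw [← Matrix.mul_assoc, ← Matrix.mul_assoc, hU', Matrix.one_mul]
  have key : ∀ (e f : Fin m → ℂ),
      (U * Matrix.diagonal e * star U) * (U * Matrix.diagonal f * star U)
        = U * (Matrix.diagonal e * Matrix.diagonal f) * star U := by
    intro e f
    rw [Matrix.mul_assoc (U * Matrix.diagonal e), h1, ← Matrix.mul_assoc,
      Matrix.mul_assoc U]
  rw [hspec, key, Matrix.diagonal_mul_diagonal, key, Matrix.diagonal_mul_diagonal]
  congr 2
  ext i
  rcases eq_or_ne (d i) 0 with h | h
  · simp [h]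
  · field_simp




lemma conj_form {n m : ℕ} (G : Matrix (Fin n) (Fin m) ℂ) (N : Matrix (Fin m) (Fin m) ℂ)
    (x : Fin n → ℂ) :
    star x ⬝ᵥ ((G * N * Gᴴ) *ᵥ x) = star (Gᴴ *ᵥ x) ⬝ᵥ (N *ᵥ (Gᴴ *ᵥ x)) := by
  rw [← Matrix.mulVec_mulVec, ← Matrix.mulVec_mulVec, Matrix.dotProduct_mulVec (star x) G,
    Matrix.star_mulVec, Matrix.conjTranspose_conjTranspose, Matrix.dotProduct_mulVec]

lemma eq_zero_of_form_eq_zero {n : ℕ} (L : Matrix (Fin n) (Fin n) ℂ) (hL : L.IsHermitian)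
    (h : ∀ x : Fin n → ℂ, star x ⬝ᵥ (L *ᵥ x) = 0) : L = 0 := by
  have hpsd : L.PosSemidef := Matrix.PosSemidef.of_dotProduct_mulVec_nonneg hL (fun x => (h x).ge)
  have hz : ∀ x, L *ᵥ x = 0 := fun x => (hpsd.dotProduct_mulVec_zero_iff x).mp (h x)
  ext i j
  have := congrFun (hz (Pi.single j 1)) i
  simpa using this

variable {n p m q : ℕ} {A : Matrix (Fin n) (Fin p) ℂ} {B : Matrix (Fin m) (Fin q) ℂ}
  {C : Matrix (Fin n) (Fin q) ℂ} {M : Matrix (Fin q) (Fin q) ℂ}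

lemma key_identity (hM : M.IsHermitian) (Xh Z : Matrix (Fin p) (Fin m) ℂ) :
    (A * (Xh + Z) * B + C) * M * (A * (Xh + Z) * B + C)ᴴ
      - (A * Xh * B + C) * M * (A * Xh * B + C)ᴴ
    = A * Z * ((A * Xh * B + C) * M * Bᴴ)ᴴ + ((A * Xh * B + C) * M * Bᴴ) * Zᴴ * Aᴴ
        + (A * Z) * (B * M * Bᴴ) * (A * Z)ᴴ := by
  have hexp : A * (Xh + Z) * B + C = (A * Xh * B + C) + A * Z * B := by
    rw [Matrix.mul_add, Matrix.add_mul]; abel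
  rw [hexp]
  simp only [Matrix.add_mul, Matrix.mul_add, Matrix.conjTranspose_add, Matrix.conjTranspose_mul,
    Matrix.conjTranspose_conjTranspose, hM.eq, Matrix.mul_assoc]
  abel

lemma block_necessity (hM : M.IsHermitian) (hA : A ≠ 0) (Xh : Matrix (Fin p) (Fin m) ℂ)
    (hmin : ∀ X : Matrix (Fin p) (Fin m) ℂ,
      ((A * X * B + C) * M * (A * X * B + C)ᴴ
        - (A * Xh * B + C) * M * (A * Xh * B + C)ᴴ).PosSemidef) :
    (A * Xh * B + C) * M * Bᴴ = 0 ∧ (B * M * Bᴴ).PosSemidef := by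
  classical
  set K : Matrix (Fin n) (Fin m) ℂ := (A * Xh * B + C) * M * Bᴴ with hK
  set N : Matrix (Fin m) (Fin m) ℂ := B * M * Bᴴ with hN
  have hNh : N.IsHermitian := Matrix.isHermitian_mul_mul_conjTranspose _ hM
  -- H Z is PSD for every Z
  have hH : ∀ Z : Matrix (Fin p) (Fin m) ℂ,
      (A * Z * Kᴴ + K * Zᴴ * Aᴴ + (A * Z) * N * (A * Z)ᴴ).PosSemidef := by
    intro Z
    have := hmin (Xh + Z)
    rwa [key_identity hM Xh Z] at this
  -- step a : P Z is PSD
  have hP : ∀ Z : Matrix (Fin p) (Fin m) ℂ, ((A * Z) * N * (A * Z)ᴴ).PosSemidef := by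
    intro Z
    refine Matrix.PosSemidef.of_dotProduct_mulVec_nonneg (Matrix.isHermitian_mul_mul_conjTranspose _ hNh) (fun x => ?_)
    have h1 := (hH Z).dotProduct_mulVec_nonneg x
    have h2 := (hH (-Z)).dotProduct_mulVec_nonneg x
    have hneg : A * (-Z) * Kᴴ + K * (-Z)ᴴ * Aᴴ + (A * (-Z)) * N * (A * (-Z))ᴴ
        = -(A * Z * Kᴴ) + -(K * Zᴴ * Aᴴ) + (A * Z) * N * (A * Z)ᴴ := by
      simp [Matrix.mul_neg, Matrix.neg_mul, Matrix.conjTranspose_neg]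
    rw [hneg] at h2
    set s := star x ⬝ᵥ (((A * Z) * N * (A * Z)ᴴ) *ᵥ x) with hs
    have hsum : (0:ℂ) ≤ s + s := by
      have h3 := add_nonneg h1 h2
      have h4 : star x ⬝ᵥ ((A * Z * Kᴴ + K * Zᴴ * Aᴴ + A * Z * N * (A * Z)ᴴ) *ᵥ x)
          + star x ⬝ᵥ ((-(A * Z * Kᴴ) + -(K * Zᴴ * Aᴴ) + A * Z * N * (A * Z)ᴴ) *ᵥ x)
          = s + s := by
        simp only [Matrix.add_mulVec, Matrix.neg_mulVec, dotProduct_add, dotProduct_neg, hs]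
        ring
      rwa [h4] at h3
    rw [Complex.nonneg_iff] at hsum ⊢
    constructor
    · have := hsum.1; simp only [Complex.add_re] at this; linarith
    · have := hsum.2; simp only [Complex.add_im] at this; linarith
  -- step b : N is PSD
  have hNpsd : N.PosSemidef := by
    refine Matrix.PosSemidef.of_dotProduct_mulVec_nonneg hNh (fun w => ?_)
    obtain ⟨a, r, har⟩ : ∃ a r, A a r ≠ 0 := by
      by_contra hcon
      push_neg at hcon
      exact hA (by ext i j; simpa using hcon i j)
    set Z : Matrix (Fin p) (Fin m) ℂ :=
      Matrix.of fun r' j => (if r' = r then (1:ℂ) else 0) * star (w j) with hZ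
    set x : Fin n → ℂ := fun i => A i r with hx
    have hAZ : ∀ i j, (A * Z) i j = A i r * star (w j) := by
      intro i j
      rw [Matrix.mul_apply, Finset.sum_eq_single r]
      · simp [hZ]
      · intro b _ hb; simp [hZ, hb]
      · simp
    set t : ℝ := ∑ i, Complex.normSq (A i r) with ht
    have hy : (A * Z)ᴴ *ᵥ x = (t : ℂ) • w := by
      ext j
      simp only [Matrix.mulVec, dotProduct, Matrix.conjTranspose_apply, hAZ, hx, Pi.smul_apply,
        smul_eq_mul, ht]
      push_cast
      rw [Finset.sum_mul]
      refine Finset.sum_congr rfl fun i _ => ?_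
      simp only [Complex.normSq_eq_conj_mul_self, Complex.star_def, star_mul', star_star,
        RingHomCompTriple.comp_apply, RingHom.id_apply]
      ring
    have hform := (hP Z).dotProduct_mulVec_nonneg x
    rw [conj_form (A * Z) N x, hy] at hform
    simp only [star_smul, smul_dotProduct, Matrix.mulVec_smul, dotProduct_smul, smul_eq_mul,
      Complex.star_def, Complex.conj_ofReal] at hform
    have ht0 : 0 < t := by
      rw [ht]
      refine Finset.sum_pos' (fun i _ => Complex.normSq_nonneg _) ⟨a, Finset.mem_univ a, ?_⟩
      exact Complex.normSq_pos.mpr har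
    have htne : t ≠ 0 := ne_of_gt ht0
    rw [Complex.nonneg_iff] at hform ⊢
    obtain ⟨hre, him⟩ := hform
    rw [Complex.re_ofReal_mul, Complex.re_ofReal_mul] at hre
    rw [Complex.im_ofReal_mul, Complex.im_ofReal_mul] at him
    constructor
    · nlinarith [mul_pos ht0 ht0]
    · rcases mul_eq_zero.mp him.symm with h | h
      · exact absurd h htne
      · rcases mul_eq_zero.mp h with h' | h'
        · exact absurd h' htne
        · exact h'.symm
  -- pz components
  -- step c : the linear part vanishes identically
  have hL : ∀ Z : Matrix (Fin p) (Fin m) ℂ, A * Z * Kᴴ + K * Zᴴ * Aᴴ = 0 := by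
    intro Z
    have hherm : (A * Z * Kᴴ + K * Zᴴ * Aᴴ).IsHermitian := by
      simp only [Matrix.IsHermitian, Matrix.conjTranspose_add, Matrix.conjTranspose_mul,
        Matrix.conjTranspose_conjTranspose, Matrix.mul_assoc]
      abel
    apply eq_zero_of_form_eq_zero _ hherm
    intro x
    set l := star x ⬝ᵥ ((A * Z * Kᴴ + K * Zᴴ * Aᴴ) *ᵥ x) with hl
    set pz := star x ⬝ᵥ ((A * Z * N * (A * Z)ᴴ) *ᵥ x) with hpzdef
    have hpz := (hP Z).dotProduct_mulVec_nonneg x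
    have hscale : ∀ t : ℝ, (0:ℂ) ≤ ((t:ℂ) * (t:ℂ)) * pz + (t:ℂ) * l := by
      intro t
      have h := (hH ((t:ℂ) • Z)).dotProduct_mulVec_nonneg x
      have e1 : A * ((t:ℂ) • Z) * Kᴴ = (t:ℂ) • (A * Z * Kᴴ) := by
        rw [Matrix.mul_smul, Matrix.smul_mul]
      have e2 : K * ((t:ℂ) • Z)ᴴ * Aᴴ = (t:ℂ) • (K * Zᴴ * Aᴴ) := by
        rw [Matrix.conjTranspose_smul, Complex.star_def, Complex.conj_ofReal,
          Matrix.mul_smul, Matrix.smul_mul]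
      have e3 : A * ((t:ℂ) • Z) * N * (A * ((t:ℂ) • Z))ᴴ
          = ((t:ℂ) * (t:ℂ)) • (A * Z * N * (A * Z)ᴴ) := by
        rw [Matrix.mul_smul, Matrix.smul_mul, Matrix.smul_mul, Matrix.conjTranspose_smul,
          Complex.star_def, Complex.conj_ofReal, Matrix.mul_smul, smul_smul]
      rw [e1, e2, e3] at h
      have e4 : star x ⬝ᵥ ((((t:ℂ) * (t:ℂ)) • (A * Z * N * (A * Z)ᴴ)
            + ((t:ℂ) • (A * Z * Kᴴ) + (t:ℂ) • (K * Zᴴ * Aᴴ))) *ᵥ x)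
          = ((t:ℂ) * (t:ℂ)) * pz + (t:ℂ) * l := by
        simp only [Matrix.add_mulVec, Matrix.smul_mulVec, dotProduct_add,
          dotProduct_smul, smul_eq_mul, hl, hpzdef, Matrix.add_mulVec, dotProduct_add]
        ring
      rw [← e4]
      convert h using 3
      · rfl
      · rfl
      · abel
    have hpzim : pz.im = 0 := ((Complex.nonneg_iff.mp hpz).2).symm
    have hcomp : ∀ t : ℝ, 0 ≤ t * t * pz.re + t * l.re ∧ t * t * pz.im + t * l.im = 0 := by
      intro t
      have h := Complex.nonneg_iff.mp (hscale t)
      constructor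
      · have := h.1
        simpa [Complex.add_re, Complex.mul_re, Complex.ofReal_re, Complex.ofReal_im] using this
      · have := h.2
        simp only [Complex.add_im, Complex.mul_im, Complex.mul_re, Complex.ofReal_re,
          Complex.ofReal_im] at this
        nlinarith [this]
    have hlim : l.im = 0 := by
      have := (hcomp 1).2
      simp [hpzim] at this
      linarith [this]
    have hlre : l.re = 0 := by
      have hpzre : 0 ≤ pz.re := (Complex.nonneg_iff.mp hpz).1
      have hpos : 0 < pz.re + 1 := by linarith
      set u : ℝ := -(l.re) / (pz.re + 1) with hudef
      have hinst := (hcomp u).1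
      have hu : u * (pz.re + 1) = -(l.re) := div_mul_cancel₀ _ (ne_of_gt hpos)
      have h8 : u * (u * (pz.re + 1)) = u * (-l.re) := by rw [hu]
      have h9 : 0 ≤ -(u * u) := by nlinarith [hinst, h8]
      have h10 : u * u = 0 := le_antisymm (by linarith) (mul_self_nonneg u)
      have h11 : u = 0 := mul_self_eq_zero.mp h10
      rw [h11, zero_mul] at hu
      linarith
    exact Complex.ext hlre hlim
  -- deduce A * Z * Kᴴ = 0 for all Z
  have hZK : ∀ Z : Matrix (Fin p) (Fin m) ℂ, A * Z * Kᴴ = 0 := by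
    intro Z
    have h1 := hL Z
    have h2 := hL (Complex.I • Z)
    rw [Matrix.mul_smul, Matrix.smul_mul, Matrix.conjTranspose_smul, Complex.star_def,
      Complex.conj_I, Matrix.mul_smul, Matrix.smul_mul] at h2
    -- h2 : I • (A*Z*Kᴴ) + (-I) • (K*Zᴴ*Aᴴ) = 0
    have h3 : K * Zᴴ * Aᴴ = -(A * Z * Kᴴ) := by
      have h1' : K * Zᴴ * Aᴴ + A * Z * Kᴴ = 0 := by rw [add_comm]; exact h1
      exact eq_neg_of_add_eq_zero_left h1'
    rw [h3, smul_neg, neg_smul, neg_neg] at h2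
    have h4 : (Complex.I + Complex.I) • (A * Z * Kᴴ) = 0 := by
      rw [add_smul]; exact h2
    have h5 : (Complex.I + Complex.I) ≠ 0 := by
      simp [Complex.ext_iff]
    exact (smul_eq_zero.mp h4).resolve_left h5
  -- deduce K = 0
  have hK0 : K = 0 := by
    obtain ⟨a, r, har⟩ : ∃ a r, A a r ≠ 0 := by
      by_contra hcon
      push_neg at hcon
      exact hA (by ext i j; simpa using hcon i j)
    ext d c
    set Z : Matrix (Fin p) (Fin m) ℂ :=
      Matrix.of fun r' c' => (if r' = r then (1:ℂ) else 0) * (if c' = c then (1:ℂ) else 0)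
      with hZ
    have hAZ : ∀ i j, (A * Z) i j = A i r * (if j = c then (1:ℂ) else 0) := by
      intro i j
      rw [Matrix.mul_apply, Finset.sum_eq_single r]
      · simp [hZ]
      · intro b _ hb; simp [hZ, hb]
      · simp
    have hent : (A * Z * Kᴴ) a d = A a r * star (K d c) := by
      rw [Matrix.mul_apply, Finset.sum_eq_single c]
      · simp [hAZ, Matrix.conjTranspose_apply]
      · intro b _ hb; simp [hAZ, hb]
      · simp
    have := congrFun (congrFun (hZK Z) a) d
    rw [hent] at this
    simp only [Matrix.zero_apply] at this
    rcases mul_eq_zero.mp this with h | h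
    · exact absurd h har
    · simpa using h
  exact ⟨hK0, hNpsd⟩

lemma exists_solve (hM : M.IsHermitian)
    (h2 : LinearMap.range (B * M * Cᴴ).mulVecLin ≤ LinearMap.range (B * M * Bᴴ).mulVecLin)
    (h3 : LinearMap.range (C * M * Bᴴ).mulVecLin ≤ LinearMap.range A.mulVecLin) :
    ∃ X : Matrix (Fin p) (Fin m) ℂ, A * X * (B * M * Bᴴ) = -(C * M * Bᴴ) := by
  set N := B * M * Bᴴ with hNdef
  have hNh : N.IsHermitian := Matrix.isHermitian_mul_mul_conjTranspose _ hM
  obtain ⟨P, hP⟩ := exists_inner_inv N hNh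
  obtain ⟨Y, hY⟩ := (range_le_iff_exists_mul _ _).mp h3
  obtain ⟨V, hV⟩ := (range_le_iff_exists_mul _ _).mp h2
  -- B*M*Cᴴ = N * V, so C*M*Bᴴ = (B*M*Cᴴ)ᴴ = Vᴴ * N
  have hBMC : (B * M * Cᴴ)ᴴ = C * M * Bᴴ := by
    simp only [Matrix.conjTranspose_mul, Matrix.conjTranspose_conjTranspose, hM.eq,
      Matrix.mul_assoc]
  have hE : C * M * Bᴴ = Vᴴ * N := by
    rw [← hBMC, hV, Matrix.conjTranspose_mul, hNh.eq]
  refine ⟨-(Y * P), ?_⟩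
  have h4 : A * -(Y * P) * N = -(A * Y * P * N) := by
    rw [Matrix.mul_neg, Matrix.neg_mul, Matrix.mul_assoc A Y P]
  rw [h4, ← hY, hE, Matrix.mul_assoc Vᴴ N P, Matrix.mul_assoc Vᴴ (N * P) N, hP]



lemma block_diff (hM : M.IsHermitian) {Xh : Matrix (Fin p) (Fin m) ℂ}
    (hK0 : (A * Xh * B + C) * M * Bᴴ = 0) (X : Matrix (Fin p) (Fin m) ℂ) :
    (A * X * B + C) * M * (A * X * B + C)ᴴ - (A * Xh * B + C) * M * (A * Xh * B + C)ᴴ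
      = (A * (X - Xh)) * (B * M * Bᴴ) * (A * (X - Xh))ᴴ := by
  have h := key_identity (A := A) (B := B) (C := C) hM Xh (X - Xh)
  rw [add_sub_cancel] at h
  rw [h, hK0]
  simp

lemma K_split (Xh : Matrix (Fin p) (Fin m) ℂ) :
    (A * Xh * B + C) * M * Bᴴ = A * Xh * (B * M * Bᴴ) + C * M * Bᴴ := by
  simp only [Matrix.add_mul, Matrix.mul_assoc]

lemma K_zero_iff (Xh : Matrix (Fin p) (Fin m) ℂ) :
    (A * Xh * B + C) * M * Bᴴ = 0 ↔ A * Xh * (B * M * Bᴴ) = -(C * M * Bᴴ) := by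
  rw [K_split, add_eq_zero_iff_eq_neg]

lemma posSemidef_sum {ι : Type*} {nn : ℕ} (s : Finset ι)
    (f : ι → Matrix (Fin nn) (Fin nn) ℂ) (h : ∀ i ∈ s, (f i).PosSemidef) :
    (∑ i ∈ s, f i).PosSemidef := by
  classical
  induction s using Finset.induction with
  | empty => simpa using Matrix.PosSemidef.zero
  | @insert a s ha ih =>
    rw [Finset.sum_insert ha]
    exact (h a (Finset.mem_insert_self _ _)).add
      (ih fun i hi => h i (Finset.mem_insert_of_mem hi))

end Stmt17

theorem stmt17 {k n : ℕ} (hk : 1 ≤ k) {pdim mdim qdim : Fin k → ℕ}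
    (A : ∀ i : Fin k, Matrix (Fin n) (Fin (pdim i)) ℂ)
    (B : ∀ i : Fin k, Matrix (Fin (mdim i)) (Fin (qdim i)) ℂ)
    (C : ∀ i : Fin k, Matrix (Fin n) (Fin (qdim i)) ℂ)
    (M : ∀ i : Fin k, Matrix (Fin (qdim i)) (Fin (qdim i)) ℂ)
    (D : Matrix (Fin n) (Fin n) ℂ)
    (hD : D.IsHermitian) (hM : ∀ i, (M i).IsHermitian)
    (hA : ∀ i, A i ≠ 0)
    (ψ : (∀ i : Fin k, Matrix (Fin (pdim i)) (Fin (mdim i)) ℂ) →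
      Matrix (Fin n) (Fin n) ℂ)
    (hψ : ∀ X, ψ X =
      (∑ i, (A i * X i * B i + C i) * M i * (A i * X i * B i + C i)ᴴ) + D) :
    ((∃ Xhat : ∀ i : Fin k, Matrix (Fin (pdim i)) (Fin (mdim i)) ℂ,
        ∀ X : ∀ i : Fin k, Matrix (Fin (pdim i)) (Fin (mdim i)) ℂ,
          (ψ X - ψ Xhat).PosSemidef) ↔
      ∀ i : Fin k,
        (B i * M i * (B i)ᴴ).PosSemidef ∧
        LinearMap.range (B i * M i * (C i)ᴴ).mulVecLin ≤
          LinearMap.range (B i * M i * (B i)ᴴ).mulVecLin ∧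
        LinearMap.range (C i * M i * (B i)ᴴ).mulVecLin ≤
          LinearMap.range (A i).mulVecLin) ∧
    ((∀ i : Fin k,
        (B i * M i * (B i)ᴴ).PosSemidef ∧
        LinearMap.range (B i * M i * (C i)ᴴ).mulVecLin ≤
          LinearMap.range (B i * M i * (B i)ᴴ).mulVecLin ∧
        LinearMap.range (C i * M i * (B i)ᴴ).mulVecLin ≤
          LinearMap.range (A i).mulVecLin) →
      ∀ Xhat : ∀ i : Fin k, Matrix (Fin (pdim i)) (Fin (mdim i)) ℂ,
        (∀ X : ∀ i : Fin k, Matrix (Fin (pdim i)) (Fin (mdim i)) ℂ,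
            (ψ X - ψ Xhat).PosSemidef) ↔
          ∀ i : Fin k,
            A i * Xhat i * (B i * M i * (B i)ᴴ) = -(C i * M i * (B i)ᴴ)) := by
  classical
  -- difference of ψ values
  have hdiff : ∀ X Xh : (∀ i : Fin k, Matrix (Fin (pdim i)) (Fin (mdim i)) ℂ),
      ψ X - ψ Xh = ∑ i, ((A i * X i * B i + C i) * M i * (A i * X i * B i + C i)ᴴ
        - (A i * Xh i * B i + C i) * M i * (A i * Xh i * B i + C i)ᴴ) := by
    intro X Xh
    rw [hψ X, hψ Xh, Finset.sum_sub_distrib]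
    abel
  -- a global minimizer is a blockwise minimizer
  have hblock : ∀ Xh : (∀ i : Fin k, Matrix (Fin (pdim i)) (Fin (mdim i)) ℂ),
      (∀ X, (ψ X - ψ Xh).PosSemidef) → ∀ i, ∀ Xi : Matrix (Fin (pdim i)) (Fin (mdim i)) ℂ,
        ((A i * Xi * B i + C i) * M i * (A i * Xi * B i + C i)ᴴ
          - (A i * Xh i * B i + C i) * M i * (A i * Xh i * B i + C i)ᴴ).PosSemidef := by
    intro Xh hmin i Xi
    have h := hmin (Function.update Xh i Xi)
    rw [hdiff, Finset.sum_eq_single i] at h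
    · rwa [Function.update_self] at h
    · intro j _ hj
      rw [Function.update_of_ne hj, sub_self]
    · intro hi
      exact absurd (Finset.mem_univ i) hi
  -- sufficiency core
  have suff : ∀ Xh : (∀ i : Fin k, Matrix (Fin (pdim i)) (Fin (mdim i)) ℂ),
      (∀ i, (B i * M i * (B i)ᴴ).PosSemidef) →
      (∀ i, A i * Xh i * (B i * M i * (B i)ᴴ) = -(C i * M i * (B i)ᴴ)) →
      ∀ X, (ψ X - ψ Xh).PosSemidef := by
    intro Xh hpsd heq X
    rw [hdiff]
    apply Stmt17.posSemidef_sum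
    intro i _
    rw [Stmt17.block_diff (hM i) ((Stmt17.K_zero_iff (Xh i)).mpr (heq i))]
    exact (hpsd i).mul_mul_conjTranspose_same _
  -- necessity core
  have nec : ∀ Xh : (∀ i : Fin k, Matrix (Fin (pdim i)) (Fin (mdim i)) ℂ),
      (∀ X, (ψ X - ψ Xh).PosSemidef) → ∀ i,
        (A i * Xh i * B i + C i) * M i * (B i)ᴴ = 0 ∧ (B i * M i * (B i)ᴴ).PosSemidef :=
    fun Xh hmin i =>
      Stmt17.block_necessity (hM i) (hA i) (Xh i) (fun Xi => hblock Xh hmin i Xi)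
  refine ⟨⟨?_, ?_⟩, ?_⟩
  · rintro ⟨Xh, hmin⟩ i
    obtain ⟨hK0, hN⟩ := nec Xh hmin i
    have heq := (Stmt17.K_zero_iff (Xh i)).mp hK0
    have hCMB : C i * M i * (B i)ᴴ = A i * (-(Xh i * (B i * M i * (B i)ᴴ))) := by
      rw [Matrix.mul_neg, ← Matrix.mul_assoc, heq, neg_neg]
    refine ⟨hN, ?_, ?_⟩
    · have hBMC : B i * M i * (C i)ᴴ = (B i * M i * (B i)ᴴ) * (-((Xh i)ᴴ * (A i)ᴴ)) := by
        have h1 : (C i * M i * (B i)ᴴ)ᴴ = B i * M i * (C i)ᴴ := by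
          simp only [Matrix.conjTranspose_mul, Matrix.conjTranspose_conjTranspose,
            (hM i).eq, Matrix.mul_assoc]
        rw [← h1, hCMB]
        simp only [Matrix.conjTranspose_neg, Matrix.conjTranspose_mul,
          Matrix.conjTranspose_conjTranspose, (hM i).eq, Matrix.mul_neg, Matrix.neg_mul,
          Matrix.mul_assoc]
      exact (Stmt17.range_le_iff_exists_mul _ _).mpr ⟨_, hBMC⟩
    · exact (Stmt17.range_le_iff_exists_mul _ _).mpr ⟨_, hCMB⟩
  · intro hcond
    choose Xh hXh using fun i => Stmt17.exists_solve (hM i) (hcond i).2.1 (hcond i).2.2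
    exact ⟨Xh, suff Xh (fun i => (hcond i).1) hXh⟩
  · intro hcond Xh
    constructor
    · intro hmin i
      exact (Stmt17.K_zero_iff (Xh i)).mp (nec Xh hmin i).1
    · intro heq
      exact suff Xh (fun i => (hcond i).1) heq
end

section
/- Let A ∈ ℂ^{m×n} with A ≠ 0, B ∈ ℂ^{p×q} and C ∈ ℂ^{m×q} be given. Then there exists an X̂ ∈ ℂ^{n×p} such that (C − AXB)(C − AXB)* ⪰ (C − AX̂B)(C − AX̂B)* holds for all X ∈ ℂ^{n×p} if and only if ℛ(CB*) ⊆ ℛ(A). -/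
open Matrix
open scoped ComplexOrder

/-- A matrix all of whose `mulVec`s vanish is zero. -/
lemma aux_eq_zero_of_mulVec {m n : ℕ} (M : Matrix (Fin m) (Fin n) ℂ)
    (h : ∀ v, M *ᵥ v = 0) : M = 0 := by
  ext i j
  have := congrFun (h (Pi.single j 1)) i
  simpa [mulVec_single] using this

/-- Columnwise solvability of `A * N = M` from a range inclusion. -/
lemma aux_exists_mul_eq {m n k : ℕ} (A : Matrix (Fin m) (Fin n) ℂ)
    (M : Matrix (Fin m) (Fin k) ℂ)
    (h : LinearMap.range M.mulVecLin ≤ LinearMap.range A.mulVecLin) :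
    ∃ N : Matrix (Fin n) (Fin k) ℂ, A * N = M := by
  have hc : ∀ j : Fin k, ∃ v : Fin n → ℂ, A *ᵥ v = fun i => M i j := by
    intro j
    have hmem : (fun i => M i j) ∈ LinearMap.range M.mulVecLin := by
      refine ⟨Pi.single j 1, ?_⟩
      simp [mulVecLin_apply, mulVec_single]
      rfl
    exact h hmem
  choose N hN using hc
  refine ⟨(Matrix.of fun i j => N j i), ?_⟩
  ext i j
  have := congrFun (hN j) i
  simpa [Matrix.mul_apply, mulVec, dotProduct] using this

lemma aux_range_mul_le {m n k : ℕ} (A : Matrix (Fin m) (Fin n) ℂ)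
    (N : Matrix (Fin n) (Fin k) ℂ) :
    LinearMap.range (A * N).mulVecLin ≤ LinearMap.range A.mulVecLin := by
  rw [Matrix.mulVecLin_mul]
  exact LinearMap.range_comp_le_range _ _

lemma aux_range_self_mul_conjTranspose {m n : ℕ} (B : Matrix (Fin m) (Fin n) ℂ) :
    LinearMap.range (B * Bᴴ).mulVecLin = LinearMap.range B.mulVecLin := by
  apply Submodule.eq_of_le_of_finrank_eq (aux_range_mul_le _ _)
  exact Matrix.rank_self_mul_conjTranspose B

/-- Quadratic form of the conjugate transpose. -/
lemma aux_qf_conj {n : ℕ} (M : Matrix (Fin n) (Fin n) ℂ) (v : Fin n → ℂ) :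
    star v ⬝ᵥ Mᴴ *ᵥ v = star (star v ⬝ᵥ M *ᵥ v) := by
  simp only [dotProduct, mulVec, conjTranspose_apply, star_sum, star_mul', star_star,
    Pi.star_apply, Finset.mul_sum]
  rw [Finset.sum_comm]
  refine Finset.sum_congr rfl fun i _ => Finset.sum_congr rfl fun j _ => by ring

/-- Scalar lemma: if `0 ≤ t * t̄ * b - t̄ * ā - t * a` for all `t : ℂ`, then `a = 0`. -/
lemma aux_scalar (a b : ℂ)
    (h : ∀ t : ℂ, 0 ≤ t * star t * b - star t * star a - t * a) : a = 0 := by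
  by_contra ha
  have hna : 0 < Complex.normSq a := Complex.normSq_pos.mpr ha
  set r : ℝ := 1 / (|b.re| + 1) with hr
  have hrpos : 0 < r := by positivity
  have hre0 := h ((r : ℂ) * star a)
  rw [Complex.le_def] at hre0
  obtain ⟨hre, -⟩ := hre0
  have hc : a * (starRingEnd ℂ) a = (Complex.normSq a : ℝ) := Complex.mul_conj a
  have hexp : ((r : ℂ) * star a) * star ((r : ℂ) * star a) * b -
      star ((r : ℂ) * star a) * star a - ((r : ℂ) * star a) * a
      = ((r^2 * Complex.normSq a : ℝ) : ℂ) * b - ((2 * r * Complex.normSq a : ℝ) : ℂ) := by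
    simp only [star_mul', star_star, Complex.star_def, Complex.conj_conj, Complex.conj_ofReal]
    push_cast
    linear_combination ((r : ℂ)^2 * b - 2 * (r : ℂ)) * hc
  rw [hexp] at hre
  simp only [Complex.sub_re, Complex.mul_re, Complex.ofReal_re, Complex.ofReal_im,
    Complex.zero_re, zero_mul, mul_zero, sub_zero] at hre
  have hb : (0:ℝ) < |b.re| + 1 := by positivity
  have h3 : r * b.re < 1 := by
    have h2 : r * b.re ≤ r * |b.re| := by nlinarith [le_abs_self b.re]
    have h1 : r * |b.re| < 1 := by
      rw [hr, div_mul_eq_mul_div, one_mul, div_lt_one hb]; linarith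
    linarith
  nlinarith [mul_pos hrpos hna, h3]

theorem stmt18 {m n p q : ℕ}
    (A : Matrix (Fin m) (Fin n) ℂ) (B : Matrix (Fin p) (Fin q) ℂ)
    (C : Matrix (Fin m) (Fin q) ℂ) (hA : A ≠ 0) :
    (∃ Xhat : Matrix (Fin n) (Fin p) ℂ,
        ∀ X : Matrix (Fin n) (Fin p) ℂ,
          ((C - A * X * B) * (C - A * X * B)ᴴ -
            (C - A * Xhat * B) * (C - A * Xhat * B)ᴴ).PosSemidef) ↔
      LinearMap.range (C * Bᴴ).mulVecLin ≤ LinearMap.range A.mulVecLin := by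
  constructor
  · -- forward direction
    rintro ⟨Xh, hXh⟩
    set E := C - A * Xh * B with hE
    have hzero : ∀ (Z : Matrix (Fin n) (Fin p) ℂ) (v : Fin m → ℂ),
        star v ⬝ᵥ ((A * Z * B) * Eᴴ) *ᵥ v = 0 := by
      intro Z v
      set W := A * Z * B with hW
      apply aux_scalar _ (star v ⬝ᵥ (W * Wᴴ) *ᵥ v)
      intro t
      have hps := hXh (Xh + t • Z)
      have hrw : C - A * (Xh + t • Z) * B = E - t • W := by
        rw [hE, hW, Matrix.mul_add, Matrix.add_mul, Matrix.mul_smul, Matrix.smul_mul]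
        abel
      rw [hrw] at hps
      have hq := hps.dotProduct_mulVec_nonneg v
      have hexp : (E - t • W) * (E - t • W)ᴴ - E * Eᴴ
          = (t * star t) • (W * Wᴴ) - star t • (E * Wᴴ) - t • (W * Eᴴ) := by
        simp only [conjTranspose_sub, conjTranspose_smul, Matrix.sub_mul, Matrix.mul_sub,
          Matrix.smul_mul, Matrix.mul_smul, smul_smul]
        module
      rw [hexp] at hq
      simp only [Matrix.sub_mulVec, Matrix.smul_mulVec, dotProduct_sub, dotProduct_smul,
        smul_eq_mul] at hq
      have hconj : star v ⬝ᵥ (E * Wᴴ) *ᵥ v = star (star v ⬝ᵥ (W * Eᴴ) *ᵥ v) := by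
        rw [show E * Wᴴ = (W * Eᴴ)ᴴ by
          simp only [conjTranspose_mul, conjTranspose_conjTranspose]]
        exact aux_qf_conj _ v
      rw [hconj] at hq
      convert hq using 1
    have hval : ∀ (u : Fin n → ℂ) (c : Fin p → ℂ) (v : Fin m → ℂ),
        (star v ⬝ᵥ A *ᵥ u) * (c ⬝ᵥ (B * Eᴴ) *ᵥ v) = 0 := by
      intro u c v
      have hz := hzero (vecMulVec u c) v
      have hvm : ∀ x : Fin p → ℂ, vecMulVec u c *ᵥ x = (c ⬝ᵥ x) • u := by
        intro x
        funext i
        simp only [mulVec, vecMulVec_apply, dotProduct, Pi.smul_apply, smul_eq_mul,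
          Finset.sum_mul]
        exact Finset.sum_congr rfl fun j _ => by ring
      rw [show A * vecMulVec u c * B * Eᴴ = A * (vecMulVec u c * (B * Eᴴ)) by
        simp only [Matrix.mul_assoc]] at hz
      rw [← Matrix.mulVec_mulVec, ← Matrix.mulVec_mulVec, hvm, Matrix.mulVec_smul,
        dotProduct_smul, smul_eq_mul] at hz
      rw [mul_comm]
      exact hz
    obtain ⟨i0, j0, hA0⟩ : ∃ i j, A i j ≠ 0 := by
      by_contra hc
      push_neg at hc
      exact hA (by ext i j; simpa using hc i j)
    have hstep : ∀ v : Fin m → ℂ, star v ⬝ᵥ A *ᵥ (Pi.single j0 1) ≠ 0 →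
        (B * Eᴴ) *ᵥ v = 0 := by
      intro v hv
      funext k
      have h0 := hval (Pi.single j0 1) (Pi.single k 1) v
      rcases mul_eq_zero.mp h0 with h | h
      · exact absurd h hv
      · simpa [single_dotProduct] using h
    have hBEv : ∀ v, (B * Eᴴ) *ᵥ v = 0 := by
      intro v
      have hv0A : star ((Pi.single i0 1 : Fin m → ℂ)) ⬝ᵥ A *ᵥ (Pi.single j0 1) = A i0 j0 := by
        have hs : star ((Pi.single i0 1 : Fin m → ℂ)) = (Pi.single i0 1 : Fin m → ℂ) := by
          funext i
          simp [Pi.single_apply, apply_ite (star : ℂ → ℂ)]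
        rw [hs, single_dotProduct, mulVec_single]
        simp
      by_cases hv : star v ⬝ᵥ A *ᵥ (Pi.single j0 1) = 0
      · have h2 := hstep (Pi.single i0 1) (by rw [hv0A]; exact hA0)
        have h1 := hstep (v + (Pi.single i0 1 : Fin m → ℂ)) (by
          rw [star_add, add_dotProduct, hv, zero_add, hv0A]; exact hA0)
        rw [Matrix.mulVec_add, h2, add_zero] at h1
        exact h1
      · exact hstep v hv
    have hBE : B * Eᴴ = 0 := aux_eq_zero_of_mulVec _ hBEv
    have hCB : C * Bᴴ = A * (Xh * (B * Bᴴ)) := by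
      have h1 := congrArg conjTranspose hBE
      simp only [conjTranspose_mul, conjTranspose_conjTranspose, conjTranspose_zero] at h1
      rw [hE, Matrix.sub_mul, sub_eq_zero] at h1
      rw [h1]
      simp only [Matrix.mul_assoc]
    rw [hCB]
    exact aux_range_mul_le _ _
  · -- backward direction
    intro h
    set G := B * Bᴴ with hG
    have hGh : Gᴴ = G := by
      rw [hG, conjTranspose_mul, conjTranspose_conjTranspose]
    have hrB : LinearMap.range G.mulVecLin = LinearMap.range B.mulVecLin :=
      aux_range_self_mul_conjTranspose B
    have hGG' : G * G = G * Gᴴ := by rw [hGh]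
    have hrGG : LinearMap.range (G * G).mulVecLin = LinearMap.range G.mulVecLin := by
      rw [hGG']
      exact aux_range_self_mul_conjTranspose G
    obtain ⟨H, hH⟩ := aux_exists_mul_eq (G * G) G hrGG.ge
    have hGD : G * (H * G - 1) = 0 := by
      have h2 : (G * G) * (H * G - 1) = 0 := by
        rw [Matrix.mul_sub, Matrix.mul_one, ← Matrix.mul_assoc, hH, sub_self]
      have hk : LinearMap.ker (G * G).mulVecLin = LinearMap.ker G.mulVecLin := by
        have : G * G = Gᴴ * G := by rw [hGh]
        rw [this, Matrix.ker_mulVecLin_conjTranspose_mul_self]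
      apply aux_eq_zero_of_mulVec
      intro v
      have hmem : (H * G - 1) *ᵥ v ∈ LinearMap.ker (G * G).mulVecLin := by
        rw [LinearMap.mem_ker, mulVecLin_apply, Matrix.mulVec_mulVec, h2, Matrix.zero_mulVec]
      rw [hk, LinearMap.mem_ker, mulVecLin_apply] at hmem
      rw [← Matrix.mulVec_mulVec]
      exact hmem
    have hGHG : G * H * G = G := by
      rw [Matrix.mul_sub, Matrix.mul_one, sub_eq_zero, ← Matrix.mul_assoc] at hGD
      exact hGD
    obtain ⟨W, hW⟩ := aux_exists_mul_eq G B hrB.ge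
    have hGHB : G * H * B = B := by
      rw [← hW, ← Matrix.mul_assoc, hGHG]
    have hBHG : Bᴴ * Hᴴ * G = Bᴴ := by
      have h1 := congrArg conjTranspose hGHB
      simp only [conjTranspose_mul, hGh, Matrix.mul_assoc] at h1 ⊢
      exact h1
    obtain ⟨N, hN⟩ := aux_exists_mul_eq A (C * Bᴴ) h
    refine ⟨N * Hᴴ, ?_⟩
    have hkey : A * (N * Hᴴ) * G = C * Bᴴ := by
      calc A * (N * Hᴴ) * G = (A * N) * (Hᴴ * G) := by simp only [Matrix.mul_assoc]
        _ = C * (Bᴴ * Hᴴ * G) := by rw [hN]; simp only [Matrix.mul_assoc]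
        _ = C * Bᴴ := by rw [hBHG]
    intro X
    set E := C - A * (N * Hᴴ) * B with hE
    have hBE : B * Eᴴ = 0 := by
      have h1 : (A * (N * Hᴴ) * B) * Bᴴ = C * Bᴴ := by
        rw [Matrix.mul_assoc, ← hG]
        exact hkey
      have h2 := congrArg conjTranspose h1
      simp only [conjTranspose_mul, conjTranspose_conjTranspose, Matrix.mul_assoc] at h2 ⊢
      rw [hE, conjTranspose_sub, Matrix.mul_sub, sub_eq_zero]
      simp only [conjTranspose_mul, conjTranspose_conjTranspose, Matrix.mul_assoc]
      exact h2.symm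
    set M := A * (X - N * Hᴴ) * B with hMdef
    have hME : M * Eᴴ = 0 := by
      rw [hMdef, Matrix.mul_assoc, hBE, Matrix.mul_zero]
    have hEM : E * Mᴴ = 0 := by
      have h1 := congrArg conjTranspose hME
      simp only [conjTranspose_mul, conjTranspose_conjTranspose, conjTranspose_zero] at h1
      exact h1
    have hCX : C - A * X * B = E - M := by
      rw [hE, hMdef, Matrix.mul_sub, Matrix.sub_mul]
      abel
    have hdiff : (C - A * X * B) * (C - A * X * B)ᴴ - E * Eᴴ = M * Mᴴ := by
      rw [hCX, conjTranspose_sub, Matrix.sub_mul, Matrix.mul_sub, Matrix.mul_sub, hME, hEM]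
      simp only [sub_zero, zero_sub, sub_neg_eq_add]
      abel
    rw [hdiff]
    exact Matrix.posSemidef_self_mul_conjTranspose M
end

section
/- Let A ∈ ℂ^{m×n}, B ∈ ℂ^{p×q} and C ∈ ℂ^{m×q} be given. Then for X₀ ∈ ℂ^{n×p} the following three conditions are equivalent: (i) A*(C − AXB)(C − AXB)*A ⪰ A*(C − AX₀B)(C − AX₀B)*A for all X ∈ ℂ^{n×p}; (ii) B(C − AXB)*(C − AXB)B* ⪰ B(C − AX₀B)*(C − AX₀B)B* for all X ∈ ℂ^{n×p}; (iii) X₀ satisfies the normal equation A*AX₀BB* = A*CB*. Moreover, a matrix X₀ satisfying these equivalent conditions always exists. -/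
open Matrix
open scoped ComplexOrder

private lemma solv19 {m n k : ℕ} (A : Matrix (Fin m) (Fin n) ℂ) (D : Matrix (Fin m) (Fin k) ℂ) :
    ∃ Y : Matrix (Fin n) (Fin k) ℂ, Aᴴ * A * Y = Aᴴ * D := by
  have hrange : LinearMap.range (Aᴴ * A).mulVecLin = LinearMap.range Aᴴ.mulVecLin := by
    apply Submodule.eq_of_le_of_finrank_le
    · rw [Matrix.mulVecLin_mul]
      exact LinearMap.range_comp_le_range _ _
    · have h1 : (Aᴴ * A).rank = A.rank := Matrix.rank_conjTranspose_mul_self A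
      have h2 : Aᴴ.rank = A.rank := Matrix.rank_conjTranspose A
      simpa [Matrix.rank] using (h2.trans h1.symm).le
  have hcol : ∀ j : Fin k, ∃ y : Fin n → ℂ, (Aᴴ * A) *ᵥ y = Aᴴ *ᵥ (fun i => D i j) := by
    intro j
    have : Aᴴ *ᵥ (fun i => D i j) ∈ LinearMap.range (Aᴴ * A).mulVecLin := by
      rw [hrange]; exact ⟨fun i => D i j, rfl⟩
    obtain ⟨y, hy⟩ := this
    exact ⟨y, hy⟩
  choose y hy using hcol
  refine ⟨Matrix.of (fun i j => y j i), ?_⟩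
  ext i j
  have := congrFun (hy j) i
  simpa [Matrix.mul_apply, Matrix.mulVec, dotProduct] using this

private lemma scal19 {a b : ℝ} (ha : 0 ≤ a) (hb : 0 ≤ b)
    (h : ∀ t : ℝ, 0 ≤ t^2*b + 2*t*a) : a = 0 := by
  by_contra hne
  have ha' : 0 < a := ha.lt_of_ne (Ne.symm hne)
  have ht := h (-(a/(b+1)))
  have hb1 : 0 < b + 1 := by linarith
  have hfrac : ((-(a/(b+1)))^2*b + 2*(-(a/(b+1)))*a) * (b+1)^2 = a^2*b - 2*a^2*(b+1) := by
    field_simp; ring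
  nlinarith [mul_nonneg ht (sq_nonneg (b+1)), sq_nonneg a, mul_pos ha' ha']

private lemma key19 {n p : ℕ} (W : Matrix (Fin n) (Fin p) ℂ) (N : Matrix (Fin p) (Fin p) ℂ)
    (hN : N.PosSemidef)
    (h : ∀ t : ℝ, (((t:ℂ)^2) • (W * N * Wᴴ) + (2*(t:ℂ)) • (W * Wᴴ)).PosSemidef) :
    W = 0 := by
  suffices hW : ∀ x : Fin n → ℂ, Wᴴ *ᵥ x = 0 by
    have : Wᴴ = 0 := by
      ext i j
      have := congrFun (hW (Pi.single j 1)) i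
      simpa [Matrix.mulVec_single_one] using this
    simpa using congrArg conjTranspose this
  intro x
  set u := Wᴴ *ᵥ x with hu
  rw [← dotProduct_star_self_eq_zero (v := u)]
  have hform : ∀ t : ℝ, (0:ℂ) ≤ (t:ℂ)^2 * (star u ⬝ᵥ (N *ᵥ u)) + 2*(t:ℂ) * (star u ⬝ᵥ u) := by
    intro t
    have h0 := (h t).dotProduct_mulVec_nonneg x
    have hsw : star x ᵥ* W = star u := by
      rw [hu, Matrix.star_mulVec, conjTranspose_conjTranspose]
    have hrw : star x ⬝ᵥ ((((t:ℂ)^2) • (W * N * Wᴴ) + (2*(t:ℂ)) • (W * Wᴴ)) *ᵥ x)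
        = (t:ℂ)^2 * (star u ⬝ᵥ (N *ᵥ u)) + 2*(t:ℂ) * (star u ⬝ᵥ u) := by
      have h1 : star x ⬝ᵥ ((W * N * Wᴴ) *ᵥ x) = star u ⬝ᵥ (N *ᵥ u) := by
        rw [← Matrix.mulVec_mulVec, ← Matrix.mulVec_mulVec, Matrix.dotProduct_mulVec, hsw, hu]
      have h2 : star x ⬝ᵥ ((W * Wᴴ) *ᵥ x) = star u ⬝ᵥ u := by
        rw [← Matrix.mulVec_mulVec, Matrix.dotProduct_mulVec, hsw, hu]
      simp [Matrix.add_mulVec, Matrix.smul_mulVec, dotProduct_add, dotProduct_smul,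
        h1, h2, smul_eq_mul, mul_assoc]
    rwa [hrw] at h0
  set a : ℂ := star u ⬝ᵥ u with ha
  set c : ℂ := star u ⬝ᵥ (N *ᵥ u) with hc
  have ha0 : (0:ℂ) ≤ a := by
    simpa [ha] using dotProduct_star_self_nonneg u
  have hc0 : (0:ℂ) ≤ c := hN.dotProduct_mulVec_nonneg u
  have haim : a.im = 0 := by
    have h' := ha0; rw [Complex.le_def] at h'; simpa using h'.2.symm
  have hcim : c.im = 0 := by
    have h' := hc0; rw [Complex.le_def] at h'; simpa using h'.2.symm
  have har : 0 ≤ a.re := by have h' := ha0; rw [Complex.le_def] at h'; simpa using h'.1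
  have hcr : 0 ≤ c.re := by have h' := hc0; rw [Complex.le_def] at h'; simpa using h'.1
  have hre : a.re = 0 := by
    apply scal19 har hcr
    intro t
    have h' := hform t
    rw [Complex.le_def] at h'
    have h'' := h'.1
    simpa [Complex.add_re, Complex.mul_re, Complex.ofReal_re, Complex.ofReal_im,
      haim, hcim, pow_two] using h''
  apply Complex.ext <;> simp [hre, haim]

private lemma ident19a {m n p q : ℕ} (A : Matrix (Fin m) (Fin n) ℂ) (B : Matrix (Fin p) (Fin q) ℂ)
    (C : Matrix (Fin m) (Fin q) ℂ) (X X₀ : Matrix (Fin n) (Fin p) ℂ) :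
    Aᴴ * ((C - A * X * B) * (C - A * X * B)ᴴ) * A -
      Aᴴ * ((C - A * X₀ * B) * (C - A * X₀ * B)ᴴ) * A =
    (Aᴴ * A * (X₀ - X) * B) * (Aᴴ * A * (X₀ - X) * B)ᴴ
      + (Aᴴ * C * Bᴴ - Aᴴ * A * X₀ * (B * Bᴴ)) * (X₀ - X)ᴴ * (Aᴴ * A)
      + (Aᴴ * A) * (X₀ - X) * (Aᴴ * C * Bᴴ - Aᴴ * A * X₀ * (B * Bᴴ))ᴴ := by
  simp only [conjTranspose_sub, conjTranspose_mul, conjTranspose_conjTranspose,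
    Matrix.mul_sub, Matrix.sub_mul, Matrix.mul_assoc]
  abel

private lemma ident19b {m n p q : ℕ} (A : Matrix (Fin m) (Fin n) ℂ) (B : Matrix (Fin p) (Fin q) ℂ)
    (C : Matrix (Fin m) (Fin q) ℂ) (X X₀ : Matrix (Fin n) (Fin p) ℂ) :
    B * ((C - A * X * B)ᴴ * (C - A * X * B)) * Bᴴ -
      B * ((C - A * X₀ * B)ᴴ * (C - A * X₀ * B)) * Bᴴ =
    (A * (X₀ - X) * (B * Bᴴ))ᴴ * (A * (X₀ - X) * (B * Bᴴ))
      + (Aᴴ * C * Bᴴ - Aᴴ * A * X₀ * (B * Bᴴ))ᴴ * (X₀ - X) * (B * Bᴴ)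
      + (B * Bᴴ) * (X₀ - X)ᴴ * (Aᴴ * C * Bᴴ - Aᴴ * A * X₀ * (B * Bᴴ)) := by
  simp only [conjTranspose_sub, conjTranspose_mul, conjTranspose_conjTranspose,
    Matrix.mul_sub, Matrix.sub_mul, Matrix.mul_assoc]
  abel

theorem stmt19 {m n p q : ℕ}
    (A : Matrix (Fin m) (Fin n) ℂ) (B : Matrix (Fin p) (Fin q) ℂ)
    (C : Matrix (Fin m) (Fin q) ℂ) :
    (∀ X₀ : Matrix (Fin n) (Fin p) ℂ,
      ((∀ X : Matrix (Fin n) (Fin p) ℂ,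
          (Aᴴ * ((C - A * X * B) * (C - A * X * B)ᴴ) * A -
            Aᴴ * ((C - A * X₀ * B) * (C - A * X₀ * B)ᴴ) * A).PosSemidef) ↔
        Aᴴ * A * X₀ * (B * Bᴴ) = Aᴴ * C * Bᴴ) ∧
      ((∀ X : Matrix (Fin n) (Fin p) ℂ,
          (B * ((C - A * X * B)ᴴ * (C - A * X * B)) * Bᴴ -
            B * ((C - A * X₀ * B)ᴴ * (C - A * X₀ * B)) * Bᴴ).PosSemidef) ↔
        Aᴴ * A * X₀ * (B * Bᴴ) = Aᴴ * C * Bᴴ)) ∧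
    ∃ X₀ : Matrix (Fin n) (Fin p) ℂ, Aᴴ * A * X₀ * (B * Bᴴ) = Aᴴ * C * Bᴴ := by
  have hex : ∃ X₀ : Matrix (Fin n) (Fin p) ℂ, Aᴴ * A * X₀ * (B * Bᴴ) = Aᴴ * C * Bᴴ := by
    obtain ⟨Y, hY⟩ := solv19 A C
    obtain ⟨Z, hZ⟩ := solv19 Bᴴ (Yᴴ)
    rw [conjTranspose_conjTranspose] at hZ
    refine ⟨Zᴴ, ?_⟩
    have h1 : Zᴴ * (B * Bᴴ) = Y * Bᴴ := by
      have h2 := congrArg conjTranspose hZ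
      simp only [conjTranspose_mul, conjTranspose_conjTranspose] at h2
      exact h2
    rw [Matrix.mul_assoc (Aᴴ * A) Zᴴ, h1, ← Matrix.mul_assoc, hY]
  refine ⟨fun X₀ => ?_, hex⟩
  set M : Matrix (Fin n) (Fin n) ℂ := Aᴴ * A with hM
  set N : Matrix (Fin p) (Fin p) ℂ := B * Bᴴ with hN
  set W : Matrix (Fin n) (Fin p) ℂ := Aᴴ * C * Bᴴ - Aᴴ * A * X₀ * (B * Bᴴ) with hW
  have hMH : Mᴴ = M := by simp [hM, conjTranspose_mul]
  have hNH : Nᴴ = N := by simp [hN, conjTranspose_mul]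
  have hgoal : (Aᴴ * A * X₀ * (B * Bᴴ) = Aᴴ * C * Bᴴ) ↔ W = 0 := by
    rw [hW, sub_eq_zero, eq_comm]
  constructor
  · constructor
    · intro h
      rw [hgoal]
      -- W = Aᴴ * (C * Bᴴ - A * (X₀ * (B * Bᴴ)))
      obtain ⟨Y, hY⟩ := solv19 A (C * Bᴴ - A * (X₀ * (B * Bᴴ)))
      have hY' : M * Y = W := by
        rw [hM, hY, hW, Matrix.mul_sub]
        simp [Matrix.mul_assoc]
      apply key19 W N (Matrix.posSemidef_self_mul_conjTranspose B)
      intro t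
      have hX := h (X₀ - (t:ℂ) • Y)
      have e : Aᴴ * ((C - A * (X₀ - (t:ℂ) • Y) * B) * (C - A * (X₀ - (t:ℂ) • Y) * B)ᴴ) * A -
            Aᴴ * ((C - A * X₀ * B) * (C - A * X₀ * B)ᴴ) * A
          = ((t:ℂ)^2) • (W * N * Wᴴ) + (2*(t:ℂ)) • (W * Wᴴ) := by
        rw [ident19a A B C (X₀ - (t:ℂ) • Y) X₀]
        rw [sub_sub_cancel]
        rw [← hM, ← hN, ← hW]
        have est : star (t:ℂ) = (t:ℂ) := by simp [Complex.star_def, Complex.conj_ofReal]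
        have e2 : W * Yᴴ * M = W * Wᴴ := by
          rw [Matrix.mul_assoc, ← hMH, ← conjTranspose_mul, hY']
        have c1 : M * ((t:ℂ) • Y) * B = (t:ℂ) • (W * B) := by
          rw [Matrix.mul_smul, hY', Matrix.smul_mul]
        have c3 : W * ((t:ℂ) • Y)ᴴ * M = (t:ℂ) • (W * Wᴴ) := by
          rw [conjTranspose_smul, est, Matrix.mul_smul, Matrix.smul_mul, e2]
        have c4 : M * ((t:ℂ) • Y) * Wᴴ = (t:ℂ) • (W * Wᴴ) := by
          rw [Matrix.mul_smul, hY', Matrix.smul_mul]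
        rw [c1, c3, c4, conjTranspose_smul, est, Matrix.smul_mul, Matrix.mul_smul, smul_smul,
          conjTranspose_mul]
        have c5 : (W * B) * (Bᴴ * Wᴴ) = W * N * Wᴴ := by
          rw [hN]; simp only [Matrix.mul_assoc]
        rw [c5, ← pow_two, two_mul, add_smul]
        abel
      rw [e] at hX
      exact hX
    · intro h X
      rw [hgoal] at h
      rw [ident19a A B C X X₀, ← hM, ← hW, h]
      simp only [Matrix.zero_mul, Matrix.mul_zero, conjTranspose_zero, add_zero]
      exact Matrix.posSemidef_self_mul_conjTranspose _
  · constructor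
    · intro h
      rw [hgoal]
      -- Wᴴ = B * (Cᴴ * A - Bᴴ * (X₀ᴴ * (Aᴴ * A)))
      obtain ⟨Z, hZ⟩ := solv19 Bᴴ (Cᴴ * A - Bᴴ * (X₀ᴴ * (Aᴴ * A)))
      rw [conjTranspose_conjTranspose] at hZ
      have hZ' : N * Z = Wᴴ := by
        rw [hN, hZ, hW, conjTranspose_sub]
        simp [conjTranspose_mul, Matrix.mul_sub, Matrix.mul_assoc]
      suffices hWH : Wᴴ = 0 by simpa using congrArg conjTranspose hWH
      apply key19 Wᴴ M (Matrix.posSemidef_conjTranspose_mul_self A)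
      intro t
      have hX := h (X₀ - (t:ℂ) • Zᴴ)
      have hZ'' : Zᴴ * N = W := by
        have := congrArg conjTranspose hZ'
        simpa [conjTranspose_mul, hNH] using this
      have e : B * ((C - A * (X₀ - (t:ℂ) • Zᴴ) * B)ᴴ * (C - A * (X₀ - (t:ℂ) • Zᴴ) * B)) * Bᴴ -
            B * ((C - A * X₀ * B)ᴴ * (C - A * X₀ * B)) * Bᴴ
          = ((t:ℂ)^2) • (Wᴴ * M * W) + (2*(t:ℂ)) • (Wᴴ * W) := by
        rw [ident19b A B C (X₀ - (t:ℂ) • Zᴴ) X₀]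
        rw [sub_sub_cancel]
        rw [← hM, ← hN, ← hW]
        have est : star (t:ℂ) = (t:ℂ) := by simp [Complex.star_def, Complex.conj_ofReal]
        have c1 : A * ((t:ℂ) • Zᴴ) * N = (t:ℂ) • (A * W) := by
          rw [Matrix.mul_smul, Matrix.smul_mul, Matrix.mul_assoc, hZ'']
        have c2 : Wᴴ * ((t:ℂ) • Zᴴ) * N = (t:ℂ) • (Wᴴ * W) := by
          rw [Matrix.mul_smul, Matrix.smul_mul, Matrix.mul_assoc, hZ'']
        have c3 : N * ((t:ℂ) • Zᴴ)ᴴ * W = (t:ℂ) • (Wᴴ * W) := by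
          rw [conjTranspose_smul, est, conjTranspose_conjTranspose, Matrix.mul_smul,
            Matrix.smul_mul, hZ']
        rw [c1, c2, c3, conjTranspose_smul, est, Matrix.smul_mul, Matrix.mul_smul, smul_smul]
        have c5 : (A * W)ᴴ * (A * W) = Wᴴ * M * W := by
          rw [conjTranspose_mul, hM]; simp only [Matrix.mul_assoc]
        rw [c5, ← pow_two, two_mul, add_smul]
        abel
      simp only [conjTranspose_conjTranspose]
      rw [← e]
      exact hX
    · intro h X
      rw [hgoal] at h
      rw [ident19b A B C X X₀, ← hN, ← hW, h]
      simp only [Matrix.zero_mul, Matrix.mul_zero, conjTranspose_zero, add_zero,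
        Matrix.mul_zero, zero_mul]
      exact Matrix.posSemidef_conjTranspose_mul_self _
end
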